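/- arXiv:2009.08521 — 9 statements merged into one kernel-verified Lean document; each statement's English description precedes it below -/
import Mathlib

section
/- There exist constants M, M̃ > 0 and c₀, c̃₀ ≥ 0, independent of s, such that for every s ∈ ℂ, every classical solution x of the port-Hamiltonian eigenvalue ODE, and every ζ ∈ [0,1]: M̃·e^{-|Re s|·c̃₀·ζ}·‖x(0)‖ ≤ ‖x(ζ)‖ ≤ M·e^{|Re s|·c₀·ζ}·‖x(0)‖, where ‖·‖ is the Euclidean norm on ℂ^d. (Lemma 5.1.) -/
open Matrix Set
open scoped ComplexOrder

/-- `x : ℝ → ℂ^d` is a classical solution of the port-Hamiltonian eigenvalue ODE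
`s·x(ζ) = P₁·(𝓗x)'(ζ) + P₀·(𝓗x)(ζ)` on `[0,1]`: the map `u := 𝓗·x` is continuously
differentiable on `[0,1]` and the equation holds there. -/
def IsClassicalSolution {d : ℕ} (P₁ P₀ : Matrix (Fin d) (Fin d) ℂ)
    (𝓗 : ℝ → Matrix (Fin d) (Fin d) ℂ) (s : ℂ)
    (x : ℝ → EuclideanSpace ℂ (Fin d)) : Prop :=
  ∃ u' : ℝ → EuclideanSpace ℂ (Fin d),
    ContinuousOn u' (Set.Icc 0 1) ∧
    (∀ ζ ∈ Set.Icc (0:ℝ) 1,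
      HasDerivWithinAt (fun t => Matrix.toEuclideanLin (𝓗 t) (x t)) (u' ζ) (Set.Icc 0 1) ζ) ∧
    (∀ ζ ∈ Set.Icc (0:ℝ) 1,
      s • x ζ = Matrix.toEuclideanLin P₁ (u' ζ)
        + Matrix.toEuclideanLin P₀ (Matrix.toEuclideanLin (𝓗 ζ) (x ζ)))

namespace PHhelp

variable {d : ℕ}

lemma hasDerivWithinAt_euclidean {f : ℝ → EuclideanSpace ℂ (Fin d)}
    {v : EuclideanSpace ℂ (Fin d)} {s : Set ℝ} {x : ℝ} :
    HasDerivWithinAt f v s x ↔ ∀ i, HasDerivWithinAt (fun t => f t i) (v i) s x := by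
  rw [hasDerivWithinAt_iff_hasFDerivWithinAt, hasFDerivWithinAt_piLp]
  refine forall_congr' fun i => ?_
  rw [hasDerivWithinAt_iff_hasFDerivWithinAt]
  have hc : (PiLp.proj 2 (fun _ => ℂ) i).comp (ContinuousLinearMap.toSpanSingleton ℝ v)
      = ContinuousLinearMap.toSpanSingleton ℝ (v i) := by
    ext; simp
  rw [hc]

lemma toEuclideanLin_coord (A : Matrix (Fin d) (Fin d) ℂ) (w : EuclideanSpace ℂ (Fin d))
    (i : Fin d) : Matrix.toEuclideanLin A w i = ∑ j, A i j * w j := rfl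

lemma hasDerivWithinAt_matrix_apply
    {A : ℝ → Matrix (Fin d) (Fin d) ℂ} {A' : Matrix (Fin d) (Fin d) ℂ}
    {w : ℝ → EuclideanSpace ℂ (Fin d)} {w' : EuclideanSpace ℂ (Fin d)} {s : Set ℝ} {ζ : ℝ}
    (hA : ∀ i j, HasDerivWithinAt (fun t => A t i j) (A' i j) s ζ)
    (hw : HasDerivWithinAt w w' s ζ) :
    HasDerivWithinAt (fun t => Matrix.toEuclideanLin (A t) (w t))
      (Matrix.toEuclideanLin A' (w ζ) + Matrix.toEuclideanLin (A ζ) w') s ζ := by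
  rw [hasDerivWithinAt_euclidean]
  intro i
  have hcoord : ∀ j, HasDerivWithinAt (fun t => w t j) (w' j) s ζ :=
    hasDerivWithinAt_euclidean.1 hw
  have : HasDerivWithinAt (fun t => ∑ j, A t i j * w t j)
      (∑ j, (A' i j * w ζ j + A ζ i j * w' j)) s ζ :=
    HasDerivWithinAt.fun_sum fun j _ => (hA i j).mul (hcoord j)
  convert this using 1
  show Matrix.toEuclideanLin A' (w ζ) i + Matrix.toEuclideanLin (A ζ) w' i = _
  simp [toEuclideanLin_coord, Finset.sum_add_distrib]
  rfl

noncomputable def clm (A : Matrix (Fin d) (Fin d) ℂ) :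
    EuclideanSpace ℂ (Fin d) →L[ℂ] EuclideanSpace ℂ (Fin d) :=
  LinearMap.toContinuousLinearMap (Matrix.toEuclideanLin A)

lemma norm_apply_le (A : Matrix (Fin d) (Fin d) ℂ) (w : EuclideanSpace ℂ (Fin d)) :
    ‖Matrix.toEuclideanLin A w‖ ≤ ‖clm A‖ * ‖w‖ := (clm A).le_opNorm w

lemma continuous_clm : Continuous (clm (d := d)) := by
  have : (clm (d := d)) = ((LinearMap.toContinuousLinearMap.toLinearMap.comp
      (Matrix.toEuclideanLin (𝕜 := ℂ) (m := Fin d) (n := Fin d)).toLinearMap) :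
      Matrix (Fin d) (Fin d) ℂ →ₗ[ℂ] (EuclideanSpace ℂ (Fin d) →L[ℂ] EuclideanSpace ℂ (Fin d))) := rfl
  rw [this]
  exact LinearMap.continuous_of_finiteDimensional _

lemma toEuclideanLin_mul (A B : Matrix (Fin d) (Fin d) ℂ) (w : EuclideanSpace ℂ (Fin d)) :
    Matrix.toEuclideanLin (A * B) w = Matrix.toEuclideanLin A (Matrix.toEuclideanLin B w) := by
  simp [Matrix.toEuclideanLin_apply, Matrix.mulVec_mulVec]

lemma toEuclideanLin_one (w : EuclideanSpace ℂ (Fin d)) :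
    Matrix.toEuclideanLin (1 : Matrix (Fin d) (Fin d) ℂ) w = w := by
  simp [Matrix.toEuclideanLin_apply]

lemma gronwall_two_sided {g g' : ℝ → ℝ} {K : ℝ}
    (hgpos : ∀ ζ ∈ Icc (0:ℝ) 1, 0 ≤ g ζ)
    (hg : ∀ ζ ∈ Icc (0:ℝ) 1, HasDerivWithinAt g (g' ζ) (Icc 0 1) ζ)
    (hbound : ∀ ζ ∈ Icc (0:ℝ) 1, |g' ζ| ≤ K * g ζ) :
    ∀ ζ ∈ Icc (0:ℝ) 1, g ζ ≤ g 0 * Real.exp (K * ζ) ∧ g 0 ≤ g ζ * Real.exp (K * ζ) := by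
  have hgc : ContinuousOn g (Icc 0 1) := fun ζ hζ => (hg ζ hζ).continuousWithinAt
  have h01 : (0:ℝ) ≤ 1 := zero_le_one
  intro ζ hζ
  constructor
  · have H := norm_le_gronwallBound_of_norm_deriv_right_le (f := g) (f' := g') (a := 0) (b := 1)
      (δ := g 0) (K := K) (ε := 0) hgc
      (fun t ht => (hg t (Ico_subset_Icc_self ht)).mono_of_mem_nhdsWithin
        (Icc_mem_nhdsGE_of_mem ht))
      (by rw [Real.norm_of_nonneg (hgpos 0 (left_mem_Icc.2 h01))])
      (fun t ht => by
        rw [Real.norm_of_nonneg (hgpos t (Ico_subset_Icc_self ht)), add_zero]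
        exact hbound t (Ico_subset_Icc_self ht))
    have := H ζ hζ
    rwa [Real.norm_of_nonneg (hgpos ζ hζ), gronwallBound_ε0, sub_zero] at this
  · rcases eq_or_lt_of_le hζ.1 with h0 | h0
    · rw [← h0]
      simp
    have hmem : ∀ t ∈ Icc (0:ℝ) ζ, ζ - t ∈ Icc (0:ℝ) 1 :=
      fun t ht => ⟨by linarith [ht.2], by linarith [ht.1, hζ.2]⟩
    set h : ℝ → ℝ := fun t => g (ζ - t) with hh
    have hhc : ContinuousOn h (Icc 0 ζ) :=
      hgc.comp (by fun_prop) (fun t ht => hmem t ht)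
    have hhd : ∀ t ∈ Ico (0:ℝ) ζ, HasDerivWithinAt h (-g' (ζ - t)) (Ici t) t := by
      intro t ht
      have inner : HasDerivWithinAt (fun u : ℝ => ζ - u) (-1) (Icc 0 ζ) t :=
        ((hasDerivAt_id t).const_sub ζ).hasDerivWithinAt
      have comp := (hg (ζ - t) (hmem t (Ico_subset_Icc_self ht))).comp t inner
        (fun u hu => hmem u hu)
      have : HasDerivWithinAt h (g' (ζ - t) * (-1)) (Icc 0 ζ) t := comp
      rw [mul_neg_one] at this
      exact this.mono_of_mem_nhdsWithin (Icc_mem_nhdsGE_of_mem ht)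
    have H := norm_le_gronwallBound_of_norm_deriv_right_le (f := h) (f' := fun t => -g' (ζ - t))
      (a := 0) (b := ζ) (δ := g ζ) (K := K) (ε := 0) hhc hhd
      (by simp only [hh, sub_zero]; rw [Real.norm_of_nonneg (hgpos ζ hζ)])
      (fun t ht => by
        have ht' := hmem t (Ico_subset_Icc_self ht)
        rw [norm_neg, Real.norm_of_nonneg (hgpos _ ht'), add_zero]
        exact hbound _ ht')
    have := H ζ (right_mem_Icc.2 (le_of_lt h0))
    simp only [hh, sub_self] at this
    rwa [Real.norm_of_nonneg (hgpos 0 (left_mem_Icc.2 h01)), gronwallBound_ε0, sub_zero] at this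

lemma contOn_mul {X : Type*} [TopologicalSpace X] {f g : X → Matrix (Fin d) (Fin d) ℂ} {s : Set X}
    (hf : ContinuousOn f s) (hg : ContinuousOn g s) : ContinuousOn (fun x => f x * g x) s := by
  rw [continuousOn_iff_continuous_restrict] at hf hg ⊢
  exact hf.matrix_mul hg

lemma contOn_conjT {X : Type*} [TopologicalSpace X] {f : X → Matrix (Fin d) (Fin d) ℂ} {s : Set X}
    (hf : ContinuousOn f s) : ContinuousOn (fun x => (f x)ᴴ) s := by
  rw [continuousOn_iff_continuous_restrict] at hf ⊢
  exact hf.matrix_conjTranspose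

lemma contOn_of_entries {X : Type*} [TopologicalSpace X] {f : X → Matrix (Fin d) (Fin d) ℂ}
    {s : Set X} (hf : ∀ i j, ContinuousOn (fun x => f x i j) s) : ContinuousOn f s := by
  rw [continuousOn_iff_continuous_restrict]
  exact continuous_pi fun i => continuous_pi fun j =>
    continuousOn_iff_continuous_restrict.1 (hf i j)

end PHhelp

open PHhelp

set_option maxHeartbeats 2000000

/-- **Lemma 5.1.** Under the standing port-Hamiltonian assumptions, there are
constants `M, M̃ > 0` and `c₀, c̃₀ ≥ 0`, independent of `s`, such that every classical solution
of the eigenvalue ODE satisfies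
`M̃·e^{-|Re s|·c̃₀·ζ}·‖x 0‖ ≤ ‖x ζ‖ ≤ M·e^{|Re s|·c₀·ζ}·‖x 0‖` on `[0,1]`. -/
theorem solution_growth_bounds
    (d : ℕ) (hd : 1 ≤ d)
    (P₁ P₀ : Matrix (Fin d) (Fin d) ℂ)
    (hP₁herm : P₁.IsHermitian) (hP₁inv : IsUnit P₁)
    (hP₀skew : P₀ᴴ = -P₀)
    (𝓗 : ℝ → Matrix (Fin d) (Fin d) ℂ)
    (h𝓗cont : ContinuousOn 𝓗 (Set.Icc 0 1))
    (h𝓗pos : ∀ ζ ∈ Set.Icc (0:ℝ) 1, (𝓗 ζ).PosDef)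
    (S R Δ : ℝ → Matrix (Fin d) (Fin d) ℂ)
    (hS : ∀ i j, ContDiffOn ℝ 1 (fun ζ => S ζ i j) (Set.Icc 0 1))
    (hR : ∀ i j, ContDiffOn ℝ 1 (fun ζ => R ζ i j) (Set.Icc 0 1))
    (hΔ : ∀ i j, ContDiffOn ℝ 1 (fun ζ => Δ ζ i j) (Set.Icc 0 1))
    (hRS : ∀ ζ ∈ Set.Icc (0:ℝ) 1, R ζ * S ζ = 1 ∧ S ζ * R ζ = 1)
    (hΔdiag : ∀ ζ ∈ Set.Icc (0:ℝ) 1, (Δ ζ).IsDiag)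
    (hΔreal : ∀ ζ ∈ Set.Icc (0:ℝ) 1, ∀ i, (Δ ζ i i).im = 0)
    (hΔinv : ∀ ζ ∈ Set.Icc (0:ℝ) 1, IsUnit (Δ ζ))
    (hfact : ∀ ζ ∈ Set.Icc (0:ℝ) 1, P₁ * 𝓗 ζ = R ζ * Δ ζ * S ζ) :
    ∃ M M' c₀ c₀' : ℝ, 0 < M ∧ 0 < M' ∧ 0 ≤ c₀ ∧ 0 ≤ c₀' ∧
      ∀ s : ℂ, ∀ x : ℝ → EuclideanSpace ℂ (Fin d),
        IsClassicalSolution P₁ P₀ 𝓗 s x →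
        ∀ ζ ∈ Set.Icc (0:ℝ) 1,
          M' * Real.exp (-(|s.re| * c₀' * ζ)) * ‖x 0‖ ≤ ‖x ζ‖ ∧
          ‖x ζ‖ ≤ M * Real.exp (|s.re| * c₀ * ζ) * ‖x 0‖ := by
  have hUD : UniqueDiffOn ℝ (Set.Icc (0:ℝ) 1) := uniqueDiffOn_Icc_zero_one
  have hIc : IsCompact (Set.Icc (0:ℝ) 1) := isCompact_Icc
  -- basic matrix facts
  have hdetP₁ : IsUnit P₁.det := (Matrix.isUnit_iff_isUnit_det _).1 hP₁inv
  set Q := P₁⁻¹ with hQ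
  have hQP₁ : Q * P₁ = 1 := Matrix.nonsing_inv_mul _ hdetP₁
  have hP₁Q : P₁ * Q = 1 := Matrix.mul_nonsing_inv _ hdetP₁
  set R' : ℝ → Matrix (Fin d) (Fin d) ℂ :=
    fun ζ => Matrix.of fun i j => derivWithin (fun t => R t i j) (Set.Icc 0 1) ζ with hR'
  set D : ℝ → Matrix (Fin d) (Fin d) ℂ :=
    fun ζ => Matrix.diagonal fun i => (Δ ζ i i)⁻¹ with hD
  set C : ℝ → Matrix (Fin d) (Fin d) ℂ :=
    fun ζ => (R' ζ)ᴴ * (S ζ)ᴴ - (R ζ)ᴴ * Q * P₀ * (S ζ)ᴴ with hC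
  set G : ℝ → Matrix (Fin d) (Fin d) ℂ := fun ζ => (R ζ)ᴴ * 𝓗 ζ with hG
  set Gi : ℝ → Matrix (Fin d) (Fin d) ℂ := fun ζ => R ζ * D ζ * S ζ * P₁ * (S ζ)ᴴ with hGi
  -- diagonal entries of Δ are nonzero
  have hΔne : ∀ ζ ∈ Set.Icc (0:ℝ) 1, ∀ i, Δ ζ i i ≠ 0 := by
    intro ζ hζ i
    have hdet : IsUnit (Δ ζ).det := (Matrix.isUnit_iff_isUnit_det _).1 (hΔinv ζ hζ)
    rw [← (hΔdiag ζ hζ).diagonal_diag, Matrix.det_diagonal] at hdet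
    rw [isUnit_iff_ne_zero] at hdet
    exact Finset.prod_ne_zero_iff.1 hdet i (Finset.mem_univ i)
  have hDΔ : ∀ ζ ∈ Set.Icc (0:ℝ) 1, D ζ * Δ ζ = 1 := by
    intro ζ hζ
    conv_lhs => rw [← (hΔdiag ζ hζ).diagonal_diag]
    rw [Matrix.diagonal_mul_diagonal,
      show (fun i => (Δ ζ i i)⁻¹ * (Δ ζ).diag i) = fun _ => (1:ℂ) from
        funext fun i => inv_mul_cancel₀ (hΔne ζ hζ i), Matrix.diagonal_one]
  -- conjugate-transpose facts
  have hΔH : ∀ ζ ∈ Set.Icc (0:ℝ) 1, (Δ ζ)ᴴ = Δ ζ := by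
    intro ζ hζ
    conv_lhs => rw [← (hΔdiag ζ hζ).diagonal_diag]
    rw [Matrix.diagonal_conjTranspose,
      show star (Δ ζ).diag = (Δ ζ).diag from funext fun i => by
        show (starRingEnd ℂ) (Δ ζ i i) = Δ ζ i i
        exact Complex.conj_eq_iff_im.2 (hΔreal ζ hζ i)]
    exact (hΔdiag ζ hζ).diagonal_diag
  have hDH : ∀ ζ ∈ Set.Icc (0:ℝ) 1, (D ζ).IsHermitian := by
    intro ζ hζ
    show (D ζ)ᴴ = D ζ
    rw [hD]
    rw [Matrix.diagonal_conjTranspose,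
      show (star fun i => (Δ ζ i i)⁻¹) = fun i => (Δ ζ i i)⁻¹ from funext fun i => by
        show (starRingEnd ℂ) (Δ ζ i i)⁻¹ = (Δ ζ i i)⁻¹
        rw [map_inv₀, Complex.conj_eq_iff_im.2 (hΔreal ζ hζ i)]]
  have hRSH : ∀ ζ ∈ Set.Icc (0:ℝ) 1, (R ζ)ᴴ * (S ζ)ᴴ = 1 := by
    intro ζ hζ
    rw [← Matrix.conjTranspose_mul, (hRS ζ hζ).2, Matrix.conjTranspose_one]
  have hSHR : ∀ ζ ∈ Set.Icc (0:ℝ) 1, (S ζ)ᴴ * (R ζ)ᴴ = 1 := by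
    intro ζ hζ
    rw [← Matrix.conjTranspose_mul, (hRS ζ hζ).1, Matrix.conjTranspose_one]
  have h𝓗P₁ : ∀ ζ ∈ Set.Icc (0:ℝ) 1, 𝓗 ζ * P₁ = (S ζ)ᴴ * Δ ζ * (R ζ)ᴴ := by
    intro ζ hζ
    have := congrArg Matrix.conjTranspose (hfact ζ hζ)
    rw [Matrix.conjTranspose_mul, hP₁herm.eq, (h𝓗pos ζ hζ).isHermitian.eq,
      Matrix.conjTranspose_mul, Matrix.conjTranspose_mul, hΔH ζ hζ] at this
    rw [this, Matrix.mul_assoc]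
  have hstar : ∀ ζ ∈ Set.Icc (0:ℝ) 1, D ζ * G ζ = (R ζ)ᴴ * Q := by
    intro ζ hζ
    have h1 : G ζ = Δ ζ * (R ζ)ᴴ * Q := by
      rw [hG]
      calc (R ζ)ᴴ * 𝓗 ζ = (R ζ)ᴴ * (𝓗 ζ * (P₁ * Q)) := by rw [hP₁Q, Matrix.mul_one]
        _ = (R ζ)ᴴ * (𝓗 ζ * P₁) * Q := by simp only [Matrix.mul_assoc]
        _ = (R ζ)ᴴ * ((S ζ)ᴴ * Δ ζ * (R ζ)ᴴ) * Q := by rw [h𝓗P₁ ζ hζ]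
        _ = ((R ζ)ᴴ * (S ζ)ᴴ) * Δ ζ * (R ζ)ᴴ * Q := by simp only [Matrix.mul_assoc]
        _ = Δ ζ * (R ζ)ᴴ * Q := by rw [hRSH ζ hζ, Matrix.one_mul]
    rw [h1, ← Matrix.mul_assoc, ← Matrix.mul_assoc, hDΔ ζ hζ, Matrix.one_mul]
  have hGiG : ∀ ζ ∈ Set.Icc (0:ℝ) 1, Gi ζ * G ζ = 1 := by
    intro ζ hζ
    rw [hGi, hG]
    calc R ζ * D ζ * S ζ * P₁ * (S ζ)ᴴ * ((R ζ)ᴴ * 𝓗 ζ)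
        = R ζ * D ζ * S ζ * P₁ * ((S ζ)ᴴ * (R ζ)ᴴ) * 𝓗 ζ := by
          simp only [Matrix.mul_assoc]
      _ = R ζ * D ζ * (S ζ * (P₁ * 𝓗 ζ)) := by
          rw [hSHR ζ hζ, Matrix.mul_one]
          simp only [Matrix.mul_assoc]
      _ = R ζ * D ζ * (S ζ * (R ζ * Δ ζ * S ζ)) := by rw [hfact ζ hζ]
      _ = R ζ * D ζ * ((S ζ * R ζ) * Δ ζ * S ζ) := by simp only [Matrix.mul_assoc]
      _ = R ζ * (D ζ * Δ ζ) * S ζ := by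
          rw [(hRS ζ hζ).2, Matrix.one_mul]
          simp only [Matrix.mul_assoc]
      _ = 1 := by rw [hDΔ ζ hζ, Matrix.mul_one, (hRS ζ hζ).1]
  -- continuity and bounds for the relevant matrix families
  have hRcont : ContinuousOn R (Set.Icc (0:ℝ) 1) :=
    contOn_of_entries fun i j => (hR i j).continuousOn
  have hScont : ContinuousOn S (Set.Icc (0:ℝ) 1) :=
    contOn_of_entries fun i j => (hS i j).continuousOn
  have hR'cont : ContinuousOn R' (Set.Icc (0:ℝ) 1) :=
    contOn_of_entries fun i j => (hR i j).continuousOn_derivWithin hUD le_rfl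
  have hDcont : ContinuousOn D (Set.Icc (0:ℝ) 1) := by
    apply contOn_of_entries
    intro i j
    simp only [hD, Matrix.diagonal_apply]
    by_cases h : i = j
    · subst h
      simp only [if_pos rfl]
      exact ((hΔ i i).continuousOn).inv₀ (fun ζ hζ => hΔne ζ hζ i)
    · simp only [if_neg h]
      exact continuousOn_const
  have hCcont : ContinuousOn C (Set.Icc (0:ℝ) 1) := by
    apply ContinuousOn.sub
    · exact contOn_mul (contOn_conjT hR'cont) (contOn_conjT hScont)
    · exact contOn_mul (contOn_mul (contOn_mul (contOn_conjT hRcont) continuousOn_const)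
        continuousOn_const) (contOn_conjT hScont)
  have hGcont : ContinuousOn G (Set.Icc (0:ℝ) 1) := contOn_mul (contOn_conjT hRcont) h𝓗cont
  have hGicont : ContinuousOn Gi (Set.Icc (0:ℝ) 1) :=
    contOn_mul (contOn_mul (contOn_mul (contOn_mul hRcont hDcont) hScont) continuousOn_const)
      (contOn_conjT hScont)
  obtain ⟨nD₀, hnD₀⟩ := hIc.exists_bound_of_continuousOn (continuous_clm.comp_continuousOn hDcont)
  obtain ⟨nC₀, hnC₀⟩ := hIc.exists_bound_of_continuousOn (continuous_clm.comp_continuousOn hCcont)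
  obtain ⟨nG₀, hnG₀⟩ := hIc.exists_bound_of_continuousOn (continuous_clm.comp_continuousOn hGcont)
  obtain ⟨nGi₀, hnGi₀⟩ :=
    hIc.exists_bound_of_continuousOn (continuous_clm.comp_continuousOn hGicont)
  set nD : ℝ := max nD₀ 0 with hnD_def
  set nC : ℝ := max nC₀ 0 with hnC_def
  set nG : ℝ := max nG₀ 1 with hnG_def
  set nGi : ℝ := max nGi₀ 1 with hnGi_def
  have hnD : ∀ ζ ∈ Set.Icc (0:ℝ) 1, ‖clm (D ζ)‖ ≤ nD :=
    fun ζ hζ => le_trans (hnD₀ ζ hζ) (le_max_left _ _)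
  have hnC : ∀ ζ ∈ Set.Icc (0:ℝ) 1, ‖clm (C ζ)‖ ≤ nC :=
    fun ζ hζ => le_trans (hnC₀ ζ hζ) (le_max_left _ _)
  have hnG : ∀ ζ ∈ Set.Icc (0:ℝ) 1, ‖clm (G ζ)‖ ≤ nG :=
    fun ζ hζ => le_trans (hnG₀ ζ hζ) (le_max_left _ _)
  have hnGi : ∀ ζ ∈ Set.Icc (0:ℝ) 1, ‖clm (Gi ζ)‖ ≤ nGi :=
    fun ζ hζ => le_trans (hnGi₀ ζ hζ) (le_max_left _ _)
  have hnD0 : 0 ≤ nD := le_max_right _ _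
  have hnC0 : 0 ≤ nC := le_max_right _ _
  have hnG1 : (1:ℝ) ≤ nG := le_max_right _ _
  have hnGi1 : (1:ℝ) ≤ nGi := le_max_right _ _
  have hnG0 : (0:ℝ) < nG := lt_of_lt_of_le one_pos hnG1
  have hnGi0 : (0:ℝ) < nGi := lt_of_lt_of_le one_pos hnGi1
  -- the constants
  refine ⟨nGi * nG * Real.exp nC, (nGi * nG * Real.exp nC)⁻¹, nD, nD, by positivity, by positivity,
    hnD0, hnD0, ?_⟩
  rintro s x ⟨u', hu'c, hu'd, heq⟩
  set u : ℝ → EuclideanSpace ℂ (Fin d) := fun t => Matrix.toEuclideanLin (𝓗 t) (x t) with hu_def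
  set v : ℝ → EuclideanSpace ℂ (Fin d) := fun t => Matrix.toEuclideanLin ((R t)ᴴ) (u t)
    with hv_def
  have hvG : ∀ t, v t = Matrix.toEuclideanLin (G t) (x t) := fun t =>
    (toEuclideanLin_mul _ _ _).symm
  have huv : ∀ ζ ∈ Set.Icc (0:ℝ) 1, u ζ = Matrix.toEuclideanLin ((S ζ)ᴴ) (v ζ) := by
    intro ζ hζ
    rw [hv_def, ← toEuclideanLin_mul, hSHR ζ hζ, toEuclideanLin_one]
  have hxv : ∀ ζ ∈ Set.Icc (0:ℝ) 1, x ζ = Matrix.toEuclideanLin (Gi ζ) (v ζ) := by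
    intro ζ hζ
    rw [hvG, ← toEuclideanLin_mul, hGiG ζ hζ, toEuclideanLin_one]
  set w' : ℝ → EuclideanSpace ℂ (Fin d) := fun ζ =>
    s • Matrix.toEuclideanLin (D ζ) (v ζ) + Matrix.toEuclideanLin (C ζ) (v ζ) with hw'_def
  have hvd : ∀ ζ ∈ Set.Icc (0:ℝ) 1, HasDerivWithinAt v (w' ζ) (Set.Icc 0 1) ζ := by
    intro ζ hζ
    have hRd : ∀ i j, HasDerivWithinAt (fun t => (R t)ᴴ i j) ((R' ζ)ᴴ i j) (Set.Icc 0 1) ζ := by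
      intro i j
      have hder : HasDerivWithinAt (fun t => R t j i) (R' ζ j i) (Set.Icc 0 1) ζ :=
        (((hR j i).differentiableOn one_ne_zero) ζ hζ).hasDerivWithinAt
      simpa [Matrix.conjTranspose_apply] using hder.star
    have hder := hasDerivWithinAt_matrix_apply hRd (hu'd ζ hζ)
    have key : Matrix.toEuclideanLin ((R ζ)ᴴ) (u' ζ)
        = s • Matrix.toEuclideanLin (D ζ) (v ζ)
          - Matrix.toEuclideanLin ((R ζ)ᴴ * Q * P₀ * (S ζ)ᴴ) (v ζ) := by
      have happ := congrArg (fun y => Matrix.toEuclideanLin ((R ζ)ᴴ * Q) y) (heq ζ hζ)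
      simp only [map_add, _root_.map_smul] at happ
      have e1 : Matrix.toEuclideanLin ((R ζ)ᴴ * Q) (x ζ)
          = Matrix.toEuclideanLin (D ζ) (v ζ) := by
        rw [← hstar ζ hζ, toEuclideanLin_mul, ← hvG]
      have e2 : Matrix.toEuclideanLin ((R ζ)ᴴ * Q) (Matrix.toEuclideanLin P₁ (u' ζ))
          = Matrix.toEuclideanLin ((R ζ)ᴴ) (u' ζ) := by
        rw [← toEuclideanLin_mul, Matrix.mul_assoc, hQP₁, Matrix.mul_one]
      have e3 : Matrix.toEuclideanLin ((R ζ)ᴴ * Q) (Matrix.toEuclideanLin P₀ (u ζ))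
          = Matrix.toEuclideanLin ((R ζ)ᴴ * Q * P₀ * (S ζ)ᴴ) (v ζ) := by
        rw [← toEuclideanLin_mul, huv ζ hζ, ← toEuclideanLin_mul]
      rw [e1, e2, e3] at happ
      exact eq_sub_of_add_eq happ.symm
    have hval : w' ζ = Matrix.toEuclideanLin ((R' ζ)ᴴ) (u ζ)
        + Matrix.toEuclideanLin ((R ζ)ᴴ) (u' ζ) := by
      have hsub : Matrix.toEuclideanLin (C ζ) (v ζ)
          = Matrix.toEuclideanLin ((R' ζ)ᴴ * (S ζ)ᴴ) (v ζ)
            - Matrix.toEuclideanLin ((R ζ)ᴴ * Q * P₀ * (S ζ)ᴴ) (v ζ) := by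
        have hCζ : C ζ = (R' ζ)ᴴ * (S ζ)ᴴ - (R ζ)ᴴ * Q * P₀ * (S ζ)ᴴ := rfl
        rw [hCζ, map_sub]
        rfl
      have h9 : Matrix.toEuclideanLin ((R' ζ)ᴴ) (u ζ)
          = Matrix.toEuclideanLin ((R' ζ)ᴴ * (S ζ)ᴴ) (v ζ) := by
        rw [huv ζ hζ, ← toEuclideanLin_mul]
      show s • Matrix.toEuclideanLin (D ζ) (v ζ) + Matrix.toEuclideanLin (C ζ) (v ζ) = _
      rw [hsub, h9, key]
      abel
    rw [hval]
    exact hder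
  set g : ℝ → ℝ := fun t => ‖v t‖^2 with hg_def
  set g' : ℝ → ℝ := fun ζ => 2 * (inner (𝕜 := ℂ) (v ζ) (w' ζ)).re with hg'_def
  have hgd : ∀ ζ ∈ Set.Icc (0:ℝ) 1, HasDerivWithinAt g (g' ζ) (Set.Icc 0 1) ζ := by
    intro ζ hζ
    have hinner : HasDerivWithinAt (fun t => (inner ℂ (v t) (v t) : ℂ))
        (inner ℂ (v ζ) (w' ζ) + inner ℂ (w' ζ) (v ζ)) (Set.Icc 0 1) ζ :=
      HasDerivWithinAt.inner ℂ (hvd ζ hζ) (hvd ζ hζ)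
    have hre := Complex.reCLM.hasFDerivAt.comp_hasDerivWithinAt ζ hinner
    have hfun : (fun t => Complex.reCLM ((inner ℂ (v t) (v t) : ℂ))) = g := by
      funext t
      show ((inner ℂ (v t) (v t) : ℂ)).re = ‖v t‖^2
      rw [← RCLike.re_to_complex]
      exact inner_self_eq_norm_sq (𝕜 := ℂ) (v t)
    have hvalue : Complex.reCLM ((inner ℂ (v ζ) (w' ζ) : ℂ) + (inner ℂ (w' ζ) (v ζ) : ℂ)) = g' ζ := by
      show ((inner ℂ (v ζ) (w' ζ) : ℂ) + (inner ℂ (w' ζ) (v ζ) : ℂ)).re = g' ζ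
      have h8 : (inner ℂ (w' ζ) (v ζ) : ℂ) = (starRingEnd ℂ) (inner ℂ (v ζ) (w' ζ) : ℂ) :=
        (inner_conj_symm (w' ζ) (v ζ)).symm
      rw [Complex.add_re, h8, Complex.conj_re, hg'_def]
      ring
    have hre2 := hre.congr (fun t _ => (congrFun hfun t).symm) ((congrFun hfun ζ).symm)
    exact hvalue ▸ hre2
  have hKb : ∀ ζ ∈ Set.Icc (0:ℝ) 1, |g' ζ| ≤ (2 * (nC + |s.re| * nD)) * g ζ := by
    intro ζ hζ
    set z : ℂ := inner (𝕜 := ℂ) (v ζ) (Matrix.toEuclideanLin (D ζ) (v ζ)) with hz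
    set w₂ : ℂ := inner (𝕜 := ℂ) (v ζ) (Matrix.toEuclideanLin (C ζ) (v ζ)) with hw₂
    have hsplit : (inner ℂ (v ζ) (w' ζ) : ℂ) = s * z + w₂ := by
      rw [hw'_def]
      rw [inner_add_right, inner_smul_right]
    have hzim : z.im = 0 := by
      have hDsym := (Matrix.isHermitian_iff_isSymmetric.1 (hDH ζ hζ))
      have h1 : (starRingEnd ℂ) z = z := by
        rw [hz, inner_conj_symm]
        exact hDsym (v ζ) (v ζ)
      exact Complex.conj_eq_iff_im.1 h1
    have hzb : |z.re| ≤ nD * ‖v ζ‖^2 := by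
      have h2 : ‖Matrix.toEuclideanLin (D ζ) (v ζ)‖ ≤ nD * ‖v ζ‖ :=
        le_trans (norm_apply_le _ _)
          (mul_le_mul_of_nonneg_right (hnD ζ hζ) (norm_nonneg _))
      calc |z.re| ≤ ‖z‖ := Complex.abs_re_le_norm z
        _ ≤ ‖v ζ‖ * ‖Matrix.toEuclideanLin (D ζ) (v ζ)‖ := norm_inner_le_norm _ _
        _ ≤ ‖v ζ‖ * (nD * ‖v ζ‖) :=
            mul_le_mul_of_nonneg_left h2 (norm_nonneg _)
        _ = nD * ‖v ζ‖^2 := by ring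
    have hw₂b : |w₂.re| ≤ nC * ‖v ζ‖^2 := by
      have h2 : ‖Matrix.toEuclideanLin (C ζ) (v ζ)‖ ≤ nC * ‖v ζ‖ :=
        le_trans (norm_apply_le _ _)
          (mul_le_mul_of_nonneg_right (hnC ζ hζ) (norm_nonneg _))
      calc |w₂.re| ≤ ‖w₂‖ := Complex.abs_re_le_norm w₂
        _ ≤ ‖v ζ‖ * ‖Matrix.toEuclideanLin (C ζ) (v ζ)‖ := norm_inner_le_norm _ _
        _ ≤ ‖v ζ‖ * (nC * ‖v ζ‖) :=
            mul_le_mul_of_nonneg_left h2 (norm_nonneg _)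
        _ = nC * ‖v ζ‖^2 := by ring
    have hgval : g' ζ = 2 * (s.re * z.re + w₂.re) := by
      rw [hg'_def]
      simp only [hsplit, Complex.add_re, Complex.mul_re, hzim]
      ring
    rw [hgval]
    have habs : |s.re * z.re| ≤ |s.re| * (nD * ‖v ζ‖^2) := by
      rw [abs_mul]
      exact mul_le_mul_of_nonneg_left hzb (abs_nonneg _)
    have : |2 * (s.re * z.re + w₂.re)| ≤ 2 * (|s.re * z.re| + |w₂.re|) := by
      rw [abs_mul]
      simp only [abs_two]
      have := abs_add_le (s.re * z.re) w₂.re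
      nlinarith
    calc |2 * (s.re * z.re + w₂.re)| ≤ 2 * (|s.re * z.re| + |w₂.re|) := this
      _ ≤ 2 * (|s.re| * (nD * ‖v ζ‖^2) + nC * ‖v ζ‖^2) := by nlinarith
      _ = (2 * (nC + |s.re| * nD)) * g ζ := by rw [hg_def]; ring
  have hgron := gronwall_two_sided (g := g) (g' := g') (K := 2 * (nC + |s.re| * nD))
    (fun t _ => sq_nonneg _) hgd hKb
  intro ζ hζ
  obtain ⟨hup, hlo⟩ := hgron ζ hζ
  have hζ0 : (0:ℝ) ≤ ζ := hζ.1
  have hζ1 : ζ ≤ 1 := hζ.2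
  set k : ℝ := nC + |s.re| * nD with hk
  have hk0 : 0 ≤ k := by positivity
  have hexp2 : Real.exp (2 * k * ζ) = (Real.exp (k * ζ))^2 := by
    rw [sq, ← Real.exp_add]
    ring_nf
  have hvup : ‖v ζ‖ ≤ ‖v 0‖ * Real.exp (k * ζ) := by
    have h2 : ‖v ζ‖^2 ≤ (‖v 0‖ * Real.exp (k * ζ))^2 := by
      calc ‖v ζ‖^2 ≤ ‖v 0‖^2 * Real.exp (2 * k * ζ) := hup
        _ = (‖v 0‖ * Real.exp (k * ζ))^2 := by rw [mul_pow, hexp2]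
    have h3 := Real.sqrt_le_sqrt h2
    rwa [Real.sqrt_sq (norm_nonneg _), Real.sqrt_sq (by positivity)] at h3
  have hvlo : ‖v 0‖ ≤ ‖v ζ‖ * Real.exp (k * ζ) := by
    have h2 : ‖v 0‖^2 ≤ (‖v ζ‖ * Real.exp (k * ζ))^2 := by
      calc ‖v 0‖^2 ≤ ‖v ζ‖^2 * Real.exp (2 * k * ζ) := hlo
        _ = (‖v ζ‖ * Real.exp (k * ζ))^2 := by rw [mul_pow, hexp2]
    have h3 := Real.sqrt_le_sqrt h2
    rwa [Real.sqrt_sq (norm_nonneg _), Real.sqrt_sq (by positivity)] at h3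
  have hxle : ∀ t ∈ Set.Icc (0:ℝ) 1, ‖x t‖ ≤ nGi * ‖v t‖ := by
    intro t ht
    rw [hxv t ht]
    exact le_trans (norm_apply_le _ _) (mul_le_mul_of_nonneg_right (hnGi t ht) (norm_nonneg _))
  have hvle : ∀ t ∈ Set.Icc (0:ℝ) 1, ‖v t‖ ≤ nG * ‖x t‖ := by
    intro t ht
    rw [hvG t]
    exact le_trans (norm_apply_le _ _) (mul_le_mul_of_nonneg_right (hnG t ht) (norm_nonneg _))
  have h0mem : (0:ℝ) ∈ Set.Icc (0:ℝ) 1 := left_mem_Icc.2 zero_le_one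
  have hEsplit : Real.exp (k * ζ) ≤ Real.exp nC * Real.exp (|s.re| * nD * ζ) := by
    rw [← Real.exp_add]
    apply Real.exp_le_exp.2
    have h6 : k * ζ = nC * ζ + |s.re| * nD * ζ := by rw [hk]; ring
    have h7 : nC * ζ ≤ nC := mul_le_of_le_one_right hnC0 hζ1
    rw [h6]
    linarith
  constructor
  · -- lower bound
    have hchain : ‖x 0‖ ≤ (nGi * nG * Real.exp nC) * Real.exp (|s.re| * nD * ζ) * ‖x ζ‖ := by
      calc ‖x 0‖ ≤ nGi * ‖v 0‖ := hxle 0 h0mem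
        _ ≤ nGi * (‖v ζ‖ * Real.exp (k * ζ)) :=
            mul_le_mul_of_nonneg_left hvlo (by positivity)
        _ ≤ nGi * ((nG * ‖x ζ‖) * Real.exp (k * ζ)) :=
            mul_le_mul_of_nonneg_left
              (mul_le_mul_of_nonneg_right (hvle ζ hζ) (Real.exp_pos _).le) (by positivity)
        _ ≤ nGi * ((nG * ‖x ζ‖) * (Real.exp nC * Real.exp (|s.re| * nD * ζ))) :=
            mul_le_mul_of_nonneg_left
              (mul_le_mul_of_nonneg_left hEsplit (by positivity)) (by positivity)
        _ = (nGi * nG * Real.exp nC) * Real.exp (|s.re| * nD * ζ) * ‖x ζ‖ := by ring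
    have hpos : (0:ℝ) < (nGi * nG * Real.exp nC) * Real.exp (|s.re| * nD * ζ) := by positivity
    have h5 : ((nGi * nG * Real.exp nC) * Real.exp (|s.re| * nD * ζ))⁻¹ * ‖x 0‖ ≤ ‖x ζ‖ := by
      calc ((nGi * nG * Real.exp nC) * Real.exp (|s.re| * nD * ζ))⁻¹ * ‖x 0‖
          ≤ ((nGi * nG * Real.exp nC) * Real.exp (|s.re| * nD * ζ))⁻¹
            * ((nGi * nG * Real.exp nC) * Real.exp (|s.re| * nD * ζ) * ‖x ζ‖) :=
            mul_le_mul_of_nonneg_left hchain (by positivity)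
        _ = ‖x ζ‖ := inv_mul_cancel_left₀ hpos.ne' _
    calc (nGi * nG * Real.exp nC)⁻¹ * Real.exp (-(|s.re| * nD * ζ)) * ‖x 0‖
        = ((nGi * nG * Real.exp nC) * Real.exp (|s.re| * nD * ζ))⁻¹ * ‖x 0‖ := by
          rw [Real.exp_neg]
          ring
      _ ≤ ‖x ζ‖ := h5
  · calc ‖x ζ‖ ≤ nGi * ‖v ζ‖ := hxle ζ hζ
      _ ≤ nGi * (‖v 0‖ * Real.exp (k * ζ)) := mul_le_mul_of_nonneg_left hvup (by positivity)
      _ ≤ nGi * ((nG * ‖x 0‖) * Real.exp (k * ζ)) :=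
          mul_le_mul_of_nonneg_left
            (mul_le_mul_of_nonneg_right (hvle 0 h0mem) (Real.exp_pos _).le) (by positivity)
      _ ≤ nGi * ((nG * ‖x 0‖) * (Real.exp nC * Real.exp (|s.re| * nD * ζ))) :=
          mul_le_mul_of_nonneg_left
            (mul_le_mul_of_nonneg_left hEsplit (by positivity)) (by positivity)
      _ = nGi * nG * Real.exp nC * Real.exp (|s.re| * nD * ζ) * ‖x 0‖ := by ring
end

section
/- Let W₁, W₀ ∈ ℂ^{d×d} be such that the d×2d matrix [W₁ W₀] has rank d. For s ∈ ℂ let Ψ^s be the fundamental solution. Then there exists a classical solution x of the port-Hamiltonian eigenvalue ODE with x not identically zero and W₁·(𝓗x)(1) + W₀·(𝓗x)(0) = 0 if and only if det(W₁·𝓗(1)·Ψ^s(1) + W₀·𝓗(0)) = 0. (Lemma 5.4.) -/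
open Matrix Set
open scoped ComplexOrder

namespace PHAux

lemma toEL_comp {d : ℕ} (A B : Matrix (Fin d) (Fin d) ℂ) (w : EuclideanSpace ℂ (Fin d)) :
    Matrix.toEuclideanLin A (Matrix.toEuclideanLin B w) = Matrix.toEuclideanLin (A * B) w := by
  simp only [Matrix.toEuclideanLin_apply, Equiv.apply_symm_apply, Matrix.mulVec_mulVec]

lemma toEL_one {d : ℕ} (w : EuclideanSpace ℂ (Fin d)) :
    Matrix.toEuclideanLin (1 : Matrix (Fin d) (Fin d) ℂ) w = w := by
  simp [Matrix.toEuclideanLin_apply, Matrix.one_mulVec]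

/-- Bundled linear map from matrices to continuous linear maps on Euclidean space. -/
noncomputable def ML (d : ℕ) : Matrix (Fin d) (Fin d) ℂ →ₗ[ℂ]
    (EuclideanSpace ℂ (Fin d) →L[ℂ] EuclideanSpace ℂ (Fin d)) :=
  (LinearMap.toContinuousLinearMap :
      (EuclideanSpace ℂ (Fin d) →ₗ[ℂ] EuclideanSpace ℂ (Fin d)) ≃ₗ[ℂ] _).toLinearMap.comp
    (Matrix.toEuclideanLin.toLinearMap)

lemma ML_apply {d : ℕ} (A : Matrix (Fin d) (Fin d) ℂ) (w : EuclideanSpace ℂ (Fin d)) :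
    ML d A w = Matrix.toEuclideanLin A w := rfl

/-- Uniqueness of classical solutions: the trajectory `𝓗·x` is determined by its value at `0`. -/
lemma unique_sol {d : ℕ}
    (P₁ P₀ : Matrix (Fin d) (Fin d) ℂ) (hP₁inv : IsUnit P₁)
    (𝓗 : ℝ → Matrix (Fin d) (Fin d) ℂ)
    (h𝓗cont : ContinuousOn 𝓗 (Set.Icc 0 1))
    (h𝓗pos : ∀ ζ ∈ Set.Icc (0:ℝ) 1, (𝓗 ζ).PosDef)
    (s : ℂ) (x y : ℝ → EuclideanSpace ℂ (Fin d))
    (hx : IsClassicalSolution P₁ P₀ 𝓗 s x) (hy : IsClassicalSolution P₁ P₀ 𝓗 s y)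
    (h0 : Matrix.toEuclideanLin (𝓗 0) (x 0) = Matrix.toEuclideanLin (𝓗 0) (y 0)) :
    ∀ t ∈ Set.Icc (0:ℝ) 1,
      Matrix.toEuclideanLin (𝓗 t) (x t) = Matrix.toEuclideanLin (𝓗 t) (y t) := by
  have hdet : ∀ t ∈ Set.Icc (0:ℝ) 1, IsUnit (𝓗 t).det :=
    fun t ht => (Matrix.isUnit_iff_isUnit_det _).mp (h𝓗pos t ht).isUnit
  have hP₁det : IsUnit P₁.det := (Matrix.isUnit_iff_isUnit_det _).mp hP₁inv
  set B : ℝ → Matrix (Fin d) (Fin d) ℂ := fun t => P₁⁻¹ * (s • (𝓗 t)⁻¹ - P₀) with hB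
  have hinvcont : ContinuousOn (fun t => (𝓗 t)⁻¹) (Set.Icc (0:ℝ) 1) := by
    simp only [Matrix.inv_def, Ring.inverse_eq_inv']
    exact ((continuous_id.matrix_det.comp_continuousOn h𝓗cont).inv₀
        (fun t ht => (hdet t ht).ne_zero)).smul
      (continuous_id.matrix_adjugate.comp_continuousOn h𝓗cont)
  have hBcont : ContinuousOn B (Set.Icc (0:ℝ) 1) :=
    (continuous_const.matrix_mul continuous_id).comp_continuousOn
      ((hinvcont.const_smul s).sub continuousOn_const)
  obtain ⟨C, hC⟩ : ∃ C, ∀ t ∈ Set.Icc (0:ℝ) 1, ‖ML d (B t)‖ ≤ C :=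
    isCompact_Icc.exists_bound_of_continuousOn
      ((ML d).continuous_of_finiteDimensional.comp_continuousOn hBcont)
  set K : NNReal := C.toNNReal with hK
  set clamp : ℝ → ℝ := fun t => (Set.projIcc (0:ℝ) 1 zero_le_one t : ℝ) with hclamp
  have hclampmem : ∀ t, clamp t ∈ Set.Icc (0:ℝ) 1 := fun t => (Set.projIcc 0 1 zero_le_one t).2
  have hclampeq : ∀ t ∈ Set.Icc (0:ℝ) 1, clamp t = t := fun t ht => by
    simp [hclamp, Set.projIcc_of_mem zero_le_one ht]
  set vf : ℝ → EuclideanSpace ℂ (Fin d) → EuclideanSpace ℂ (Fin d) :=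
    fun t u => ML d (B (clamp t)) u with hvf
  have hlip : ∀ t, LipschitzWith K (vf t) := by
    intro t
    apply (ML d (B (clamp t))).lipschitz.weaken
    rw [← NNReal.coe_le_coe, coe_nnnorm, hK, Real.coe_toNNReal']
    exact le_max_of_le_left (hC _ (hclampmem t))
  -- the key reduction: for a classical solution, `u' = vf t (u t)` on `[0,1]`
  have key : ∀ z : ℝ → EuclideanSpace ℂ (Fin d), IsClassicalSolution P₁ P₀ 𝓗 s z →
      (ContinuousOn (fun t => Matrix.toEuclideanLin (𝓗 t) (z t)) (Set.Icc 0 1)) ∧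
      (∀ t ∈ Set.Ico (0:ℝ) 1,
        HasDerivWithinAt (fun t => Matrix.toEuclideanLin (𝓗 t) (z t))
          (vf t (Matrix.toEuclideanLin (𝓗 t) (z t))) (Set.Ici t) t) := by
    intro z ⟨u', hu'c, hd, heq⟩
    set u : ℝ → EuclideanSpace ℂ (Fin d) := fun t => Matrix.toEuclideanLin (𝓗 t) (z t) with hu
    have hucont : ContinuousOn u (Set.Icc 0 1) := fun t ht => (hd t ht).continuousWithinAt
    have hrecover : ∀ t ∈ Set.Icc (0:ℝ) 1,
        z t = Matrix.toEuclideanLin (𝓗 t)⁻¹ (u t) := by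
      intro t ht
      rw [hu, toEL_comp, Matrix.nonsing_inv_mul _ (hdet t ht), toEL_one]
    have hu'eq : ∀ t ∈ Set.Icc (0:ℝ) 1, u' t = vf t (u t) := by
      intro t ht
      have h1 : Matrix.toEuclideanLin P₁ (u' t)
          = s • z t - Matrix.toEuclideanLin P₀ (u t) := by
        rw [heq t ht]; abel
      have h2 : vf t (u t) = Matrix.toEuclideanLin (B t) (u t) := by
        show Matrix.toEuclideanLin (B (clamp t)) (u t) = _
        rw [hclampeq t ht]
      rw [h2, hB]
      rw [← toEL_comp, map_sub, _root_.map_smul, LinearMap.sub_apply, LinearMap.smul_apply,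
        ← hrecover t ht, ← h1, toEL_comp, Matrix.nonsing_inv_mul _ hP₁det, toEL_one]
    refine ⟨hucont, fun t ht => ?_⟩
    have h1 := hd t (Set.Ico_subset_Icc_self ht)
    have h2 : Set.Icc (0:ℝ) 1 ∈ nhdsWithin t (Set.Ici t) := by
      apply mem_nhdsWithin.2 ⟨Set.Iio 1, isOpen_Iio, ht.2, ?_⟩
      rintro y ⟨hy1, hy2⟩
      exact ⟨le_trans ht.1 hy2, le_of_lt hy1⟩
    have := h1.mono_of_mem_nhdsWithin h2
    rwa [hu'eq t (Set.Ico_subset_Icc_self ht)] at this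
  obtain ⟨hxc, hxd⟩ := key x hx
  obtain ⟨hyc, hyd⟩ := key y hy
  exact fun t ht =>
    ODE_solution_unique_of_mem_Icc_right
      (fun t _ => (hlip t).lipschitzOnWith (s := Set.univ))
      hxc hxd (fun _ _ => trivial) hyc hyd (fun _ _ => trivial) h0 ht

end PHAux

open PHAux in
/-- **Lemma 5.4.** A complex number `s` admits a nonzero classical solution of
the eigenvalue ODE satisfying the boundary condition `W₁(𝓗x)(1) + W₀(𝓗x)(0) = 0`
(i.e. `s` is an eigenvalue of the port-Hamiltonian operator) if and only if
`det (W₁·𝓗(1)·Ψˢ(1) + W₀·𝓗(0)) = 0`, where `Ψˢ` is the fundamental solution. -/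
theorem eigenvalue_iff_det_eq_zero
    (d : ℕ) (hd : 1 ≤ d)
    (P₁ P₀ : Matrix (Fin d) (Fin d) ℂ)
    (hP₁herm : P₁.IsHermitian) (hP₁inv : IsUnit P₁)
    (hP₀skew : P₀ᴴ = -P₀)
    (𝓗 : ℝ → Matrix (Fin d) (Fin d) ℂ)
    (h𝓗cont : ContinuousOn 𝓗 (Set.Icc 0 1))
    (h𝓗pos : ∀ ζ ∈ Set.Icc (0:ℝ) 1, (𝓗 ζ).PosDef)
    (S R Δ : ℝ → Matrix (Fin d) (Fin d) ℂ)
    (hS : ∀ i j, ContDiffOn ℝ 1 (fun ζ => S ζ i j) (Set.Icc 0 1))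
    (hR : ∀ i j, ContDiffOn ℝ 1 (fun ζ => R ζ i j) (Set.Icc 0 1))
    (hΔ : ∀ i j, ContDiffOn ℝ 1 (fun ζ => Δ ζ i j) (Set.Icc 0 1))
    (hRS : ∀ ζ ∈ Set.Icc (0:ℝ) 1, R ζ * S ζ = 1 ∧ S ζ * R ζ = 1)
    (hΔdiag : ∀ ζ ∈ Set.Icc (0:ℝ) 1, (Δ ζ).IsDiag)
    (hΔreal : ∀ ζ ∈ Set.Icc (0:ℝ) 1, ∀ i, (Δ ζ i i).im = 0)
    (hΔinv : ∀ ζ ∈ Set.Icc (0:ℝ) 1, IsUnit (Δ ζ))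
    (hfact : ∀ ζ ∈ Set.Icc (0:ℝ) 1, P₁ * 𝓗 ζ = R ζ * Δ ζ * S ζ)
    -- boundary matrices of full rank
    (W₁ W₀ : Matrix (Fin d) (Fin d) ℂ)
    (hrank : (Matrix.fromCols W₁ W₀).rank = d)
    -- `Ψ` is the fundamental solution of the eigenvalue ODE
    (Ψ : ℂ → ℝ → Matrix (Fin d) (Fin d) ℂ)
    (hΨ0 : ∀ s : ℂ, Ψ s 0 = 1)
    (hΨsol : ∀ (s : ℂ) (v : EuclideanSpace ℂ (Fin d)),
      IsClassicalSolution P₁ P₀ 𝓗 s (fun ζ => Matrix.toEuclideanLin (Ψ s ζ) v))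
    (s : ℂ) :
    (∃ x : ℝ → EuclideanSpace ℂ (Fin d),
        IsClassicalSolution P₁ P₀ 𝓗 s x ∧
        (∃ ζ ∈ Set.Icc (0:ℝ) 1, x ζ ≠ 0) ∧
        Matrix.toEuclideanLin W₁ (Matrix.toEuclideanLin (𝓗 1) (x 1))
          + Matrix.toEuclideanLin W₀ (Matrix.toEuclideanLin (𝓗 0) (x 0)) = 0) ↔
      (W₁ * 𝓗 1 * Ψ s 1 + W₀ * 𝓗 0).det = 0 := by
  have hdet : ∀ t ∈ Set.Icc (0:ℝ) 1, IsUnit (𝓗 t).det :=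
    fun t ht => (Matrix.isUnit_iff_isUnit_det _).mp (h𝓗pos t ht).isUnit
  set M : Matrix (Fin d) (Fin d) ℂ := W₁ * 𝓗 1 * Ψ s 1 + W₀ * 𝓗 0 with hM
  have h0mem : (0:ℝ) ∈ Set.Icc (0:ℝ) 1 := ⟨le_refl _, zero_le_one⟩
  have h1mem : (1:ℝ) ∈ Set.Icc (0:ℝ) 1 := ⟨zero_le_one, le_refl _⟩
  constructor
  · rintro ⟨x, hx, ⟨ζ₀, hζ₀, hxne⟩, hbc⟩
    set v : EuclideanSpace ℂ (Fin d) := x 0 with hv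
    set y : ℝ → EuclideanSpace ℂ (Fin d) :=
      fun ζ => Matrix.toEuclideanLin (Ψ s ζ) v with hy
    have hy0 : y 0 = v := by rw [hy]; simp only [hΨ0 s]; exact toEL_one v
    have h0 : Matrix.toEuclideanLin (𝓗 0) (x 0) = Matrix.toEuclideanLin (𝓗 0) (y 0) := by
      rw [hy0]
    have hEq := unique_sol P₁ P₀ hP₁inv 𝓗 h𝓗cont h𝓗pos s x y hx (hΨsol s v) h0
    -- v ≠ 0
    have hvne : v ≠ 0 := by
      intro hv0
      apply hxne
      have hy0' : ∀ t, y t = 0 := fun t => by simp only [hy, hv0, map_zero]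
      have := hEq ζ₀ hζ₀
      rw [hy0' ζ₀, map_zero] at this
      have := congrArg (Matrix.toEuclideanLin (𝓗 ζ₀)⁻¹) this
      rwa [toEL_comp, Matrix.nonsing_inv_mul _ (hdet ζ₀ hζ₀), toEL_one, map_zero] at this
    -- M v = 0
    have hMv : Matrix.toEuclideanLin M v = 0 := by
      have hy1 : Matrix.toEuclideanLin (Ψ s 1) v = y 1 := rfl
      rw [hM, map_add, LinearMap.add_apply, mul_assoc,
        ← toEL_comp W₁ (𝓗 1 * Ψ s 1), ← toEL_comp (𝓗 1) (Ψ s 1),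
        ← toEL_comp W₀ (𝓗 0), hy1, ← hEq 1 h1mem]
      exact hbc
    by_contra hdM
    have hMunit : IsUnit M.det := isUnit_iff_ne_zero.mpr hdM
    apply hvne
    have := congrArg (Matrix.toEuclideanLin M⁻¹) hMv
    rwa [toEL_comp, Matrix.nonsing_inv_mul _ hMunit, toEL_one, map_zero] at this
  · intro hdM
    obtain ⟨w, hw0, hwM⟩ := (Matrix.exists_mulVec_eq_zero_iff).mpr hdM
    set v : EuclideanSpace ℂ (Fin d) := (WithLp.equiv 2 (Fin d → ℂ)).symm w with hv
    refine ⟨fun ζ => Matrix.toEuclideanLin (Ψ s ζ) v, hΨsol s v, ⟨0, h0mem, ?_⟩, ?_⟩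
    · simp only [hΨ0 s, toEL_one]
      exact (WithLp.toLp_eq_zero 2).not.mpr hw0
    · have h1 : Matrix.toEuclideanLin (Ψ s 0) v = v := by
        simp only [hΨ0 s]; exact toEL_one v
      show Matrix.toEuclideanLin W₁
          (Matrix.toEuclideanLin (𝓗 1) (Matrix.toEuclideanLin (Ψ s 1) v))
        + Matrix.toEuclideanLin W₀
          (Matrix.toEuclideanLin (𝓗 0) (Matrix.toEuclideanLin (Ψ s 0) v)) = 0
      rw [h1, toEL_comp, toEL_comp, toEL_comp, ← LinearMap.add_apply, ← map_add,
        ← hM, hv, WithLp.equiv_symm_apply, Matrix.toEuclideanLin_apply_piLp_toLp, hwM]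
      rfl
end

section
/- Let W₁, W₀ ∈ ℂ^{d×d} and for each s ∈ ℂ let Ψ^s be the fundamental solution. Then there exist constants c₂, c₃ ≥ 0 such that for every s ∈ ℂ: |det(W₁·𝓗(1)·Ψ^s(1) + W₀·𝓗(0))| ≤ c₂·e^{c₃·|Re s|}. In particular, the function g(s) := det(W₁·𝓗(1)·Ψ^s(1) + W₀·𝓗(0)) grows at most exponentially in |Re s| and is bounded on every line parallel to the imaginary axis. (Exponential-type bound for g in the proof of Theorem 2.7, implication 2)⇒1).) -/
open Matrix Set
open scoped ComplexOrder

lemma my_gronwall (E E' : ℝ → ℝ) (L : ℝ)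
    (hE : ∀ t ∈ Set.Icc (0:ℝ) 1, HasDerivWithinAt E (E' t) (Set.Icc 0 1) t)
    (hle : ∀ t ∈ Set.Icc (0:ℝ) 1, E' t ≤ L * E t) :
    E 1 ≤ E 0 * Real.exp L := by
  set G : ℝ → ℝ := fun t => E t * Real.exp (-L * t) with hGdef
  have hG : ∀ t ∈ Set.Icc (0:ℝ) 1, HasDerivWithinAt G
      ((E' t - L * E t) * Real.exp (-L * t)) (Set.Icc 0 1) t := by
    intro t ht
    have h1 : HasDerivWithinAt (fun τ => Real.exp (-L * τ)) (Real.exp (-L*t) * (-L)) (Set.Icc 0 1) t := by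
      have := ((hasDerivAt_id t).const_mul (-L)).exp
      simpa using this.hasDerivWithinAt
    have := (hE t ht).fun_mul h1
    refine this.congr_deriv ?_
    ring
  have hcont : ContinuousOn G (Set.Icc 0 1) := fun t ht => ((hG t ht).continuousWithinAt)
  have hanti : AntitoneOn G (Set.Icc 0 1) := by
    apply antitoneOn_of_deriv_nonpos (convex_Icc 0 1) hcont
    · intro x hx
      rw [interior_Icc] at hx
      exact (((hG x ⟨hx.1.le, hx.2.le⟩).hasDerivAt (Icc_mem_nhds hx.1 hx.2)).differentiableAt).differentiableWithinAt
    · intro x hx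
      rw [interior_Icc] at hx
      have hx' : x ∈ Set.Icc (0:ℝ) 1 := ⟨hx.1.le, hx.2.le⟩
      rw [((hG x hx').hasDerivAt (Icc_mem_nhds hx.1 hx.2)).deriv]
      exact mul_nonpos_of_nonpos_of_nonneg (by linarith [hle x hx']) (Real.exp_nonneg _)
  have h10 : G 1 ≤ G 0 := hanti (by norm_num) (by norm_num) (by norm_num)
  have hG1 : G 1 = E 1 * Real.exp (-L) := by simp [hGdef]
  have hG0 : G 0 = E 0 := by simp [hGdef]
  rw [hG1, hG0] at h10
  have := mul_le_mul_of_nonneg_right h10 (Real.exp_nonneg L)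
  rwa [mul_assoc, ← Real.exp_add, neg_add_cancel, Real.exp_zero, mul_one] at this

lemma my_det_bound (d : ℕ) (A : Matrix (Fin d) (Fin d) ℂ) (C : ℝ)
    (h : ∀ i j, ‖A i j‖ ≤ C) :
    ‖A.det‖ ≤ (d).factorial * C ^ d := by
  rw [Matrix.det_apply]
  have key : ∀ σ : Equiv.Perm (Fin d), ‖Equiv.Perm.sign σ • ∏ i, A (σ i) i‖ ≤ C ^ d := by
    intro σ
    have habs : ‖Equiv.Perm.sign σ • ∏ i, A (σ i) i‖ = ‖∏ i, A (σ i) i‖ := by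
      rcases Int.units_eq_one_or (Equiv.Perm.sign σ) with hs | hs <;> simp [hs]
    rw [habs, norm_prod]
    calc ∏ i, ‖A (σ i) i‖ ≤ ∏ _i : Fin d, C :=
          Finset.prod_le_prod (fun i _ => norm_nonneg _) (fun i _ => h _ _)
      _ = C ^ d := by simp
  calc ‖∑ σ : Equiv.Perm (Fin d), Equiv.Perm.sign σ • ∏ i, A (σ i) i‖
      ≤ ∑ σ : Equiv.Perm (Fin d), ‖Equiv.Perm.sign σ • ∏ i, A (σ i) i‖ :=
        norm_sum_le _ _
    _ ≤ ∑ _σ : Equiv.Perm (Fin d), C ^ d := Finset.sum_le_sum (fun σ _ => key σ)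
    _ = (d).factorial * C ^ d := by
        rw [Finset.sum_const, Finset.card_univ, Fintype.card_perm, Fintype.card_fin, nsmul_eq_mul]

set_option maxHeartbeats 2000000 in
/-- Exponential-type bound for the characteristic function
`g(s) = det (W₁·𝓗(1)·Ψˢ(1) + W₀·𝓗(0))`: there are constants `c₂, c₃ ≥ 0` with
`|g(s)| ≤ c₂·e^{c₃·|Re s|}` for all `s ∈ ℂ`. -/
theorem det_characteristic_function_exponential_bound
    (d : ℕ) (hd : 1 ≤ d)
    (P₁ P₀ : Matrix (Fin d) (Fin d) ℂ)
    (hP₁herm : P₁.IsHermitian) (hP₁inv : IsUnit P₁)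
    (hP₀skew : P₀ᴴ = -P₀)
    (𝓗 : ℝ → Matrix (Fin d) (Fin d) ℂ)
    (h𝓗cont : ContinuousOn 𝓗 (Set.Icc 0 1))
    (h𝓗pos : ∀ ζ ∈ Set.Icc (0:ℝ) 1, (𝓗 ζ).PosDef)
    (S R Δ : ℝ → Matrix (Fin d) (Fin d) ℂ)
    (hS : ∀ i j, ContDiffOn ℝ 1 (fun ζ => S ζ i j) (Set.Icc 0 1))
    (hR : ∀ i j, ContDiffOn ℝ 1 (fun ζ => R ζ i j) (Set.Icc 0 1))
    (hΔ : ∀ i j, ContDiffOn ℝ 1 (fun ζ => Δ ζ i j) (Set.Icc 0 1))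
    (hRS : ∀ ζ ∈ Set.Icc (0:ℝ) 1, R ζ * S ζ = 1 ∧ S ζ * R ζ = 1)
    (hΔdiag : ∀ ζ ∈ Set.Icc (0:ℝ) 1, (Δ ζ).IsDiag)
    (hΔreal : ∀ ζ ∈ Set.Icc (0:ℝ) 1, ∀ i, (Δ ζ i i).im = 0)
    (hΔinv : ∀ ζ ∈ Set.Icc (0:ℝ) 1, IsUnit (Δ ζ))
    (hfact : ∀ ζ ∈ Set.Icc (0:ℝ) 1, P₁ * 𝓗 ζ = R ζ * Δ ζ * S ζ)
    (W₁ W₀ : Matrix (Fin d) (Fin d) ℂ)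
    -- `Ψ` is the fundamental solution of the eigenvalue ODE
    (Ψ : ℂ → ℝ → Matrix (Fin d) (Fin d) ℂ)
    (hΨ0 : ∀ s : ℂ, Ψ s 0 = 1)
    (hΨsol : ∀ (s : ℂ) (v : EuclideanSpace ℂ (Fin d)),
      IsClassicalSolution P₁ P₀ 𝓗 s (fun ζ => Matrix.toEuclideanLin (Ψ s ζ) v)) :
    ∃ c₂ c₃ : ℝ, 0 ≤ c₂ ∧ 0 ≤ c₃ ∧
      ∀ s : ℂ,
        ‖(W₁ * 𝓗 1 * Ψ s 1 + W₀ * 𝓗 0).det‖ ≤ c₂ * Real.exp (c₃ * |s.re|) := by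
  classical
  have h0I : (0:ℝ) ∈ Set.Icc (0:ℝ) 1 := by norm_num
  have h1I : (1:ℝ) ∈ Set.Icc (0:ℝ) 1 := by norm_num
  have hud : UniqueDiffOn ℝ (Set.Icc (0:ℝ) 1) := uniqueDiffOn_Icc one_pos
  -- derivative of R
  set R' : ℝ → Matrix (Fin d) (Fin d) ℂ :=
    fun t => Matrix.of (fun i j => derivWithin (fun τ => R τ i j) (Set.Icc 0 1) t) with hR'def
  have hR'deriv : ∀ t ∈ Set.Icc (0:ℝ) 1, ∀ i j,
      HasDerivWithinAt (fun τ => R τ i j) (R' t i j) (Set.Icc 0 1) t := by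
    intro t ht i j
    exact (((hR i j).differentiableOn one_ne_zero) t ht).hasDerivWithinAt
  have hR'cont : ∀ i j, ContinuousOn (fun t => R' t i j) (Set.Icc 0 1) := by
    intro i j
    exact (hR i j).continuousOn_derivWithin hud le_rfl
  have hRcont : ∀ i j, ContinuousOn (fun t => R t i j) (Set.Icc 0 1) := fun i j => (hR i j).continuousOn
  have hScont : ∀ i j, ContinuousOn (fun t => S t i j) (Set.Icc 0 1) := fun i j => (hS i j).continuousOn
  have hΔcont : ∀ i j, ContinuousOn (fun t => Δ t i j) (Set.Icc 0 1) := fun i j => (hΔ i j).continuousOn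
  -- unit facts
  have hP₁det : IsUnit P₁.det := (Matrix.isUnit_iff_isUnit_det P₁).mp hP₁inv
  have hΔdet : ∀ t ∈ Set.Icc (0:ℝ) 1, IsUnit (Δ t).det :=
    fun t ht => (Matrix.isUnit_iff_isUnit_det (Δ t)).mp (hΔinv t ht)
  have hΔdiageq : ∀ t ∈ Set.Icc (0:ℝ) 1, Matrix.diagonal (fun i => Δ t i i) = Δ t :=
    fun t ht => (hΔdiag t ht).diagonal_diag
  have hΔne : ∀ t ∈ Set.Icc (0:ℝ) 1, ∀ i, Δ t i i ≠ 0 := by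
    intro t ht i
    have hdet := hΔdet t ht
    rw [← hΔdiageq t ht, Matrix.det_diagonal] at hdet
    have := hdet.ne_zero
    rw [Finset.prod_ne_zero_iff] at this
    exact this i (Finset.mem_univ i)
  have hΔinveq : ∀ t ∈ Set.Icc (0:ℝ) 1, (Δ t)⁻¹ = Matrix.diagonal (fun i => (Δ t i i)⁻¹) := by
    intro t ht
    apply Matrix.inv_eq_right_inv
    nth_rewrite 1 [← hΔdiageq t ht]
    rw [Matrix.diagonal_mul_diagonal,
      show (fun i => Δ t i i * (Δ t i i)⁻¹) = fun _ => (1:ℂ) from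
        funext fun i => mul_inv_cancel₀ (hΔne t ht i), Matrix.diagonal_one]
  have hRSH : ∀ t ∈ Set.Icc (0:ℝ) 1, (R t)ᴴ * (S t)ᴴ = 1 ∧ (S t)ᴴ * (R t)ᴴ = 1 := by
    intro t ht
    constructor
    · rw [← Matrix.conjTranspose_mul, (hRS t ht).2, Matrix.conjTranspose_one]
    · rw [← Matrix.conjTranspose_mul, (hRS t ht).1, Matrix.conjTranspose_one]
  have hHdet : ∀ t ∈ Set.Icc (0:ℝ) 1, IsUnit (𝓗 t).det := by
    intro t ht
    exact isUnit_iff_ne_zero.mpr (h𝓗pos t ht).det_pos.ne'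
  have hΔherm : ∀ t ∈ Set.Icc (0:ℝ) 1, (Δ t)ᴴ = Δ t := by
    intro t ht
    ext i j
    rw [Matrix.conjTranspose_apply]
    by_cases hij : j = i
    · subst hij
      have him := hΔreal t ht j
      apply Complex.ext <;> simp [him]
    · rw [(hΔdiag t ht) hij, (hΔdiag t ht) (fun h => hij h.symm)]
      simp
  -- the key matrix identity
  have key : ∀ t ∈ Set.Icc (0:ℝ) 1,
      (R t)ᴴ * (P₁⁻¹ * (𝓗 t)⁻¹) * (S t)ᴴ = (Δ t)⁻¹ := by
    intro t ht
    have hfactH : 𝓗 t * P₁ = (S t)ᴴ * Δ t * (R t)ᴴ := by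
      have := congrArg Matrix.conjTranspose (hfact t ht)
      rw [Matrix.conjTranspose_mul, hP₁herm.eq, (h𝓗pos t ht).isHermitian.eq] at this
      rw [this, Matrix.conjTranspose_mul, Matrix.conjTranspose_mul, hΔherm t ht]
      noncomm_ring
    have hinv : P₁⁻¹ * (𝓗 t)⁻¹ = (S t)ᴴ * (Δ t)⁻¹ * (R t)ᴴ := by
      have h1 : (𝓗 t * P₁) * ((S t)ᴴ * (Δ t)⁻¹ * (R t)ᴴ) = 1 := by
        rw [hfactH]
        calc (S t)ᴴ * Δ t * (R t)ᴴ * ((S t)ᴴ * (Δ t)⁻¹ * (R t)ᴴ)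
            = (S t)ᴴ * Δ t * ((R t)ᴴ * (S t)ᴴ) * (Δ t)⁻¹ * (R t)ᴴ := by noncomm_ring
          _ = (S t)ᴴ * (Δ t * (Δ t)⁻¹) * (R t)ᴴ := by rw [(hRSH t ht).1]; noncomm_ring
          _ = (S t)ᴴ * (R t)ᴴ := by rw [Matrix.mul_nonsing_inv _ (hΔdet t ht)]; noncomm_ring
          _ = 1 := (hRSH t ht).2
      have h2 := Matrix.inv_eq_right_inv h1
      rw [Matrix.mul_inv_rev] at h2
      exact h2
    rw [hinv]
    calc (R t)ᴴ * ((S t)ᴴ * (Δ t)⁻¹ * (R t)ᴴ) * (S t)ᴴ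
        = ((R t)ᴴ * (S t)ᴴ) * (Δ t)⁻¹ * ((R t)ᴴ * (S t)ᴴ) := by noncomm_ring
      _ = (Δ t)⁻¹ := by rw [(hRSH t ht).1]; noncomm_ring
  -- matrix B
  set B : ℝ → Matrix (Fin d) (Fin d) ℂ :=
    fun t => (R' t)ᴴ * (S t)ᴴ - (R t)ᴴ * (P₁⁻¹ * P₀) * (S t)ᴴ with hBdef
  -- bound M on |(Δ t i i)⁻¹|
  obtain ⟨M, hM0, hM⟩ : ∃ M : ℝ, 0 ≤ M ∧ ∀ t ∈ Set.Icc (0:ℝ) 1, ∀ i,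
      ‖(Δ t i i)⁻¹‖ ≤ M := by
    have hgc : ContinuousOn (fun t => ∑ i, ‖(Δ t i i)⁻¹‖) (Set.Icc (0:ℝ) 1) := by
      apply continuousOn_finset_sum
      intro i _
      exact (continuous_norm.comp_continuousOn (((hΔcont i i)).inv₀ (fun t ht => hΔne t ht i)))
    obtain ⟨C, hC⟩ := isCompact_Icc.exists_bound_of_continuousOn hgc
    refine ⟨max C 0, le_max_right _ _, fun t ht i => ?_⟩
    have h1 : ‖(Δ t i i)⁻¹‖ ≤ ∑ k, ‖(Δ t k k)⁻¹‖ :=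
      Finset.single_le_sum (f := fun k => ‖(Δ t k k)⁻¹‖)
        (fun k _ => norm_nonneg _) (Finset.mem_univ i)
    have h2 := hC t ht
    rw [Real.norm_eq_abs] at h2
    have h3 : (∑ k, ‖(Δ t k k)⁻¹‖) ≤ C := (le_abs_self _).trans h2
    exact h1.trans (h3.trans (le_max_left _ _))
  -- bound K on ∑ |B t i j|
  obtain ⟨K, hK0, hK⟩ : ∃ K : ℝ, 0 ≤ K ∧ ∀ t ∈ Set.Icc (0:ℝ) 1,
      (∑ i, ∑ j, ‖B t i j‖) ≤ K := by
    have hBcont : ∀ i j, ContinuousOn (fun t => B t i j) (Set.Icc (0:ℝ) 1) := by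
      intro i j
      have h1 : ContinuousOn (fun t => ((R' t)ᴴ * (S t)ᴴ) i j) (Set.Icc (0:ℝ) 1) := by
        simp only [Matrix.mul_apply, Matrix.conjTranspose_apply]
        apply continuousOn_finset_sum
        intro k _
        exact ((Complex.continuous_conj.comp_continuousOn (hR'cont k i))).mul
          ((Complex.continuous_conj.comp_continuousOn (hScont j k)))
      have h2 : ContinuousOn (fun t => ((R t)ᴴ * (P₁⁻¹ * P₀) * (S t)ᴴ) i j) (Set.Icc (0:ℝ) 1) := by
        simp only [Matrix.mul_apply, Matrix.conjTranspose_apply]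
        apply continuousOn_finset_sum
        intro k _
        apply ContinuousOn.mul
        · apply continuousOn_finset_sum
          intro l _
          exact ((Complex.continuous_conj.comp_continuousOn (hRcont l i))).mul continuousOn_const
        · exact Complex.continuous_conj.comp_continuousOn (hScont j k)
      simpa only [hBdef, Matrix.sub_apply, Pi.sub_def] using h1.sub h2
    have hgc : ContinuousOn (fun t => ∑ i, ∑ j, ‖B t i j‖) (Set.Icc (0:ℝ) 1) := by
      apply continuousOn_finset_sum; intro i _
      apply continuousOn_finset_sum; intro j _
      exact continuous_norm.comp_continuousOn (hBcont i j)
    obtain ⟨C, hC⟩ := isCompact_Icc.exists_bound_of_continuousOn hgc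
    refine ⟨max C 0, le_max_right _ _, fun t ht => ?_⟩
    have h2 := hC t ht
    rw [Real.norm_eq_abs] at h2
    exact (le_abs_self _).trans (h2.trans (le_max_left _ _))
  -- global constants
  set cS : ℝ := ∑ k, ∑ i, ‖S 1 k i‖ with hcSdef
  set c₀ : ℝ := ∑ j, ∑ i, Complex.normSq (((R 0)ᴴ * 𝓗 0) i j) with hc₀def
  set cE : ℝ := cS * Real.sqrt c₀ * Real.exp K with hcEdef
  have hcS0 : 0 ≤ cS := Finset.sum_nonneg fun k _ => Finset.sum_nonneg fun i _ => norm_nonneg _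
  have hc₀0 : 0 ≤ c₀ := Finset.sum_nonneg fun j _ => Finset.sum_nonneg fun i _ => Complex.normSq_nonneg _
  have hcE0 : 0 ≤ cE := by positivity
  -- THE COLUMN ESTIMATE
  have hcol : ∀ s : ℂ, ∀ i j : Fin d,
      ‖(𝓗 1 * Ψ s 1) i j‖ ≤ cE * Real.exp (M * |s.re|) := by
    intro s i j
    obtain ⟨u', hu'cont, hu'deriv, heq⟩ := hΨsol s (EuclideanSpace.single j 1)
    set u : ℝ → Fin d → ℂ := fun t k => (𝓗 t * Ψ s t) k j with hudef
    -- componentwise identifications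
    have hxcomp : ∀ (t : ℝ) (k : Fin d),
        (Matrix.toEuclideanLin (Ψ s t) (EuclideanSpace.single j 1)) k = Ψ s t k j := by
      intro t k
      show ((Ψ s t) *ᵥ (EuclideanSpace.single j 1)) k = Ψ s t k j
      simp [Matrix.mulVec, dotProduct, EuclideanSpace.single_apply]
    have hxfun : ∀ t : ℝ, (fun k => (Matrix.toEuclideanLin (Ψ s t) (EuclideanSpace.single j 1)) k)
        = fun k => Ψ s t k j := fun t => funext (hxcomp t)
    have hucomp : ∀ (t : ℝ) (k : Fin d),
        (Matrix.toEuclideanLin (𝓗 t) (Matrix.toEuclideanLin (Ψ s t) (EuclideanSpace.single j 1))) k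
          = u t k := by
      intro t k
      show ((𝓗 t) *ᵥ (fun l => (Matrix.toEuclideanLin (Ψ s t) (EuclideanSpace.single j 1)) l)) k = u t k
      rw [hxfun t]
      simp [Matrix.mulVec, dotProduct, Matrix.mul_apply, hudef]
    -- componentwise derivative of u
    have hcomp : ∀ t ∈ Set.Icc (0:ℝ) 1, ∀ k : Fin d,
        HasDerivWithinAt (fun τ => u τ k) (u' t k) (Set.Icc 0 1) t := by
      intro t ht k
      have h0 := ((EuclideanSpace.proj k).restrictScalars ℝ).hasFDerivAt.comp_hasDerivWithinAt t
        (hu'deriv t ht)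
      exact h0.congr (fun τ _ => (hucomp τ k).symm) ((hucomp t k).symm)
    -- the equation, in plain vector form
    have hveq : ∀ t ∈ Set.Icc (0:ℝ) 1,
        s • (fun k => Ψ s t k j) = P₁ *ᵥ (fun l => u' t l) + P₀ *ᵥ u t := by
      intro t ht
      funext k
      have h0 := congrArg (fun v => v k) (heq t ht)
      beta_reduce at h0
      have hL : (s • (fun ζ => Matrix.toEuclideanLin (Ψ s ζ) (EuclideanSpace.single j 1)) t) k
          = s * Ψ s t k j := by
        show s * (Matrix.toEuclideanLin (Ψ s t) (EuclideanSpace.single j 1)) k = _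
        rw [hxcomp t k]
      have hR1 : (Matrix.toEuclideanLin P₁ (u' t)
          + Matrix.toEuclideanLin P₀ (Matrix.toEuclideanLin (𝓗 t)
            ((fun ζ => Matrix.toEuclideanLin (Ψ s ζ) (EuclideanSpace.single j 1)) t))) k
          = (P₁ *ᵥ (fun l => u' t l)) k + (P₀ *ᵥ u t) k := by
        show (P₁ *ᵥ (fun l => u' t l)) k + (P₀ *ᵥ (fun l =>
          (Matrix.toEuclideanLin (𝓗 t) (Matrix.toEuclideanLin (Ψ s t) (EuclideanSpace.single j 1))) l)) k = _
        rw [show (fun l => (Matrix.toEuclideanLin (𝓗 t)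
          (Matrix.toEuclideanLin (Ψ s t) (EuclideanSpace.single j 1))) l) = u t from funext (hucomp t)]
      rw [hL, hR1] at h0
      exact h0
    -- x in terms of u
    have hxu : ∀ t ∈ Set.Icc (0:ℝ) 1, (fun k => Ψ s t k j) = (𝓗 t)⁻¹ *ᵥ u t := by
      intro t ht
      have h1 : u t = 𝓗 t *ᵥ (fun k => Ψ s t k j) := by
        funext k
        simp [hudef, Matrix.mulVec, dotProduct, Matrix.mul_apply]
      rw [h1, Matrix.mulVec_mulVec, Matrix.nonsing_inv_mul _ (hHdet t ht), Matrix.one_mulVec]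
    -- solve for u'
    have hu'eq : ∀ t ∈ Set.Icc (0:ℝ) 1,
        (fun l => u' t l) = s • ((P₁⁻¹ * (𝓗 t)⁻¹) *ᵥ u t) - (P₁⁻¹ * P₀) *ᵥ u t := by
      intro t ht
      have h1 := congrArg (fun z => P₁⁻¹ *ᵥ z) (hveq t ht)
      simp only [Matrix.mulVec_add, Matrix.mulVec_smul, Matrix.mulVec_mulVec] at h1
      rw [Matrix.nonsing_inv_mul _ hP₁det, Matrix.one_mulVec, hxu t ht,
        Matrix.mulVec_mulVec] at h1
      exact eq_sub_of_add_eq h1.symm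
    -- w and its derivative
    set w : ℝ → Fin d → ℂ := fun t => (R t)ᴴ *ᵥ u t with hwdef
    set w' : ℝ → Fin d → ℂ :=
      fun t => (R' t)ᴴ *ᵥ u t + (R t)ᴴ *ᵥ (fun l => u' t l) with hw'def
    have hu_w : ∀ t ∈ Set.Icc (0:ℝ) 1, u t = (S t)ᴴ *ᵥ w t := by
      intro t ht
      rw [hwdef]
      rw [Matrix.mulVec_mulVec, (hRSH t ht).2, Matrix.one_mulVec]
    have hwode : ∀ t ∈ Set.Icc (0:ℝ) 1,
        w' t = s • ((Δ t)⁻¹ *ᵥ w t) + B t *ᵥ w t := by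
      intro t ht
      rw [hw'def]
      show (R' t)ᴴ *ᵥ u t + (R t)ᴴ *ᵥ (fun l => u' t l) = _
      rw [hu'eq t ht, Matrix.mulVec_sub, Matrix.mulVec_smul]
      rw [hu_w t ht]
      simp only [Matrix.mulVec_mulVec]
      simp only [← Matrix.mul_assoc]
      have key2 : (R t)ᴴ * P₁⁻¹ * (𝓗 t)⁻¹ * (S t)ᴴ = (Δ t)⁻¹ := by
        rw [← key t ht]
        noncomm_ring
      have hBleft : B t = (R' t)ᴴ * (S t)ᴴ - (R t)ᴴ * P₁⁻¹ * P₀ * (S t)ᴴ := by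
        rw [hBdef]
        noncomm_ring
      rw [key2, hBleft, Matrix.sub_mulVec]
      abel
    have hwderiv : ∀ t ∈ Set.Icc (0:ℝ) 1, ∀ k : Fin d,
        HasDerivWithinAt (fun τ => w τ k) (w' t k) (Set.Icc 0 1) t := by
      intro t ht k
      have hsum : HasDerivWithinAt (fun τ => ∑ l, star (R τ l k) * u τ l)
          (∑ l, (star (R' t l k) * u t l + star (R t l k) * u' t l)) (Set.Icc 0 1) t :=
        HasDerivWithinAt.fun_sum (fun l _ => ((hR'deriv t ht l k).star.mul (hcomp t ht l)))
      have heqf : (fun τ => w τ k) = fun τ => ∑ l, star (R τ l k) * u τ l := by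
        funext τ
        simp [hwdef, Matrix.mulVec, dotProduct, Matrix.conjTranspose_apply]
      have heqv : w' t k = ∑ l, (star (R' t l k) * u t l + star (R t l k) * u' t l) := by
        rw [hw'def]
        show ((R' t)ᴴ *ᵥ u t) k + ((R t)ᴴ *ᵥ (fun l => u' t l)) k = _
        simp [Matrix.mulVec, dotProduct, Matrix.conjTranspose_apply,
          Finset.sum_add_distrib]
      rw [heqf, heqv]
      exact hsum
    -- the energy
    set En : ℝ → ℝ := fun t => ∑ k, Complex.normSq (w t k) with hEndef
    set En' : ℝ → ℝ := fun t => ∑ k, 2 * ((starRingEnd ℂ) (w t k) * w' t k).re with hEn'def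
    have hEnn : ∀ t, 0 ≤ En t :=
      fun t => Finset.sum_nonneg fun k _ => Complex.normSq_nonneg _
    have hwabs : ∀ (t : ℝ) (k : Fin d), ‖w t k‖ ≤ Real.sqrt (En t) := by
      intro t k
      rw [Complex.norm_def]
      apply Real.sqrt_le_sqrt
      exact Finset.single_le_sum (f := fun l => Complex.normSq (w t l))
        (fun l _ => Complex.normSq_nonneg _) (Finset.mem_univ k)
    have hEderiv : ∀ t ∈ Set.Icc (0:ℝ) 1, HasDerivWithinAt En (En' t) (Set.Icc 0 1) t := by
      intro t ht
      rw [hEndef]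
      have : En' t = ∑ k, 2 * ((starRingEnd ℂ) (w t k) * w' t k).re := by rw [hEn'def]
      rw [this]
      apply HasDerivWithinAt.fun_sum
      intro k _
      have hre : HasDerivWithinAt (fun τ => (w τ k).re) ((w' t k).re) (Set.Icc 0 1) t := by
        exact Complex.reCLM.hasFDerivAt.comp_hasDerivWithinAt t (hwderiv t ht k)
      have him : HasDerivWithinAt (fun τ => (w τ k).im) ((w' t k).im) (Set.Icc 0 1) t := by
        exact Complex.imCLM.hasFDerivAt.comp_hasDerivWithinAt t (hwderiv t ht k)
      have h2 := (hre.mul hre).add (him.mul him)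
      have heqf : (fun τ => Complex.normSq (w τ k))
          = fun τ => (w τ k).re * (w τ k).re + (w τ k).im * (w τ k).im := by
        funext τ
        rw [Complex.normSq_apply]
      have heqv : 2 * ((starRingEnd ℂ) (w t k) * w' t k).re
          = ((w' t k).re * (w t k).re + (w t k).re * (w' t k).re)
            + ((w' t k).im * (w t k).im + (w t k).im * (w' t k).im) := by
        simp [Complex.mul_re, Complex.conj_re, Complex.conj_im]
        ring
      rw [heqf, heqv]
      exact h2
    -- differential inequality
    have hE'le : ∀ t ∈ Set.Icc (0:ℝ) 1, En' t ≤ (2*M*|s.re| + 2*K) * En t := by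
      intro t ht
      have hterm : ∀ k : Fin d, 2 * ((starRingEnd ℂ) (w t k) * w' t k).re
          ≤ 2*M*|s.re| * Complex.normSq (w t k)
            + 2 * (∑ l, ‖B t k l‖) * En t := by
        intro k
        have hw'k : w' t k = s * ((Δ t k k)⁻¹ * w t k) + (B t *ᵥ w t) k := by
          rw [hwode t ht, hΔinveq t ht]
          show s * ((Matrix.diagonal (fun l => (Δ t l l)⁻¹) *ᵥ w t) k) + (B t *ᵥ w t) k = _
          rw [Matrix.mulVec_diagonal]
        rw [hw'k, mul_add (starRingEnd ℂ (w t k)), Complex.add_re, mul_add]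
        apply add_le_add
        · have hδim : ((Δ t k k)⁻¹).im = 0 := by
            rw [Complex.inv_im, hΔreal t ht k]
            simp
          have hrw : (starRingEnd ℂ) (w t k) * (s * ((Δ t k k)⁻¹ * w t k))
              = s * (Δ t k k)⁻¹ * (Complex.normSq (w t k) : ℂ) := by
            rw [Complex.normSq_eq_conj_mul_self]
            ring
          have hre2 : ((starRingEnd ℂ) (w t k) * (s * ((Δ t k k)⁻¹ * w t k))).re
              = s.re * ((Δ t k k)⁻¹).re * Complex.normSq (w t k) := by
            rw [hrw]
            simp [Complex.mul_re, Complex.mul_im, hδim]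
          rw [hre2]
          have h1 : s.re * ((Δ t k k)⁻¹).re ≤ M * |s.re| := by
            calc s.re * ((Δ t k k)⁻¹).re ≤ |s.re * ((Δ t k k)⁻¹).re| := le_abs_self _
              _ = |s.re| * |((Δ t k k)⁻¹).re| := abs_mul _ _
              _ ≤ |s.re| * M := mul_le_mul_of_nonneg_left
                  ((Complex.abs_re_le_norm _).trans (hM t ht k)) (abs_nonneg _)
              _ = M * |s.re| := mul_comm _ _
          have h2 := mul_le_mul_of_nonneg_right h1 (Complex.normSq_nonneg (w t k))
          nlinarith [Complex.normSq_nonneg (w t k)]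
        · have h2 : ((starRingEnd ℂ) (w t k) * (B t *ᵥ w t) k).re
              ≤ (∑ l, ‖B t k l‖) * En t := by
            have hmv : ‖(B t *ᵥ w t) k‖ ≤ ∑ l, ‖B t k l‖ * ‖w t l‖ := by
              show ‖∑ l, B t k l * w t l‖ ≤ _
              refine (norm_sum_le _ _).trans (le_of_eq ?_)
              simp [norm_mul]
            calc ((starRingEnd ℂ) (w t k) * (B t *ᵥ w t) k).re
                ≤ ‖(starRingEnd ℂ) (w t k) * (B t *ᵥ w t) k‖ := Complex.re_le_norm _
              _ = ‖w t k‖ * ‖(B t *ᵥ w t) k‖ := by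
                  rw [norm_mul, Complex.norm_conj]
              _ ≤ ‖w t k‖ * ∑ l, ‖B t k l‖ * ‖w t l‖ :=
                  mul_le_mul_of_nonneg_left hmv (norm_nonneg _)
              _ = ∑ l, ‖B t k l‖ * (‖w t k‖ * ‖w t l‖) := by
                  rw [Finset.mul_sum]
                  congr 1
                  funext l
                  ring
              _ ≤ ∑ l, ‖B t k l‖ * En t := by
                  apply Finset.sum_le_sum
                  intro l _
                  apply mul_le_mul_of_nonneg_left _ (norm_nonneg _)
                  have := mul_le_mul (hwabs t k) (hwabs t l) (norm_nonneg _) (Real.sqrt_nonneg _)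
                  rwa [Real.mul_self_sqrt (hEnn t)] at this
              _ = (∑ l, ‖B t k l‖) * En t := (Finset.sum_mul _ _ _).symm
          linarith
      calc En' t = ∑ k, 2 * ((starRingEnd ℂ) (w t k) * w' t k).re := by rw [hEn'def]
        _ ≤ ∑ k, (2*M*|s.re| * Complex.normSq (w t k)
            + 2 * (∑ l, ‖B t k l‖) * En t) := Finset.sum_le_sum fun k _ => hterm k
        _ = 2*M*|s.re| * En t + 2 * (∑ k, ∑ l, ‖B t k l‖) * En t := by
            rw [Finset.sum_add_distrib]
            congr 1
            · exact (Finset.mul_sum _ _ _).symm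
            · rw [mul_assoc, Finset.sum_mul, Finset.mul_sum]
              exact Finset.sum_congr rfl fun k _ => by ring
        _ ≤ (2*M*|s.re| + 2*K) * En t := by
            have hBK := hK t ht
            have hE0 := hEnn t
            nlinarith
    -- Gronwall
    have hgron := my_gronwall En En' (2*M*|s.re| + 2*K) hEderiv hE'le
    -- initial bound
    have hE0c : En 0 ≤ c₀ := by
      have hw0 : ∀ i' : Fin d, w 0 i' = ((R 0)ᴴ * 𝓗 0) i' j := by
        intro i'
        have hu0 : ∀ k, u 0 k = 𝓗 0 k j := by
          intro k
          rw [hudef]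
          show (𝓗 0 * Ψ s 0) k j = 𝓗 0 k j
          rw [hΨ0 s, mul_one]
        show ((R 0)ᴴ *ᵥ u 0) i' = _
        simp only [Matrix.mulVec, dotProduct, Matrix.conjTranspose_apply, Matrix.mul_apply]
        apply Finset.sum_congr rfl
        intro l _
        rw [hu0 l]
      simp only [hEndef, hc₀def]
      have : (∑ k, Complex.normSq (w 0 k)) = ∑ k, Complex.normSq (((R 0)ᴴ * 𝓗 0) k j) := by
        apply Finset.sum_congr rfl
        intro k _
        rw [hw0 k]
      rw [this]
      exact Finset.single_le_sum (f := fun jj => ∑ k, Complex.normSq (((R 0)ᴴ * 𝓗 0) k jj))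
        (fun jj _ => Finset.sum_nonneg fun k _ => Complex.normSq_nonneg _) (Finset.mem_univ j)
    -- final estimate
    have hsqrtE1 : Real.sqrt (En 1) ≤ Real.sqrt c₀ * (Real.exp K * Real.exp (M * |s.re|)) := by
      have h1 : En 1 ≤ c₀ * Real.exp (2*M*|s.re| + 2*K) := by
        refine hgron.trans ?_
        exact mul_le_mul_of_nonneg_right hE0c (Real.exp_nonneg _)
      calc Real.sqrt (En 1) ≤ Real.sqrt (c₀ * Real.exp (2*M*|s.re| + 2*K)) := Real.sqrt_le_sqrt h1
        _ = Real.sqrt c₀ * Real.sqrt (Real.exp (2*M*|s.re| + 2*K)) := Real.sqrt_mul hc₀0 _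
        _ = Real.sqrt c₀ * (Real.exp K * Real.exp (M * |s.re|)) := by
            rw [← Real.exp_half, ← Real.exp_add]
            congr 1
            ring
    have hentry1 : (𝓗 1 * Ψ s 1) i j = u 1 i := by rw [hudef]
    rw [hentry1]
    have hu1w : u 1 = (S 1)ᴴ *ᵥ w 1 := hu_w 1 h1I
    calc ‖u 1 i‖
        = ‖∑ l, star (S 1 l i) * w 1 l‖ := by
          rw [hu1w]
          congr 1
      _ ≤ ∑ l, ‖S 1 l i‖ * ‖w 1 l‖ := by
          refine (norm_sum_le _ _).trans (le_of_eq ?_)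
          apply Finset.sum_congr rfl
          intro l _
          rw [norm_mul]
          congr 1
          exact Complex.norm_conj _
      _ ≤ ∑ l, ‖S 1 l i‖ * Real.sqrt (En 1) := by
          apply Finset.sum_le_sum
          intro l _
          exact mul_le_mul_of_nonneg_left (hwabs 1 l) (norm_nonneg _)
      _ = (∑ l, ‖S 1 l i‖) * Real.sqrt (En 1) := (Finset.sum_mul _ _ _).symm
      _ ≤ cS * (Real.sqrt c₀ * (Real.exp K * Real.exp (M * |s.re|))) := by
          apply mul_le_mul
          · rw [hcSdef]
            apply Finset.sum_le_sum
            intro l _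
            exact Finset.single_le_sum (f := fun ii => ‖S 1 l ii‖)
              (fun ii _ => norm_nonneg _) (Finset.mem_univ i)
          · exact hsqrtE1
          · exact Real.sqrt_nonneg _
          · exact hcS0
      _ = cE * Real.exp (M * |s.re|) := by
          rw [hcEdef]
          ring
  -- assemble the determinant bound
  obtain ⟨cW, hcWdef⟩ : ∃ x : ℝ, x = ∑ i, ∑ k, ‖W₁ i k‖ := ⟨_, rfl⟩
  obtain ⟨cZ, hcZdef⟩ : ∃ x : ℝ, x = ∑ i, ∑ j, ‖(W₀ * 𝓗 0) i j‖ := ⟨_, rfl⟩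
  have hcW0 : 0 ≤ cW := hcWdef ▸ Finset.sum_nonneg fun i _ => Finset.sum_nonneg fun k _ => norm_nonneg _
  have hcZ0 : 0 ≤ cZ := hcZdef ▸ Finset.sum_nonneg fun i _ => Finset.sum_nonneg fun k _ => norm_nonneg _
  have hbase : (0:ℝ) ≤ cW * cE + cZ := add_nonneg (mul_nonneg hcW0 hcE0) hcZ0
  refine ⟨d.factorial * (cW * cE + cZ) ^ d, d * M,
    mul_nonneg (Nat.cast_nonneg _) (pow_nonneg hbase _),
    mul_nonneg (Nat.cast_nonneg _) hM0, fun s => ?_⟩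
  have hexp1 : (1:ℝ) ≤ Real.exp (M * |s.re|) := by
    rw [Real.one_le_exp_iff]
    positivity
  have hentry : ∀ i j, ‖(W₁ * 𝓗 1 * Ψ s 1 + W₀ * 𝓗 0) i j‖
      ≤ (cW * cE + cZ) * Real.exp (M * |s.re|) := by
    intro i j
    have hW1 : (W₁ * 𝓗 1 * Ψ s 1) i j = ∑ k, W₁ i k * (𝓗 1 * Ψ s 1) k j := by
      rw [mul_assoc, Matrix.mul_apply]
    rw [Matrix.add_apply, hW1]
    calc ‖(∑ k, W₁ i k * (𝓗 1 * Ψ s 1) k j) + (W₀ * 𝓗 0) i j‖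
        ≤ ‖∑ k, W₁ i k * (𝓗 1 * Ψ s 1) k j‖ + ‖(W₀ * 𝓗 0) i j‖ :=
          norm_add_le _ _
      _ ≤ (∑ k, ‖W₁ i k‖ * (cE * Real.exp (M * |s.re|))) + cZ := by
          apply add_le_add
          · refine (norm_sum_le _ _).trans (Finset.sum_le_sum fun k _ => ?_)
            rw [norm_mul]
            exact mul_le_mul_of_nonneg_left (hcol s k j) (norm_nonneg _)
          · calc ‖(W₀ * 𝓗 0) i j‖ ≤ ∑ jj, ‖(W₀ * 𝓗 0) i jj‖ :=
                  Finset.single_le_sum (fun k _ => norm_nonneg _) (Finset.mem_univ j)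
              _ ≤ cZ := hcZdef ▸ Finset.single_le_sum (f := fun ii => ∑ jj, ‖(W₀ * 𝓗 0) ii jj‖)
                  (fun k _ => Finset.sum_nonneg fun _ _ => norm_nonneg _) (Finset.mem_univ i)
      _ ≤ (cW * cE + cZ) * Real.exp (M * |s.re|) := by
          rw [← Finset.sum_mul, add_mul]
          apply add_le_add
          · rw [← mul_assoc]
            refine mul_le_mul_of_nonneg_right
              (mul_le_mul_of_nonneg_right ?_ hcE0) (Real.exp_nonneg _)
            exact hcWdef ▸ Finset.single_le_sum (f := fun ii => ∑ k, ‖W₁ ii k‖)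
                (fun k _ => Finset.sum_nonneg fun _ _ => norm_nonneg _) (Finset.mem_univ i)
          · nlinarith [hcZ0]
  have := my_det_bound d _ ((cW * cE + cZ) * Real.exp (M * |s.re|)) hentry
  refine this.trans (le_of_eq ?_)
  rw [mul_pow, ← Real.exp_nat_mul,
    show (d:ℝ) * (M * |s.re|) = (d:ℝ) * M * |s.re| from (mul_assoc _ _ _).symm]
  ring
end

section
/- Let Λ : [0,1] → ℂ^{d×d} be continuous with Λ(ζ) diagonal with positive real diagonal entries for every ζ ∈ [0,1], and for real s < 0 set F_s(ζ) := s·∫₀^ζ Λ(τ)⁻¹ dτ (a diagonal matrix with negative real entries for ζ > 0). Let s < 0 and v ∈ ℂ^d. Then I − exp(2F_s(1)) is invertible, and, setting g₀ := exp(F_s(1))·(I − exp(2F_s(1)))⁻¹·v, g(ζ) := 2s·exp(F_s(1) − F_s(ζ))·g₀, and x(ζ) := exp(F_s(ζ) − F_s(1))·g₀ − (2s)⁻¹·g(ζ), the map x : [0,1] → ℂ^d is continuously differentiable and satisfies Λ(ζ)·x'(ζ) = s·x(ζ) + g(ζ) for all ζ ∈ [0,1], x(0) = v, and x(1) = 0.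 (Explicit solution of the resolvent equation in the proof of Lemma 5.5.) -/
open Matrix Set

/-- Explicit solution of the resolvent equation `Λ x' = s x + g` with
`x(0) = v` and `x(1) = 0`, used in the proof of Lemma 5.5. Here
`F_s(ζ) = s·∫₀^ζ Λ(τ)⁻¹ dτ`, `g₀ = e^{F_s(1)}(I − e^{2F_s(1)})⁻¹ v`,
`g(ζ) = 2s·e^{F_s(1) − F_s(ζ)}·g₀` and `x(ζ) = e^{F_s(ζ) − F_s(1)}·g₀ − (2s)⁻¹·g(ζ)`. -/
theorem explicit_resolvent_solution
    (d : ℕ) (hd : 1 ≤ d)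
    (Λ : ℝ → Matrix (Fin d) (Fin d) ℂ)
    (hΛcont : ContinuousOn Λ (Set.Icc 0 1))
    (hΛdiag : ∀ ζ ∈ Set.Icc (0:ℝ) 1, (Λ ζ).IsDiag)
    (hΛpos : ∀ ζ ∈ Set.Icc (0:ℝ) 1, ∀ i, 0 < (Λ ζ i i).re ∧ (Λ ζ i i).im = 0)
    (s : ℝ) (hs : s < 0)
    (v : EuclideanSpace ℂ (Fin d))
    (F : ℝ → Matrix (Fin d) (Fin d) ℂ)
    (hF : ∀ ζ : ℝ, F ζ = (s : ℂ) • Matrix.of fun i j => ∫ τ in (0:ℝ)..ζ, ((Λ τ)⁻¹ i j))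
    (g₀ : EuclideanSpace ℂ (Fin d))
    (hg₀ : g₀ = Matrix.toEuclideanLin
      (NormedSpace.exp (F 1) * (1 - NormedSpace.exp ((2:ℂ) • F 1))⁻¹) v)
    (g x : ℝ → EuclideanSpace ℂ (Fin d))
    (hg : ∀ ζ : ℝ, g ζ = ((2 * s : ℝ) : ℂ) •
      Matrix.toEuclideanLin (NormedSpace.exp (F 1 - F ζ)) g₀)
    (hx : ∀ ζ : ℝ, x ζ = Matrix.toEuclideanLin (NormedSpace.exp (F ζ - F 1)) g₀
      - ((2 * (s : ℂ))⁻¹) • g ζ) :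
    IsUnit (1 - NormedSpace.exp ((2:ℂ) • F 1)) ∧
    ∃ x' : ℝ → EuclideanSpace ℂ (Fin d),
      ContinuousOn x' (Set.Icc 0 1) ∧
      (∀ ζ ∈ Set.Icc (0:ℝ) 1, HasDerivWithinAt x (x' ζ) (Set.Icc 0 1) ζ) ∧
      (∀ ζ ∈ Set.Icc (0:ℝ) 1,
        Matrix.toEuclideanLin (Λ ζ) (x' ζ) = (s : ℂ) • x ζ + g ζ) ∧
      x 0 = v ∧ x 1 = 0 := by
  classical
  have hs0 : s ≠ 0 := ne_of_lt hs
  have hsC : (s : ℂ) ≠ 0 := by exact_mod_cast hs0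
  have h2s : (2 * (s : ℂ)) ≠ 0 := by
    simp [hsC]
  -- projection onto [0,1]
  set p : ℝ → ℝ := fun τ => max 0 (min 1 τ) with hp
  have hpmem : ∀ τ, p τ ∈ Set.Icc (0:ℝ) 1 :=
    fun τ => ⟨le_max_left _ _, max_le (by norm_num) (min_le_left _ _)⟩
  have hpid : ∀ τ ∈ Set.Icc (0:ℝ) 1, p τ = τ := by
    rintro τ ⟨h0, h1⟩
    simp [hp, min_eq_right h1, max_eq_right h0]
  have hpcont : Continuous p := continuous_const.max (continuous_const.min continuous_id)
  -- diagonal entries are positive reals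
  have hdiagentry : ∀ τ ∈ Set.Icc (0:ℝ) 1, ∀ i, Λ τ i i = (((Λ τ i i).re : ℝ) : ℂ) := by
    intro τ hτ i
    exact Complex.ext (by simp) (by simp [(hΛpos τ hτ i).2])
  set ρ : Fin d → ℝ → ℝ := fun i τ => ((Λ (p τ) i i).re)⁻¹ with hρdef
  have hρpos : ∀ i τ, 0 < ρ i τ := fun i τ => inv_pos.mpr (hΛpos _ (hpmem τ) i).1
  have hρcont : ∀ i, Continuous (ρ i) := by
    intro i
    have h1 : Continuous fun τ => Λ (p τ) := hΛcont.comp_continuous hpcont hpmem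
    exact (Complex.continuous_re.comp (h1.matrix_elem i i)).inv₀
      fun τ => (hΛpos _ (hpmem τ) i).1.ne'
  set ψ : Fin d → ℝ → ℝ := fun i ζ => s * ∫ τ in (0:ℝ)..ζ, ρ i τ with hψdef
  have hψd : ∀ i ζ, HasDerivAt (ψ i) (s * ρ i ζ) ζ := fun i ζ =>
    (((hρcont i).integral_hasStrictDerivAt 0 ζ).hasDerivAt).const_mul s
  have hψcont : ∀ i, Continuous (ψ i) := fun i =>
    continuous_iff_continuousAt.mpr fun ζ => (hψd i ζ).continuousAt
  have hψ0 : ∀ i, ψ i 0 = 0 := by intro i; simp [hψdef]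
  have hψ1neg : ∀ i, ψ i 1 < 0 := by
    intro i
    have hint : 0 < ∫ τ in (0:ℝ)..1, ρ i τ :=
      intervalIntegral.intervalIntegral_pos_of_pos
        ((hρcont i).intervalIntegrable 0 1) (hρpos i) one_pos
    exact mul_neg_of_neg_of_pos hs hint
  -- Λ and its inverse are diagonal
  have hΛdiagonal : ∀ τ ∈ Set.Icc (0:ℝ) 1,
      Λ τ = Matrix.diagonal (fun i => (((ρ i τ)⁻¹ : ℝ) : ℂ)) := by
    intro τ hτ
    ext i j
    by_cases h : i = j
    · subst h
      rw [Matrix.diagonal_apply_eq]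
      rw [hρdef]
      simp only [hpid τ hτ, inv_inv]
      exact hdiagentry τ hτ i
    · rw [Matrix.diagonal_apply_ne _ h]
      exact hΛdiag τ hτ h
  have hΛinv : ∀ τ ∈ Set.Icc (0:ℝ) 1,
      (Λ τ)⁻¹ = Matrix.diagonal (fun i => ((ρ i τ : ℝ) : ℂ)) := by
    intro τ hτ
    rw [hΛdiagonal τ hτ]
    apply Matrix.inv_eq_right_inv
    rw [Matrix.diagonal_mul_diagonal, ← Matrix.diagonal_one]
    apply congrArg Matrix.diagonal
    funext i
    rw [← Complex.ofReal_mul, inv_mul_cancel₀ (hρpos i τ).ne', Complex.ofReal_one]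
  -- F is diagonal
  have hFdiag : ∀ ζ ∈ Set.Icc (0:ℝ) 1,
      F ζ = Matrix.diagonal (fun i => ((ψ i ζ : ℝ) : ℂ)) := by
    intro ζ hζ
    rw [hF]
    ext i j
    rw [Matrix.smul_apply, Matrix.of_apply]
    have hmem : ∀ τ ∈ Set.uIcc (0:ℝ) ζ, τ ∈ Set.Icc (0:ℝ) 1 := by
      intro τ hτ
      rw [Set.uIcc_of_le hζ.1] at hτ
      exact ⟨hτ.1, hτ.2.trans hζ.2⟩
    by_cases h : i = j
    · subst h
      have hcong : (∫ τ in (0:ℝ)..ζ, (Λ τ)⁻¹ i i)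
          = ∫ τ in (0:ℝ)..ζ, ((ρ i τ : ℝ) : ℂ) := by
        apply intervalIntegral.integral_congr
        intro τ hτ
        show (Λ τ)⁻¹ i i = _
        rw [hΛinv τ (hmem τ hτ), Matrix.diagonal_apply_eq]
      rw [hcong, intervalIntegral.integral_ofReal, Matrix.diagonal_apply_eq]
      show (s:ℂ) • (((∫ τ in (0:ℝ)..ζ, ρ i τ : ℝ)) : ℂ)
        = ((s * ∫ τ in (0:ℝ)..ζ, ρ i τ : ℝ) : ℂ)
      push_cast
      rw [smul_eq_mul]
    · have hcong : (∫ τ in (0:ℝ)..ζ, (Λ τ)⁻¹ i j)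
          = ∫ τ in (0:ℝ)..ζ, (0 : ℂ) := by
        apply intervalIntegral.integral_congr
        intro τ hτ
        show (Λ τ)⁻¹ i j = _
        rw [hΛinv τ (hmem τ hτ), Matrix.diagonal_apply_ne _ h]
      rw [hcong]
      simp [Matrix.diagonal_apply_ne _ h]
  have hF1 : F 1 = Matrix.diagonal (fun i => ((ψ i 1 : ℝ) : ℂ)) :=
    hFdiag 1 ⟨zero_le_one, le_refl 1⟩
  -- exp of diagonal matrices
  have hexpdiag : ∀ u : Fin d → ℂ, NormedSpace.exp (Matrix.diagonal u)
      = Matrix.diagonal (fun i => Complex.exp (u i)) := by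
    intro u
    rw [Matrix.exp_diagonal]
    congr 1
    funext i
    rw [Pi.exp_def, ← Complex.exp_eq_exp_ℂ]
  -- nonvanishing of 1 - exp(2 ψ i 1)
  have hu : ∀ i, (1 : ℂ) - Complex.exp ((2:ℂ) * ((ψ i 1 : ℝ) : ℂ)) ≠ 0 := by
    intro i
    have h2 : (2 : ℂ) * ((ψ i 1 : ℝ) : ℂ) = ((2 * ψ i 1 : ℝ) : ℂ) := by push_cast; ring
    rw [h2, ← Complex.ofReal_exp, ← Complex.ofReal_one, ← Complex.ofReal_sub,
      Complex.ofReal_ne_zero]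
    have hlt : Real.exp (2 * ψ i 1) < 1 :=
      Real.exp_lt_one_iff.mpr (by nlinarith [hψ1neg i])
    exact sub_ne_zero.mpr (ne_of_gt hlt)
  -- structure of 1 - exp(2 • F 1)
  have h2F1 : (2:ℂ) • F 1 = Matrix.diagonal (fun i => (2:ℂ) * ((ψ i 1 : ℝ) : ℂ)) := by
    rw [hF1, ← Matrix.diagonal_smul]
    apply congrArg Matrix.diagonal
    funext i
    simp
  have hsub1 : (1 : Matrix (Fin d) (Fin d) ℂ) - NormedSpace.exp ((2:ℂ) • F 1)
      = Matrix.diagonal (fun i => 1 - Complex.exp ((2:ℂ) * ((ψ i 1 : ℝ) : ℂ))) := by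
    rw [h2F1, hexpdiag, ← Matrix.diagonal_one, Matrix.diagonal_sub]
  have hisunit : IsUnit (1 - NormedSpace.exp ((2:ℂ) • F 1)) := by
    rw [hsub1, Matrix.isUnit_iff_isUnit_det, Matrix.det_diagonal, isUnit_iff_ne_zero]
    exact Finset.prod_ne_zero_iff.mpr fun i _ => hu i
  have hinvdiag : (1 - NormedSpace.exp ((2:ℂ) • F 1))⁻¹
      = Matrix.diagonal (fun i => (1 - Complex.exp ((2:ℂ) * ((ψ i 1 : ℝ) : ℂ)))⁻¹) := by
    apply Matrix.inv_eq_right_inv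
    rw [hsub1, Matrix.diagonal_mul_diagonal, ← Matrix.diagonal_one]
    apply congrArg Matrix.diagonal
    funext i
    exact mul_inv_cancel₀ (hu i)
  -- componentwise description of g₀
  have hg₀i : ∀ i, g₀ i = Complex.exp ((ψ i 1 : ℝ) : ℂ) *
      ((1 - Complex.exp ((2:ℂ) * ((ψ i 1 : ℝ) : ℂ)))⁻¹ * v i) := by
    intro i
    rw [hg₀, hinvdiag, hF1, hexpdiag, Matrix.diagonal_mul_diagonal]
    simp [Matrix.toEuclideanLin_apply,
      Matrix.mulVec_diagonal, mul_assoc]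
  -- abbreviations
  set e1 : Fin d → ℝ → ℂ :=
    fun i ζ => Complex.exp (((ψ i ζ : ℝ) : ℂ) - ((ψ i 1 : ℝ) : ℂ)) with he1
  set e2 : Fin d → ℝ → ℂ :=
    fun i ζ => Complex.exp (((ψ i 1 : ℝ) : ℂ) - ((ψ i ζ : ℝ) : ℂ)) with he2
  -- componentwise description of g
  have hgi : ∀ ζ ∈ Set.Icc (0:ℝ) 1, ∀ i,
      g ζ i = ((2 * s : ℝ) : ℂ) * (e2 i ζ * g₀ i) := by
    intro ζ hζ i
    rw [hg]
    have hdd : F 1 - F ζ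
        = Matrix.diagonal (fun i => ((ψ i 1 : ℝ) : ℂ) - ((ψ i ζ : ℝ) : ℂ)) := by
      rw [hF1, hFdiag ζ hζ, Matrix.diagonal_sub]
    rw [hdd, hexpdiag]
    simp [Matrix.toEuclideanLin_apply,
      Matrix.mulVec_diagonal, he2, hψdef, hρdef, mul_assoc]
  -- componentwise description of x
  have hxi : ∀ ζ ∈ Set.Icc (0:ℝ) 1, ∀ i,
      x ζ i = (e1 i ζ - e2 i ζ) * g₀ i := by
    intro ζ hζ i
    have hdd : F ζ - F 1
        = Matrix.diagonal (fun i => ((ψ i ζ : ℝ) : ℂ) - ((ψ i 1 : ℝ) : ℂ)) := by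
      rw [hFdiag ζ hζ, hF1, Matrix.diagonal_sub]
    have hcomp : x ζ i = Matrix.toEuclideanLin (NormedSpace.exp (F ζ - F 1)) g₀ i
        - (2 * (s:ℂ))⁻¹ * g ζ i := by
      rw [hx]; rfl
    rw [hcomp, hdd, hexpdiag, hgi ζ hζ i]
    have hc : ((2 * s : ℝ) : ℂ) = 2 * (s : ℂ) := by push_cast; ring
    rw [hc, inv_mul_cancel_left₀ h2s]
    simp only [Matrix.toEuclideanLin_apply,
      Matrix.mulVec_diagonal, he1, he2]
    ring_nf
  -- derivative of components
  have hYd : ∀ ζ, ∀ i, HasDerivAt (fun t => (e1 i t - e2 i t) * g₀ i)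
      (((s * ρ i ζ : ℝ) : ℂ) * (e1 i ζ + e2 i ζ) * g₀ i) ζ := by
    intro ζ i
    have h1 : HasDerivAt (fun t => ((ψ i t : ℝ) : ℂ)) ((s * ρ i ζ : ℝ) : ℂ) ζ :=
      (hψd i ζ).ofReal_comp
    have h2 : HasDerivAt (fun t => ((ψ i t : ℝ) : ℂ) - ((ψ i 1 : ℝ) : ℂ))
        ((s * ρ i ζ : ℝ) : ℂ) ζ := h1.sub_const _
    have h3 : HasDerivAt (fun t => ((ψ i 1 : ℝ) : ℂ) - ((ψ i t : ℝ) : ℂ))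
        (-((s * ρ i ζ : ℝ) : ℂ)) ζ := h1.const_sub _
    have h6 := ((h2.cexp.sub h3.cexp).mul_const (g₀ i))
    convert h6 using 1
    · rfl
    · rfl
    simp only [he1, he2]
    ring
  -- the candidate derivative
  set x' : ℝ → EuclideanSpace ℂ (Fin d) := fun ζ =>
    (EuclideanSpace.equiv (Fin d) ℂ).symm
      (fun i => ((s * ρ i ζ : ℝ) : ℂ) * (e1 i ζ + e2 i ζ) * g₀ i) with hx'def
  have hx'apply : ∀ ζ i, x' ζ i = ((s * ρ i ζ : ℝ) : ℂ) * (e1 i ζ + e2 i ζ) * g₀ i :=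
    fun ζ i => rfl
  have hx'cont : Continuous x' := by
    apply Continuous.comp (EuclideanSpace.equiv (Fin d) ℂ).symm.continuous
    apply continuous_pi
    intro i
    have hc1 : Continuous fun ζ => ((s * ρ i ζ : ℝ) : ℂ) :=
      Complex.continuous_ofReal.comp (continuous_const.mul (hρcont i))
    have hc2 : Continuous (e1 i) := by
      rw [he1]
      exact Complex.continuous_exp.comp
        ((Complex.continuous_ofReal.comp (hψcont i)).sub continuous_const)
    have hc3 : Continuous (e2 i) := by
      rw [he2]
      exact Complex.continuous_exp.comp
        (continuous_const.sub (Complex.continuous_ofReal.comp (hψcont i)))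
    exact (hc1.mul (hc2.add hc3)).mul continuous_const
  -- derivative of x
  have hXd : ∀ ζ ∈ Set.Icc (0:ℝ) 1, HasDerivWithinAt x (x' ζ) (Set.Icc 0 1) ζ := by
    intro ζ hζ
    have hpi : HasDerivAt (fun t => fun i => (e1 i t - e2 i t) * g₀ i)
        (fun i => ((s * ρ i ζ : ℝ) : ℂ) * (e1 i ζ + e2 i ζ) * g₀ i) ζ :=
      hasDerivAt_pi.mpr fun i => hYd ζ i
    have hcomp := HasFDerivAt.comp_hasDerivAt
      (f := fun t => fun i => (e1 i t - e2 i t) * g₀ i)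
      (l := (((EuclideanSpace.equiv (Fin d) ℂ).symm.toContinuousLinearMap.restrictScalars ℝ) :
        (Fin d → ℂ) → EuclideanSpace ℂ (Fin d)))
      ζ (((EuclideanSpace.equiv (Fin d) ℂ).symm.toContinuousLinearMap.restrictScalars ℝ).hasFDerivAt) hpi
    have hEq : ∀ y ∈ Set.Icc (0:ℝ) 1,
        x y = (((EuclideanSpace.equiv (Fin d) ℂ).symm.toContinuousLinearMap.restrictScalars ℝ) ∘
          fun t => fun i => (e1 i t - e2 i t) * g₀ i) y := by
      intro y hy
      apply PiLp.ext
      intro i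
      rw [hxi y hy i]
      rfl
    have hval : x' ζ = ((EuclideanSpace.equiv (Fin d) ℂ).symm.toContinuousLinearMap.restrictScalars ℝ)
        (fun i => ((s * ρ i ζ : ℝ) : ℂ) * (e1 i ζ + e2 i ζ) * g₀ i) := rfl
    rw [hval]
    exact (hcomp.hasDerivWithinAt).congr hEq (hEq ζ hζ)
  -- the ODE
  have hODE : ∀ ζ ∈ Set.Icc (0:ℝ) 1,
      Matrix.toEuclideanLin (Λ ζ) (x' ζ) = (s : ℂ) • x ζ + g ζ := by
    intro ζ hζ
    apply PiLp.ext
    intro i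
    have hL : Matrix.toEuclideanLin (Λ ζ) (x' ζ) i
        = (((ρ i ζ)⁻¹ : ℝ) : ℂ) * x' ζ i := by
      rw [hΛdiagonal ζ hζ]
      simp [Matrix.toEuclideanLin_apply, Matrix.mulVec_diagonal]
    have hR : ((s : ℂ) • x ζ + g ζ) i = (s : ℂ) * x ζ i + g ζ i := rfl
    rw [hL, hR, hx'apply, hxi ζ hζ i, hgi ζ hζ i]
    have hρ0 : (ρ i ζ : ℂ) ≠ 0 := by
      exact_mod_cast (hρpos i ζ).ne'
    push_cast
    field_simp
    ring
  -- boundary values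
  have hx0 : x 0 = v := by
    apply PiLp.ext
    intro i
    rw [hxi 0 ⟨le_refl 0, zero_le_one⟩ i, hg₀i i]
    have h0 : ((ψ i 0 : ℝ) : ℂ) = 0 := by rw [hψ0 i]; norm_num
    rw [he1, he2]
    simp only [h0, zero_sub, sub_zero]
    have key : (Complex.exp (-((ψ i 1 : ℝ) : ℂ)) - Complex.exp ((ψ i 1 : ℝ) : ℂ))
        * Complex.exp ((ψ i 1 : ℝ) : ℂ)
        = 1 - Complex.exp ((2:ℂ) * ((ψ i 1 : ℝ) : ℂ)) := by
      rw [sub_mul, ← Complex.exp_add, ← Complex.exp_add, neg_add_cancel,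
        Complex.exp_zero, two_mul]
    calc (Complex.exp (-((ψ i 1 : ℝ) : ℂ)) - Complex.exp ((ψ i 1 : ℝ) : ℂ))
          * (Complex.exp ((ψ i 1 : ℝ) : ℂ)
            * ((1 - Complex.exp ((2:ℂ) * ((ψ i 1 : ℝ) : ℂ)))⁻¹ * v i))
        = ((Complex.exp (-((ψ i 1 : ℝ) : ℂ)) - Complex.exp ((ψ i 1 : ℝ) : ℂ))
            * Complex.exp ((ψ i 1 : ℝ) : ℂ))
          * ((1 - Complex.exp ((2:ℂ) * ((ψ i 1 : ℝ) : ℂ)))⁻¹ * v i) := by ring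
      _ = v i := by
          rw [key, ← mul_assoc, mul_inv_cancel₀ (hu i), one_mul]
  have hx1 : x 1 = 0 := by
    apply PiLp.ext
    intro i
    rw [hxi 1 ⟨zero_le_one, le_refl 1⟩ i]
    rw [he1, he2]
    simp
  exact ⟨hisunit, x', hx'cont.continuousOn, hXd, hODE, hx0, hx1⟩
end

section
/- Let n ≥ 1, k ≥ 2, and let N, L ∈ ℂ^{n×n}, r ∈ ℝ, and m, M, R > 0 satisfy: L is Hermitian with ⟨v, Lv⟩ ≥ m·‖v‖² for all v ∈ ℂ^n and operator norm ‖L‖ ≤ M; |r| ≤ R; N^k = 0; and N*L + L·N = −I + r·L. Then ‖N‖ ≤ Σ_{l=1}^{k−1} (1 + R·M)·M^{l−1}/m^l, where ‖·‖ denotes the operator norm with respect to the Euclidean norm. (Final nilpotent-part norm bound derived from the Lyapunov equation in the proof of Proposition 3.5.) -/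
open Matrix
open scoped ComplexOrder

open ContinuousLinearMap
open scoped InnerProductSpace

lemma nilpotent_norm_bound_real_step (m M RM ej x y z : ℝ) (hm : 0 < m) (hM : 0 ≤ M)
    (hy : 0 ≤ y) (h0 : 0 < x) (hz : z ≤ ej * x)
    (hkey : m * x ^ 2 ≤ (1 + RM) * (x * y) + M * (z * y)) :
    x * m ≤ (1 + RM + M * ej) * y := by
  have hA : z * y ≤ (ej * x) * y := mul_le_mul_of_nonneg_right hz hy
  have hB : (x * m) * x ≤ ((1 + RM + M * ej) * y) * x := by
    nlinarith [mul_le_mul_of_nonneg_left hA hM]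
  exact le_of_mul_le_mul_right hB h0

set_option maxHeartbeats 1000000 in
/-- Nilpotent-part norm bound from the Lyapunov equation
`N*L + LN = −I + rL` (proof of Proposition 3.5): if `L` is Hermitian with
`m‖v‖² ≤ ⟨v, Lv⟩`, `‖L‖ ≤ M`, `|r| ≤ R` and `Nᵏ = 0` (`k ≥ 2`), then
`‖N‖ ≤ Σ_{l=1}^{k−1} (1 + R·M)·M^{l−1}/mˡ` (operator norms w.r.t. the Euclidean norm). -/
theorem nilpotent_norm_bound
    (n : ℕ) (hn : 1 ≤ n) (k : ℕ) (hk : 2 ≤ k)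
    (N L : Matrix (Fin n) (Fin n) ℂ) (r : ℝ) (m M R : ℝ)
    (hm : 0 < m) (hM : 0 < M) (hR : 0 < R)
    (hLherm : L.IsHermitian)
    (hLlower : ∀ v : EuclideanSpace ℂ (Fin n),
      (↑(m * ‖v‖ ^ 2) : ℂ) ≤ dotProduct (star v) (L.mulVec v))
    (hLnorm : ‖Matrix.toEuclideanCLM (𝕜 := ℂ) L‖ ≤ M)
    (hr : |r| ≤ R)
    (hNnilp : N ^ k = 0)
    (hLyap : Nᴴ * L + L * N = -1 + (r : ℂ) • L) :
    ‖Matrix.toEuclideanCLM (𝕜 := ℂ) N‖ ≤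
      ∑ l ∈ Finset.Icc 1 (k - 1), (1 + R * M) * M ^ (l - 1) / m ^ l := by
  set T := Matrix.toEuclideanCLM (𝕜 := ℂ) N with hT
  set S := Matrix.toEuclideanCLM (𝕜 := ℂ) L with hS
  have hTk : T ^ k = 0 := by rw [hT, ← map_pow, hNnilp, map_zero]
  have hSsa : star S = S := by rw [hS, ← map_star]; exact congrArg _ hLherm
  have hLyap' : star T * S + S * T = -1 + (r : ℂ) • S := by
    have h := congrArg (Matrix.toEuclideanCLM (𝕜 := ℂ)) hLyap
    rw [← Matrix.star_eq_conjTranspose] at h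
    simpa only [map_add, _root_.map_mul, map_neg, _root_.map_one, _root_.map_smul, map_star,
      hT, hS] using h
  have hlow : ∀ v : EuclideanSpace ℂ (Fin n), (↑(m * ‖v‖ ^ 2) : ℂ) ≤ ⟪v, S v⟫_ℂ :=
    fun v => by
      rw [EuclideanSpace.inner_eq_star_dotProduct, dotProduct_comm]; exact hLlower v
  -- pointwise identity from the Lyapunov equation
  have keyid : ∀ w : EuclideanSpace ℂ (Fin n),
      ⟪T w, S (T w)⟫_ℂ = -⟪T w, w⟫_ℂ + (r : ℂ) * ⟪T w, S w⟫_ℂ - ⟪T (T w), S w⟫_ℂ := by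
    intro w
    have h := congrFun (congrArg DFunLike.coe hLyap') w
    simp only [ContinuousLinearMap.add_apply, ContinuousLinearMap.mul_apply,
      ContinuousLinearMap.neg_apply, ContinuousLinearMap.one_apply,
      ContinuousLinearMap.smul_apply] at h
    have h2 := congrArg (fun x => ⟪T w, x⟫_ℂ) h
    simp only [inner_add_right, inner_neg_right, inner_smul_right] at h2
    rw [ContinuousLinearMap.star_eq_adjoint, ContinuousLinearMap.adjoint_inner_right] at h2
    have : (starRingEnd ℂ) (r : ℂ) = (r : ℂ) := by simp
    linear_combination h2 - ⟪T (T w), S w⟫_ℂ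
  -- the key inequality
  have key : ∀ w : EuclideanSpace ℂ (Fin n),
      m * ‖T w‖ ^ 2 ≤ (1 + R * M) * (‖T w‖ * ‖w‖) + M * (‖T (T w)‖ * ‖w‖) := by
    intro w
    have hre : m * ‖T w‖ ^ 2 ≤ (⟪T w, S (T w)⟫_ℂ).re := by
      have := hlow (T w)
      rw [Complex.le_def] at this
      simpa only [Complex.ofReal_re] using this.1
    rw [keyid w] at hre
    have h1 : |(⟪T w, w⟫_ℂ).re| ≤ ‖T w‖ * ‖w‖ :=
      (Complex.abs_re_le_norm _).trans (norm_inner_le_norm _ _)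
    have hSw : ‖S w‖ ≤ M * ‖w‖ :=
      (S.le_opNorm w).trans (mul_le_mul_of_nonneg_right hLnorm (norm_nonneg w))
    have h2 : |(⟪T w, S w⟫_ℂ).re| ≤ ‖T w‖ * (M * ‖w‖) :=
      (Complex.abs_re_le_norm _).trans ((norm_inner_le_norm _ _).trans
        (mul_le_mul_of_nonneg_left hSw (norm_nonneg _)))
    have h3 : |(⟪T (T w), S w⟫_ℂ).re| ≤ ‖T (T w)‖ * (M * ‖w‖) :=
      (Complex.abs_re_le_norm _).trans ((norm_inner_le_norm _ _).trans
        (mul_le_mul_of_nonneg_left hSw (norm_nonneg _)))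
    have hre' : (-⟪T w, w⟫_ℂ + (r : ℂ) * ⟪T w, S w⟫_ℂ - ⟪T (T w), S w⟫_ℂ).re
        = -(⟪T w, w⟫_ℂ).re + r * (⟪T w, S w⟫_ℂ).re - (⟪T (T w), S w⟫_ℂ).re := by
      simp [Complex.add_re, Complex.sub_re, Complex.neg_re, Complex.mul_re]
    rw [hre'] at hre
    rw [abs_le] at h1 h2 h3
    have hrr : r * (⟪T w, S w⟫_ℂ).re ≤ R * (‖T w‖ * (M * ‖w‖)) := by
      calc r * (⟪T w, S w⟫_ℂ).re ≤ |r * (⟪T w, S w⟫_ℂ).re| := le_abs_self _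
        _ = |r| * |(⟪T w, S w⟫_ℂ).re| := abs_mul _ _
        _ ≤ R * (‖T w‖ * (M * ‖w‖)) := by
            apply mul_le_mul hr (abs_le.mpr h2) (abs_nonneg _) hR.le
    nlinarith [hre, h1.1, h1.2, h3.1, h3.2, hrr]
  -- downward induction
  have hind : ∀ j : ℕ, ∀ w : EuclideanSpace ℂ (Fin n), (T ^ (j + 1)) w = 0 →
      ‖T w‖ ≤ (∑ i ∈ Finset.range j, (1 + R * M) * M ^ i / m ^ (i + 1)) * ‖w‖ := by
    intro j
    induction j with
    | zero =>
      intro w h0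
      rw [pow_one] at h0
      simp [h0]
    | succ j ih =>
      intro w hw
      have hej : (0 : ℝ) ≤ ∑ i ∈ Finset.range j, (1 + R * M) * M ^ i / m ^ (i + 1) := by
        refine Finset.sum_nonneg fun i _ => div_nonneg ?_ (pow_nonneg hm.le _)
        have : (0:ℝ) ≤ R * M := mul_nonneg hR.le hM.le
        positivity
      have hej1 : (0 : ℝ) ≤ ∑ i ∈ Finset.range (j+1), (1 + R * M) * M ^ i / m ^ (i + 1) := by
        refine Finset.sum_nonneg fun i _ => div_nonneg ?_ (pow_nonneg hm.le _)
        have : (0:ℝ) ≤ R * M := mul_nonneg hR.le hM.le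
        positivity
      have h2 : (T ^ (j + 1)) (T w) = 0 := by
        have : T ^ (j + 1 + 1) = T ^ (j + 1) * T := by rw [pow_succ]
        rw [this] at hw
        exact hw
      have hTTw := ih (T w) h2
      rcases eq_or_lt_of_le (norm_nonneg (T w)) with h0 | h0
      · rw [← h0]
        exact mul_nonneg hej1 (norm_nonneg w)
      · have erec : ∑ i ∈ Finset.range (j+1), (1 + R * M) * M ^ i / m ^ (i + 1)
            = ((1 + R * M) + M * ∑ i ∈ Finset.range j, (1 + R * M) * M ^ i / m ^ (i + 1)) / m := by
          rw [Finset.sum_range_succ', add_div, Finset.mul_sum, Finset.sum_div, add_comm]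
          congr 1
          · simp
          · refine Finset.sum_congr rfl fun i _ => ?_
            field_simp
            ring
        set ej : ℝ := ∑ i ∈ Finset.range j, (1 + R * M) * M ^ i / m ^ (i + 1) with hejdef
        rw [erec, div_mul_eq_mul_div, le_div_iff₀ hm]
        exact nilpotent_norm_bound_real_step m M (R * M) ej ‖T w‖ ‖w‖ ‖T (T w)‖
          hm hM.le (norm_nonneg w) h0 hTTw (key w)
  have hk1 : k - 1 + 1 = k := by omega
  have final : ∀ v : EuclideanSpace ℂ (Fin n),
      ‖T v‖ ≤ (∑ i ∈ Finset.range (k-1), (1 + R * M) * M ^ i / m ^ (i + 1)) * ‖v‖ := by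
    intro v
    refine hind (k-1) v ?_
    rw [hk1, hTk]
    rfl
  have hsum : ∑ l ∈ Finset.Icc 1 (k - 1), (1 + R * M) * M ^ (l - 1) / m ^ l
      = ∑ i ∈ Finset.range (k-1), (1 + R * M) * M ^ i / m ^ (i + 1) := by
    rw [← Finset.Ico_add_one_right_eq_Icc, hk1, Finset.sum_Ico_eq_sum_range]
    refine Finset.sum_congr rfl fun i _ => ?_
    have h1i : 1 + i - 1 = i := by omega
    rw [h1i, add_comm 1 i]
  rw [hsum]
  refine ContinuousLinearMap.opNorm_le_bound _ ?_ final
  refine Finset.sum_nonneg fun i _ => div_nonneg ?_ (pow_nonneg hm.le _)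
  have : (0:ℝ) ≤ R * M := mul_nonneg hR.le hM.le
  positivity
end

section
/- Let X be a complex separable Hilbert space and (Eₙ)_{n∈ℕ} a sequence of bounded projections on X (Eₙ² = Eₙ) with Eₙ∘Eₘ = 0 for n ≠ m, and let 0 < m₁ ≤ m₂ be constants with m₁·‖x‖² ≤ Σₙ ‖Eₙx‖² ≤ m₂·‖x‖² for all x ∈ X. Let (Tₙ)_{n∈ℕ} be bounded linear operators on X with Tₙ = Eₙ∘Tₙ∘Eₙ for every n and c := supₙ ‖Tₙ‖ < ∞. Then for every x ∈ X the series Σₙ TₙEₙx converges in X and ‖Σₙ TₙEₙx‖² ≤ (m₂/m₁)·c²·‖x‖². (Core estimate in the proof of Lemma 3.2.) -/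
/-- **core estimate in the proof of Lemma 3.2.** Let `(Eₙ)` be mutually
disjoint bounded projections on a separable complex Hilbert space whose ranges form a Riesz
basis of subspaces (`m₁‖x‖² ≤ Σₙ‖Eₙx‖² ≤ m₂‖x‖²`), and let `(Tₙ)` be bounded operators with
`Tₙ = Eₙ∘Tₙ∘Eₙ` and `‖Tₙ‖ ≤ c`. Then `Σₙ TₙEₙx` converges and
`‖Σₙ TₙEₙx‖² ≤ (m₂/m₁)·c²·‖x‖²`. -/
theorem riesz_basis_diagonal_operator_bound
    {X : Type*} [NormedAddCommGroup X] [InnerProductSpace ℂ X] [CompleteSpace X]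
    [TopologicalSpace.SeparableSpace X]
    (E : ℕ → X →L[ℂ] X)
    (hproj : ∀ n, (E n).comp (E n) = E n)
    (hdisj : ∀ n m, n ≠ m → (E n).comp (E m) = 0)
    (m₁ m₂ : ℝ) (hm₁ : 0 < m₁) (hm₁₂ : m₁ ≤ m₂)
    (hsum : ∀ x : X, Summable (fun n => ‖E n x‖ ^ 2))
    (hlower : ∀ x : X, m₁ * ‖x‖ ^ 2 ≤ ∑' n, ‖E n x‖ ^ 2)
    (hupper : ∀ x : X, ∑' n, ‖E n x‖ ^ 2 ≤ m₂ * ‖x‖ ^ 2)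
    (T : ℕ → X →L[ℂ] X)
    (hT : ∀ n, T n = (E n).comp ((T n).comp (E n)))
    (c : ℝ) (hc : ∀ n, ‖T n‖ ≤ c) :
    ∀ x : X, Summable (fun n => T n (E n x)) ∧
      ‖∑' n, T n (E n x)‖ ^ 2 ≤ (m₂ / m₁) * c ^ 2 * ‖x‖ ^ 2 := by
  intro x
  have hc0 : 0 ≤ c := (norm_nonneg (T 0)).trans (hc 0)
  set y : ℕ → X := fun n => T n (E n x) with hy
  -- E m (y n) = if m = n then y n else 0
  have hEy : ∀ m n, E m (y n) = if m = n then y n else 0 := by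
    intro m n
    have h1 : y n = E n (T n (E n (E n x))) := by
      have := congrArg (fun f : X →L[ℂ] X => f (E n x)) (hT n)
      simpa using this
    by_cases h : m = n
    · rw [if_pos h, h1, h]
      have := congrArg (fun f : X →L[ℂ] X => f (T n (E n (E n x)))) (hproj n)
      simpa using this
    · rw [if_neg h, h1]
      have := congrArg (fun f : X →L[ℂ] X => f (T n (E n (E n x)))) (hdisj m n h)
      simpa using this
  -- pointwise norm bound
  have hyb : ∀ n, ‖y n‖ ^ 2 ≤ c ^ 2 * ‖E n x‖ ^ 2 := by
    intro n
    have h1 : ‖y n‖ ≤ c * ‖E n x‖ :=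
      ((T n).le_opNorm (E n x)).trans
        (mul_le_mul_of_nonneg_right (hc n) (norm_nonneg _))
    calc ‖y n‖ ^ 2 ≤ (c * ‖E n x‖) ^ 2 := by
          exact pow_le_pow_left₀ (norm_nonneg _) h1 2
      _ = c ^ 2 * ‖E n x‖ ^ 2 := by ring
  have hgsum : Summable (fun n => ‖y n‖ ^ 2) := by
    apply Summable.of_nonneg_of_le (fun n => by positivity) hyb
    exact (hsum x).mul_left (c ^ 2)
  -- finite-sum estimate : m₁ ‖∑_{n∈s} y n‖² ≤ ∑_{n∈s} ‖y n‖²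
  have hfin : ∀ s : Finset ℕ, m₁ * ‖∑ n ∈ s, y n‖ ^ 2 ≤ ∑ n ∈ s, ‖y n‖ ^ 2 := by
    intro s
    have hES : ∀ m, E m (∑ n ∈ s, y n) = if m ∈ s then y m else 0 := by
      intro m
      rw [map_sum]
      rw [Finset.sum_congr rfl (fun n _ => hEy m n)]
      exact Finset.sum_ite_eq s m y
    have h1 : (∑' m, ‖E m (∑ n ∈ s, y n)‖ ^ 2) = ∑ m ∈ s, ‖y m‖ ^ 2 := by
      have h2 : (∑' m, ‖E m (∑ n ∈ s, y n)‖ ^ 2)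
          = ∑ m ∈ s, ‖E m (∑ n ∈ s, y n)‖ ^ 2 := by
        apply tsum_eq_sum
        intro m hm
        rw [hES m, if_neg hm]
        simp
      rw [h2]
      exact Finset.sum_congr rfl (fun m hm => by rw [hES m, if_pos hm])
    have := hlower (∑ n ∈ s, y n)
    rw [h1] at this
    exact this
  -- summability of y
  have hSy : Summable y := by
    rw [summable_iff_vanishing_norm]
    intro ε hε
    obtain ⟨s, hs⟩ := summable_iff_vanishing_norm.1 hgsum (m₁ * ε ^ 2)
      (by positivity)
    refine ⟨s, fun t ht => ?_⟩
    have h1 := hfin t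
    have h2 : (∑ n ∈ t, ‖y n‖ ^ 2) < m₁ * ε ^ 2 := by
      have := hs t ht
      calc (∑ n ∈ t, ‖y n‖ ^ 2) ≤ ‖∑ n ∈ t, ‖y n‖ ^ 2‖ := le_abs_self _
        _ < m₁ * ε ^ 2 := this
    have h3 : m₁ * ‖∑ n ∈ t, y n‖ ^ 2 < m₁ * ε ^ 2 := h1.trans_lt h2
    have h4 : ‖∑ n ∈ t, y n‖ ^ 2 < ε ^ 2 := lt_of_mul_lt_mul_left h3 hm₁.le
    exact lt_of_pow_lt_pow_left₀ 2 hε.le h4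
  refine ⟨hSy, ?_⟩
  set S : X := ∑' n, y n with hS
  have hES : ∀ m, E m S = y m := by
    intro m
    rw [hS, (E m).map_tsum hSy]
    rw [tsum_congr (fun n => hEy m n)]
    have := tsum_eq_single (L := SummationFilter.unconditional ℕ) (f := fun n => if m = n then y n else 0) m
      (fun n hn => if_neg (fun h => hn h.symm))
    simpa using this
  have key : m₁ * ‖S‖ ^ 2 ≤ m₂ * c ^ 2 * ‖x‖ ^ 2 := by
    have h1 := hlower S
    have h2 : (∑' m, ‖E m S‖ ^ 2) = ∑' m, ‖y m‖ ^ 2 :=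
      tsum_congr (fun m => by rw [hES m])
    have h3 : (∑' m, ‖y m‖ ^ 2) ≤ ∑' m, c ^ 2 * ‖E m x‖ ^ 2 :=
      Summable.tsum_le_tsum hyb hgsum ((hsum x).mul_left _)
    have h4 : (∑' m, c ^ 2 * ‖E m x‖ ^ 2) = c ^ 2 * ∑' m, ‖E m x‖ ^ 2 :=
      tsum_mul_left
    have h5 : c ^ 2 * (∑' m, ‖E m x‖ ^ 2) ≤ c ^ 2 * (m₂ * ‖x‖ ^ 2) :=
      mul_le_mul_of_nonneg_left (hupper x) (by positivity)
    calc m₁ * ‖S‖ ^ 2 ≤ ∑' m, ‖E m S‖ ^ 2 := h1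
      _ = ∑' m, ‖y m‖ ^ 2 := h2
      _ ≤ c ^ 2 * (m₂ * ‖x‖ ^ 2) := by rw [← h4] at h5; exact h3.trans h5
      _ = m₂ * c ^ 2 * ‖x‖ ^ 2 := by ring
  have : ‖S‖ ^ 2 ≤ (m₂ / m₁) * c ^ 2 * ‖x‖ ^ 2 := by
    rw [div_mul_eq_mul_div, div_mul_eq_mul_div, le_div_iff₀ hm₁]
    calc ‖S‖ ^ 2 * m₁ = m₁ * ‖S‖ ^ 2 := by ring
      _ ≤ m₂ * c ^ 2 * ‖x‖ ^ 2 := key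
  exact this
end

section
/- Let X be a complex separable Hilbert space, (Eₙ)_{n∈ℕ} bounded projections on X with Eₙ∘Eₘ = 0 for n ≠ m and constants 0 < m₁ ≤ m₂ with m₁·‖x‖² ≤ Σₙ ‖Eₙx‖² ≤ m₂·‖x‖² for all x ∈ X. Let (sₙ)_{n∈ℕ} ⊂ ℂ, M₀ > 0, K ∈ ℕ, and let (Nₙ) be bounded operators on X with Nₙ = Eₙ∘Nₙ∘Eₙ, ‖Nₙ‖ ≤ M₀ and Nₙ^K = 0 for all n. Then for every s ∈ ℂ with δ := infₙ |s − sₙ| > M₀, the series R(s)x := Σₙ Σ_{j=0}^{K−1} (s − sₙ)^{−(j+1)}·Nₙ^j·Eₙ·x (with Nₙ⁰Eₙ := Eₙ) converges for every x ∈ X and defines a bounded operator with ‖R(s)‖ ≤ (m₂/m₁)^{1/2}/(δ − M₀). (Explicit form of the resolvent bound of Lemma 3.2 for a discrete Riesz spectral operator A = Σₙ (sₙ + Nₙ)Eₙ, whose resolvent at s is R(s).) -/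
/-- **explicit resolvent bound of Lemma 3.2.** For a discrete Riesz spectral
operator `A = Σₙ (sₙ + Nₙ)Eₙ` with spectral projections `Eₙ` whose ranges form a Riesz basis
of subspaces, uniformly bounded uniformly nilpotent parts `Nₙ`, and `δ = infₙ|s − sₙ| > M₀`,
the series `R(s)x = Σₙ Σ_{j=0}^{K−1} (s−sₙ)^{−(j+1)}·Nₙʲ·Eₙ·x` converges for every `x` and
`‖R(s)x‖ ≤ √(m₂/m₁)/(δ − M₀)·‖x‖`. -/
theorem discrete_riesz_spectral_resolvent_bound
    {X : Type*} [NormedAddCommGroup X] [InnerProductSpace ℂ X] [CompleteSpace X]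
    [TopologicalSpace.SeparableSpace X]
    (E : ℕ → X →L[ℂ] X)
    (hproj : ∀ n, (E n).comp (E n) = E n)
    (hdisj : ∀ n m, n ≠ m → (E n).comp (E m) = 0)
    (m₁ m₂ : ℝ) (hm₁ : 0 < m₁) (hm₁₂ : m₁ ≤ m₂)
    (hsum : ∀ x : X, Summable (fun n => ‖E n x‖ ^ 2))
    (hlower : ∀ x : X, m₁ * ‖x‖ ^ 2 ≤ ∑' n, ‖E n x‖ ^ 2)
    (hupper : ∀ x : X, ∑' n, ‖E n x‖ ^ 2 ≤ m₂ * ‖x‖ ^ 2)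
    (s' : ℕ → ℂ) (M₀ : ℝ) (hM₀ : 0 < M₀) (K : ℕ)
    (N : ℕ → X →L[ℂ] X)
    (hN : ∀ n, N n = (E n).comp ((N n).comp (E n)))
    (hNbound : ∀ n, ‖N n‖ ≤ M₀)
    (hNnilp : ∀ n, (N n) ^ K = 0)
    (s : ℂ) (δ : ℝ)
    (hδ : δ = ⨅ n, ‖s - s' n‖)
    (hδM₀ : M₀ < δ) :
    ∀ x : X,
      Summable (fun n => ∑ j ∈ Finset.range K,
        ((s - s' n)⁻¹ ^ (j + 1)) • ((N n) ^ j) (E n x)) ∧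
      ‖∑' n, ∑ j ∈ Finset.range K,
          ((s - s' n)⁻¹ ^ (j + 1)) • ((N n) ^ j) (E n x)‖ ≤
        Real.sqrt (m₂ / m₁) / (δ - M₀) * ‖x‖ := by
  intro x
  have hδpos : 0 < δ := hM₀.trans hδM₀
  have hδM : 0 < δ - M₀ := sub_pos.2 hδM₀
  set c : ℝ := (δ - M₀)⁻¹ with hc
  have hcpos : 0 < c := inv_pos.2 hδM
  have hδle : ∀ n, δ ≤ ‖s - s' n‖ := by
    intro n
    rw [hδ]
    exact ciInf_le ⟨0, by rintro z ⟨n, rfl⟩; exact norm_nonneg _⟩ n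
  set y : ℕ → X := fun n => ∑ j ∈ Finset.range K,
      ((s - s' n)⁻¹ ^ (j + 1)) • ((N n) ^ j) (E n x) with hy
  -- basic projection identities applied to vectors
  have hEE : ∀ n (v : X), E n (E n v) = E n v := by
    intro n v
    simpa using DFunLike.congr_fun (hproj n) v
  have hEE0 : ∀ m n, m ≠ n → ∀ v : X, E m (E n v) = 0 := by
    intro m n h v
    simpa using DFunLike.congr_fun (hdisj m n h) v
  have hNapp : ∀ n (w : X), N n w = E n (N n (E n w)) := by
    intro n w
    conv_lhs => rw [hN n]
    simp
  have haux : ∀ m n j (v : X),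
      E m ((N n ^ j) (E n v)) = if m = n then (N n ^ j) (E n v) else 0 := by
    intro m n j v
    cases j with
    | zero =>
      simp only [pow_zero, ContinuousLinearMap.one_apply]
      by_cases h : m = n
      · subst h; simp [hEE]
      · simp [h, hEE0 m n h]
    | succ j =>
      rw [pow_succ', ContinuousLinearMap.mul_apply]
      rw [hNapp n ((N n ^ j) (E n v))]
      by_cases h : m = n
      · subst h; simp [hEE]
      · simp [h, hEE0 m n h]
  have hEy : ∀ m n, E m (y n) = if m = n then y n else 0 := by
    intro m n
    rw [hy]
    simp only [map_sum, map_smul, haux]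
    by_cases h : m = n <;> simp [h]
  -- norm bound on y n
  have hNpow : ∀ n j (v : X), ‖((N n) ^ j) v‖ ≤ M₀ ^ j * ‖v‖ := by
    intro n j
    induction j with
    | zero => intro v; simp
    | succ j ih =>
      intro v
      rw [pow_succ', ContinuousLinearMap.mul_apply]
      calc ‖N n ((N n ^ j) v)‖ ≤ ‖N n‖ * ‖(N n ^ j) v‖ := (N n).le_opNorm _
        _ ≤ M₀ * (M₀ ^ j * ‖v‖) :=
            mul_le_mul (hNbound n) (ih v) (norm_nonneg _) hM₀.le
        _ = M₀ ^ (j + 1) * ‖v‖ := by ring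
  have hr0 : (0:ℝ) ≤ M₀ / δ := by positivity
  have hr1 : M₀ / δ < 1 := (div_lt_one hδpos).2 hδM₀
  have hgeomsum : ∑ j ∈ Finset.range K, δ⁻¹ ^ (j + 1) * M₀ ^ j ≤ c := by
    have h1 : ∑ j ∈ Finset.range K, δ⁻¹ ^ (j + 1) * M₀ ^ j
        = δ⁻¹ * ∑ j ∈ Finset.range K, (M₀ / δ) ^ j := by
      rw [Finset.mul_sum]
      refine Finset.sum_congr rfl fun j _ => ?_
      rw [div_pow, pow_succ']
      field_simp
      rw [← mul_pow, one_div, inv_mul_cancel₀ hδpos.ne', one_pow]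
    have h2 : ∑ j ∈ Finset.range K, (M₀ / δ) ^ j ≤ (1 - M₀ / δ)⁻¹ := by
      calc ∑ j ∈ Finset.range K, (M₀ / δ) ^ j
          ≤ ∑' j, (M₀ / δ) ^ j :=
            Summable.sum_le_tsum _ (fun j _ => by positivity)
              (summable_geometric_of_lt_one hr0 hr1)
        _ = (1 - M₀ / δ)⁻¹ := tsum_geometric_of_lt_one hr0 hr1
    calc ∑ j ∈ Finset.range K, δ⁻¹ ^ (j + 1) * M₀ ^ j
        = δ⁻¹ * ∑ j ∈ Finset.range K, (M₀ / δ) ^ j := h1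
      _ ≤ δ⁻¹ * (1 - M₀ / δ)⁻¹ := by
          exact mul_le_mul_of_nonneg_left h2 (by positivity)
      _ = c := by
          rw [hc]
          rw [← mul_inv]
          congr 1
          field_simp
  have hynorm : ∀ n, ‖y n‖ ≤ c * ‖E n x‖ := by
    intro n
    have h1 : ∀ j ∈ Finset.range K,
        ‖((s - s' n)⁻¹ ^ (j + 1)) • ((N n) ^ j) (E n x)‖
          ≤ (δ⁻¹ ^ (j + 1) * M₀ ^ j) * ‖E n x‖ := by
      intro j _
      rw [norm_smul, norm_pow, norm_inv]
      have hle : ‖s - s' n‖⁻¹ ≤ δ⁻¹ := by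
        apply inv_anti₀ hδpos (hδle n)
      calc ‖s - s' n‖⁻¹ ^ (j + 1) * ‖((N n) ^ j) (E n x)‖
          ≤ δ⁻¹ ^ (j + 1) * (M₀ ^ j * ‖E n x‖) := by
            apply mul_le_mul (pow_le_pow_left₀ (by positivity) hle _)
              (hNpow n j (E n x)) (norm_nonneg _) (by positivity)
        _ = (δ⁻¹ ^ (j + 1) * M₀ ^ j) * ‖E n x‖ := by ring
    calc ‖y n‖ ≤ ∑ j ∈ Finset.range K,
          ‖((s - s' n)⁻¹ ^ (j + 1)) • ((N n) ^ j) (E n x)‖ := norm_sum_le _ _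
      _ ≤ ∑ j ∈ Finset.range K, (δ⁻¹ ^ (j + 1) * M₀ ^ j) * ‖E n x‖ :=
          Finset.sum_le_sum h1
      _ = (∑ j ∈ Finset.range K, δ⁻¹ ^ (j + 1) * M₀ ^ j) * ‖E n x‖ := by
          rw [← Finset.sum_mul]
      _ ≤ c * ‖E n x‖ :=
          mul_le_mul_of_nonneg_right hgeomsum (norm_nonneg _)
  have hysq : Summable (fun n => ‖y n‖ ^ 2) := by
    apply Summable.of_nonneg_of_le (fun n => by positivity)
      (fun n => ?_) ((hsum x).mul_left (c ^ 2))
    calc ‖y n‖ ^ 2 ≤ (c * ‖E n x‖) ^ 2 :=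
        pow_le_pow_left₀ (norm_nonneg _) (hynorm n) 2
      _ = c ^ 2 * ‖E n x‖ ^ 2 := by ring
  -- finite-sum projection computation
  have hEsum : ∀ (F : Finset ℕ) (m : ℕ),
      E m (∑ n ∈ F, y n) = if m ∈ F then y m else 0 := by
    intro F m
    rw [map_sum, Finset.sum_congr rfl fun n _ => hEy m n, Finset.sum_ite_eq]
  have hfin : ∀ F : Finset ℕ, m₁ * ‖∑ n ∈ F, y n‖ ^ 2 ≤ ∑ n ∈ F, ‖y n‖ ^ 2 := by
    intro F
    have h1 := hlower (∑ n ∈ F, y n)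
    have h2 : ∑' m, ‖E m (∑ n ∈ F, y n)‖ ^ 2 = ∑ m ∈ F, ‖y m‖ ^ 2 := by
      rw [tsum_eq_sum (s := F) (fun m hm => by rw [hEsum F m, if_neg hm]; simp)]
      exact Finset.sum_congr rfl fun m hm => by rw [hEsum F m, if_pos hm]
    rw [h2] at h1
    exact h1
  -- summability of y
  have hsummy : Summable y := by
    rw [summable_iff_vanishing_norm]
    intro ε hε
    obtain ⟨F, hF⟩ := summable_iff_vanishing_norm.1 hysq (m₁ * ε ^ 2)
      (by positivity)
    refine ⟨F, fun t ht => ?_⟩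
    have h1 := hfin t
    have h2 := hF t ht
    have h3 : ∑ n ∈ t, ‖y n‖ ^ 2 < m₁ * ε ^ 2 := by
      have : ‖∑ n ∈ t, ‖y n‖ ^ 2‖ = ∑ n ∈ t, ‖y n‖ ^ 2 := by
        rw [Real.norm_eq_abs, abs_of_nonneg (Finset.sum_nonneg fun n _ => by positivity)]
      rwa [this] at h2
    have h4 : ‖∑ n ∈ t, y n‖ ^ 2 < ε ^ 2 := by
      have := h1.trans_lt h3
      nlinarith
    exact lt_of_pow_lt_pow_left₀ 2 hε.le h4
  refine ⟨hsummy, ?_⟩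
  -- projections of the total sum
  have hEY : ∀ m, E m (∑' n, y n) = y m := by
    intro m
    rw [(E m).map_tsum hsummy]
    rw [tsum_congr fun n => hEy m n]
    rw [tsum_eq_single m fun n hn => if_neg fun h => hn h.symm]
    simp
  have hfinY : m₁ * ‖∑' n, y n‖ ^ 2 ≤ ∑' n, ‖y n‖ ^ 2 := by
    have h1 := hlower (∑' n, y n)
    calc m₁ * ‖∑' n, y n‖ ^ 2 ≤ ∑' m, ‖E m (∑' n, y n)‖ ^ 2 := h1
      _ = ∑' n, ‖y n‖ ^ 2 := tsum_congr fun m => by rw [hEY m]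
  have h2 : ∑' n, ‖y n‖ ^ 2 ≤ c ^ 2 * (m₂ * ‖x‖ ^ 2) := by
    calc ∑' n, ‖y n‖ ^ 2 ≤ ∑' n, c ^ 2 * ‖E n x‖ ^ 2 := by
          refine Summable.tsum_le_tsum (fun n => ?_) hysq ((hsum x).mul_left _)
          calc ‖y n‖ ^ 2 ≤ (c * ‖E n x‖) ^ 2 :=
              pow_le_pow_left₀ (norm_nonneg _) (hynorm n) 2
            _ = c ^ 2 * ‖E n x‖ ^ 2 := by ring
      _ = c ^ 2 * ∑' n, ‖E n x‖ ^ 2 := tsum_mul_left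
      _ ≤ c ^ 2 * (m₂ * ‖x‖ ^ 2) :=
          mul_le_mul_of_nonneg_left (hupper x) (by positivity)
  have hfinal : ‖∑' n, y n‖ ≤ Real.sqrt (m₂ / m₁) * c * ‖x‖ := by
    have hb : (0:ℝ) ≤ Real.sqrt (m₂ / m₁) * c * ‖x‖ := by positivity
    have hsq' : ‖∑' n, y n‖ ^ 2 ≤ (Real.sqrt (m₂ / m₁) * c * ‖x‖) ^ 2 := by
      have hs : Real.sqrt (m₂ / m₁) ^ 2 = m₂ / m₁ :=
        Real.sq_sqrt (div_nonneg (hm₁.trans_le hm₁₂).le hm₁.le)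
      have hexp : (Real.sqrt (m₂ / m₁) * c * ‖x‖) ^ 2
          = m₂ / m₁ * (c ^ 2 * ‖x‖ ^ 2) := by
        rw [mul_pow, mul_pow, hs]; ring
      rw [hexp]
      rw [div_mul_eq_mul_div, le_div_iff₀ hm₁]
      nlinarith [hfinY, h2]
    calc ‖∑' n, y n‖ = Real.sqrt (‖∑' n, y n‖ ^ 2) :=
        (Real.sqrt_sq (norm_nonneg _)).symm
      _ ≤ Real.sqrt ((Real.sqrt (m₂ / m₁) * c * ‖x‖) ^ 2) :=
          Real.sqrt_le_sqrt hsq'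
      _ = Real.sqrt (m₂ / m₁) * c * ‖x‖ := Real.sqrt_sq hb
  calc ‖∑' n, y n‖ ≤ Real.sqrt (m₂ / m₁) * c * ‖x‖ := hfinal
    _ = Real.sqrt (m₂ / m₁) / (δ - M₀) * ‖x‖ := by
        rw [hc, div_eq_mul_inv (Real.sqrt (m₂ / m₁)) (δ - M₀)]
end

section
/- Let X be a complex Hilbert space, d ≥ 1, let λ₁, …, λ_{d+1} ∈ ℂ be pairwise distinct with Re λ_{d+1} < 0, let e₁, …, e_{d+1} ∈ X, b₁, …, b_{d+1} ∈ ℂ^d, and m, m₁, m₂ > 0 be such that: (i) m₁·Σ_{n=1}^{d+1}|aₙ|² ≤ ‖Σ_{n=1}^{d+1} aₙeₙ‖² ≤ m₂·Σ_{n=1}^{d+1}|aₙ|² for every a ∈ ℂ^{d+1}; (ii) for every a ∈ ℂ^{d+1} with Σ_{n=1}^{d+1} aₙbₙ = 0 one has ‖Σ_{n=1}^{d+1} aₙ(λ_{d+1} − λₙ)eₙ‖² ≥ m·|Re λ_{d+1}|²·‖Σ_{n=1}^{d+1} aₙeₙ‖². Then Σ_{n=1}^{d} |λ_{d+1} − λₙ|²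 ≥ (m·m₁/m₂)·|Re λ_{d+1}|². (Core of Lemma 5.6: via the Hautus test for A* and B* with eigenvectors eₙ of A* to eigenvalues λₙ and bₙ = B*eₙ, any d+1 eigenvalues cannot all cluster in a ball of radius proportional to |Re λ|² around λ; hence in the ball of radius K·|Re s|² around each eigenvalue s lie at most d eigenvalues.) -/
/-- **core of Lemma 5.6.** Via the Hautus test, `d+1` eigenvalues of the
adjoint cannot cluster: if `e₁,…,e_{d+1}` satisfy two-sided Riesz bounds (i), the Hautus-type
inequality (ii) holds on vectors annihilated by `b₁,…,b_{d+1} ∈ ℂ^d`, and the `λₙ` are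
pairwise distinct with `Re λ_{d+1} < 0`, then
`Σ_{n=1}^{d} |λ_{d+1} − λₙ|² ≥ (m·m₁/m₂)·|Re λ_{d+1}|²`. -/
theorem eigenvalue_cluster_bound
    {X : Type*} [NormedAddCommGroup X] [InnerProductSpace ℂ X]
    (d : ℕ) (hd : 1 ≤ d)
    (Λ : Fin (d + 1) → ℂ) (hΛinj : Function.Injective Λ)
    (hΛre : (Λ (Fin.last d)).re < 0)
    (e : Fin (d + 1) → X)
    (b : Fin (d + 1) → EuclideanSpace ℂ (Fin d))
    (m m₁ m₂ : ℝ) (hm : 0 < m) (hm₁ : 0 < m₁) (hm₂ : 0 < m₂)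
    (hRieszLower : ∀ a : Fin (d + 1) → ℂ,
      m₁ * ∑ n, ‖a n‖ ^ 2 ≤ ‖∑ n, a n • e n‖ ^ 2)
    (hRieszUpper : ∀ a : Fin (d + 1) → ℂ,
      ‖∑ n, a n • e n‖ ^ 2 ≤ m₂ * ∑ n, ‖a n‖ ^ 2)
    (hHautus : ∀ a : Fin (d + 1) → ℂ, (∑ n, a n • b n) = 0 →
      m * |(Λ (Fin.last d)).re| ^ 2 * ‖∑ n, a n • e n‖ ^ 2 ≤
        ‖∑ n, (a n * (Λ (Fin.last d) - Λ n)) • e n‖ ^ 2) :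
    (m * m₁ / m₂) * |(Λ (Fin.last d)).re| ^ 2 ≤
      ∑ n : Fin d, ‖Λ (Fin.last d) - Λ n.castSucc‖ ^ 2 := by
  classical
  -- the d+1 vectors b n in a d-dimensional space are linearly dependent
  have hdep : ¬ LinearIndependent ℂ b := by
    intro h
    have hcard := h.fintype_card_le_finrank
    simp [finrank_euclideanSpace_fin] at hcard
  rw [Fintype.not_linearIndependent_iff] at hdep
  obtain ⟨a, ha0, i, hai⟩ := hdep
  set lam := Λ (Fin.last d) with hlam
  set R := |lam.re| ^ 2 with hR
  set S := ∑ n, ‖a n‖ ^ 2 with hS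
  set T := ∑ n : Fin d, ‖lam - Λ n.castSucc‖ ^ 2 with hT
  have hSpos : 0 < S := by
    apply Finset.sum_pos' (fun n _ => by positivity)
    exact ⟨i, Finset.mem_univ i, pow_pos (norm_pos_iff.mpr hai) 2⟩
  have hsum : ∑ n, ‖a n * (lam - Λ n)‖ ^ 2 ≤ S * T := by
    have heq : ∀ n, ‖a n * (lam - Λ n)‖ ^ 2
        = ‖a n‖ ^ 2 * ‖lam - Λ n‖ ^ 2 := by
      intro n; rw [norm_mul, mul_pow]
    simp only [heq]
    rw [Fin.sum_univ_castSucc]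
    have hlast : ‖a (Fin.last d)‖ ^ 2 * ‖lam - Λ (Fin.last d)‖ ^ 2 = 0 := by
      simp [hlam]
    rw [hlast, add_zero, hT, Finset.mul_sum]
    apply Finset.sum_le_sum
    intro j _
    apply mul_le_mul_of_nonneg_right _ (by positivity)
    exact Finset.single_le_sum (f := fun n => ‖a n‖ ^ 2)
      (fun n _ => by positivity) (Finset.mem_univ _)
  have key : m * R * (m₁ * S) ≤ m₂ * (S * T) := by
    calc m * R * (m₁ * S) ≤ m * R * ‖∑ n, a n • e n‖ ^ 2 := by
          apply mul_le_mul_of_nonneg_left (hRieszLower a) (by positivity)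
      _ ≤ ‖∑ n, (a n * (lam - Λ n)) • e n‖ ^ 2 := hHautus a ha0
      _ ≤ m₂ * ∑ n, ‖a n * (lam - Λ n)‖ ^ 2 := hRieszUpper _
      _ ≤ m₂ * (S * T) := by
          exact mul_le_mul_of_nonneg_left hsum (le_of_lt hm₂)
  have h4 : m * m₁ * R ≤ m₂ * T := by nlinarith [key, hSpos]
  rw [div_mul_eq_mul_div, div_le_iff₀ hm₂]
  linarith [h4]
end

section
/- Let f : ℂ → ℂ be entire and not identically zero, and suppose: (i) there exist C₀, T ≥ 0 with |f(z)| ≤ C₀·e^{T·|z|} for all z ∈ ℂ; (ii) there exists h ≥ 0 such that every zero z of f satisfies |Im z| ≤ h; (iii) there exist ŵ ∈ ℝ and constants 0 < c ≤ C such that c ≤ |f(r + i·ŵ)| ≤ C for all r ∈ ℝ. Then there exist k ∈ ℕ and subsets Z₁, …, Z_k of ℂ, each having a uniform gap (i.e. inf{|z − w| : z, w ∈ Z_i, z ≠ w} > 0), whose union equals the zero set of f and such that each zero z of f belongs to exactly ord_z(f) of the sets Z₁, …, Z_k, where ord_z(f) is the order of z as a zero of f. (Proposition 5.3, Levin's theorem: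 the zeros of a sine-type function, counted with multiplicity, form a finite union of sets each having a uniform gap.) -/
open Set

lemma my_ne_zero_nhdsNE (f : ℂ → ℂ) (hf : Differentiable ℂ f) (hf0 : ∃ z, f z ≠ 0) (z : ℂ) :
    ∀ᶠ w in nhdsWithin z {z}ᶜ, f w ≠ 0 := by
  rcases (hf.analyticAt z).eventually_eq_zero_or_eventually_ne_zero with h | h
  · exfalso
    obtain ⟨z₀, hz₀⟩ := hf0
    have hA : AnalyticOnNhd ℂ f univ := fun w _ => hf.analyticAt w
    have := hA.eqOn_zero_of_preconnected_of_eventuallyEq_zero isPreconnected_univ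
      (mem_univ z) h (mem_univ z₀)
    exact hz₀ this
  · exact h

lemma my_zeros_finite (f : ℂ → ℂ) (hf : Differentiable ℂ f) (hf0 : ∃ z, f z ≠ 0)
    (K : Set ℂ) (hK : IsCompact K) : ({z | f z = 0} ∩ K).Finite := by
  by_contra hinf
  have hinf' : ({z | f z = 0} ∩ K).Infinite := fun hfin => hinf hfin
  obtain ⟨x, -, hx⟩ := hinf'.exists_accPt_of_subset_isCompact hK inter_subset_right
  rw [accPt_iff_frequently] at hx
  have hfreq : ∃ᶠ y in nhdsWithin x {x}ᶜ, f y = 0 := by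
    rw [frequently_nhdsWithin_iff]
    exact hx.mono (by rintro y ⟨hy1, hy2, -⟩; exact ⟨hy2, hy1⟩)
  exact hfreq (my_ne_zero_nhdsNE f hf hf0 x)

/-- Global single-zero factorization. -/
lemma my_factor_single (f : ℂ → ℂ) (hf : Differentiable ℂ f) (a : ℂ) (n : ℕ)
    (g₀ : ℂ → ℂ) (hg₀ : AnalyticAt ℂ g₀ a) (hg₀a : g₀ a ≠ 0)
    (heq : ∀ᶠ w in nhds a, f w = (w - a) ^ n * g₀ w) :
    ∃ g : ℂ → ℂ, Differentiable ℂ g ∧ g a ≠ 0 ∧ ∀ w, f w = (w - a) ^ n * g w := by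
  classical
  set g : ℂ → ℂ := fun w => if w = a then g₀ a else f w / (w - a) ^ n with hg
  have hga : g a = g₀ a := by simp [hg]
  have hkey : ∀ w, w ≠ a → f w = (w - a) ^ n * g w := by
    intro w hw
    have hpow : (w - a) ^ n ≠ 0 := pow_ne_zero _ (sub_ne_zero.2 hw)
    simp only [hg, if_neg hw]
    field_simp
  have hgg₀ : g =ᶠ[nhds a] g₀ := by
    filter_upwards [heq] with w hw
    by_cases hwa : w = a
    · simp [hg, hwa]
    · have hpow : (w - a) ^ n ≠ 0 := pow_ne_zero _ (sub_ne_zero.2 hwa)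
      simp only [hg, if_neg hwa, hw]
      field_simp
  refine ⟨g, ?_, by rw [hga]; exact hg₀a, ?_⟩
  · intro w
    by_cases hwa : w = a
    · subst hwa
      exact hg₀.differentiableAt.congr_of_eventuallyEq hgg₀
    · have hmem : {w : ℂ | w ≠ a} ∈ nhds w := isOpen_ne.mem_nhds hwa
      have : g =ᶠ[nhds w] fun w => f w / (w - a) ^ n := by
        filter_upwards [hmem] with u hu
        simp [hg, if_neg hu]
      refine DifferentiableAt.congr_of_eventuallyEq ?_ this
      exact ((hf w).div ((differentiableAt_id.sub_const a).pow n)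
        (pow_ne_zero _ (sub_ne_zero.2 hwa)))
  · intro w
    by_cases hwa : w = a
    · subst hwa
      have := heq.self_of_nhds
      rw [this, hga]
    · exact hkey w hwa

/-- Global finite factorization. -/
lemma my_factor_finset (F : Finset ℂ) :
    ∀ (f : ℂ → ℂ), Differentiable ℂ f → ∀ (m : ℂ → ℕ),
    (∀ z ∈ F, ∃ g, AnalyticAt ℂ g z ∧ g z ≠ 0 ∧ ∀ᶠ w in nhds z, f w = (w - z) ^ m z * g w) →
    ∃ g : ℂ → ℂ, Differentiable ℂ g ∧
      ∀ w, f w = (∏ z ∈ F, (w - z) ^ m z) * g w := by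
  classical
  induction F using Finset.induction_on with
  | empty => intro f hf m _; exact ⟨f, hf, fun w => by simp⟩
  | @insert a F ha ih =>
    intro f hf m hloc
    obtain ⟨g₀, hg₀, hg₀a, heq⟩ := hloc a (Finset.mem_insert_self a F)
    obtain ⟨g₁, hg₁, hg₁a, hfeq⟩ := my_factor_single f hf a (m a) g₀ hg₀ hg₀a heq
    have hloc1 : ∀ z ∈ F, ∃ g, AnalyticAt ℂ g z ∧ g z ≠ 0 ∧
        ∀ᶠ w in nhds z, g₁ w = (w - z) ^ m z * g w := by
      intro z hz
      have hza : z ≠ a := fun hzz => ha (hzz ▸ hz)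
      obtain ⟨gz, hgz, hgza, heqz⟩ := hloc z (Finset.mem_insert_of_mem hz)
      refine ⟨fun w => gz w / (w - a) ^ m a, ?_, ?_, ?_⟩
      · exact hgz.div (((analyticAt_id.sub analyticAt_const).pow (m a)))
          (pow_ne_zero _ (sub_ne_zero.2 hza))
      · exact div_ne_zero hgza (pow_ne_zero _ (sub_ne_zero.2 hza))
      · have hmem : {w : ℂ | w ≠ a} ∈ nhds z := isOpen_ne.mem_nhds hza
        filter_upwards [heqz, hmem] with w hw hwa
        have hpow : (w - a) ^ m a ≠ 0 := pow_ne_zero _ (sub_ne_zero.2 hwa)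
        have : (w - a) ^ m a * g₁ w = (w - z) ^ m z * gz w := by rw [← hfeq w, hw]
        field_simp
        linear_combination this
    obtain ⟨g, hg, hgeq⟩ := ih g₁ hg₁ m hloc1
    refine ⟨g, hg, fun w => ?_⟩
    rw [Finset.prod_insert ha, hfeq w, hgeq w]
    ring
open Set Filter Metric

lemma my_count_bound (f : ℂ → ℂ) (hf : Differentiable ℂ f) (c₀ : ℂ) (R B cm : ℝ)
    (hR : 1 ≤ R) (hcm : 0 < cm) (hfc₀ : cm ≤ ‖f c₀‖)
    (hB : ∀ w ∈ closedBall c₀ (3 * R), ‖f w‖ ≤ B)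
    (F : Finset ℂ) (hFsub : ∀ z ∈ F, z ∈ closedBall c₀ R)
    (m : ℂ → ℕ)
    (hloc : ∀ z ∈ F, ∃ g, AnalyticAt ℂ g z ∧ g z ≠ 0 ∧
      ∀ᶠ w in nhds z, f w = (w - z) ^ m z * g w) :
    cm * 2 ^ (∑ z ∈ F, m z) ≤ B := by
  have hR0 : (0:ℝ) < R := lt_of_lt_of_le one_pos hR
  obtain ⟨g, hg, hgeq⟩ := my_factor_finset F f hf m hloc
  set n := ∑ z ∈ F, m z with hn
  set P : ℂ → ℂ := fun w => ∏ z ∈ F, (w - z) ^ m z with hP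
  -- bound on |g| on the sphere of radius 3R
  have hsphere : ∀ w ∈ sphere c₀ (3 * R), (2 * R) ^ n * ‖g w‖ ≤ B := by
    intro w hw
    have hwd : ‖w - c₀‖ = 3 * R := by
      simpa [Complex.dist_eq] using mem_sphere_iff_norm.mp hw
    have hPle : (2 * R) ^ n ≤ ‖P w‖ := by
      have : ‖P w‖ = ∏ z ∈ F, ‖w - z‖ ^ m z := by
        simp [hP, norm_prod, norm_pow]
      rw [this, hn, ← Finset.prod_pow_eq_pow_sum]
      refine Finset.prod_le_prod (fun z _ => by positivity) (fun z hz => ?_)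
      refine pow_le_pow_left₀ (by positivity) ?_ _
      have hzc : ‖z - c₀‖ ≤ R := by
        simpa [Complex.dist_eq] using mem_closedBall.mp (hFsub z hz)
      calc 2 * R = 3 * R - R := by ring
        _ ≤ ‖w - c₀‖ - ‖z - c₀‖ := by rw [hwd]; linarith
        _ ≤ ‖(w - c₀) - (z - c₀)‖ := by
            have h1 := abs_norm_sub_norm_le (w - c₀) (z - c₀)
            have h2 := le_abs_self (‖w - c₀‖ - ‖z - c₀‖)
            linarith
        _ = ‖w - z‖ := by ring_nf
    have hfw : ‖f w‖ ≤ B := hB w (sphere_subset_closedBall hw)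
    calc (2 * R) ^ n * ‖g w‖ ≤ ‖P w‖ * ‖g w‖ := by
          have : (0:ℝ) ≤ ‖g w‖ := norm_nonneg _
          exact mul_le_mul_of_nonneg_right hPle this
      _ = ‖f w‖ := by rw [hgeq w]; rw [norm_mul]
      _ ≤ B := hfw
  -- max modulus
  have h3R : (0:ℝ) < 3 * R := by linarith
  have hBnn : (0:ℝ) ≤ B := le_trans hcm.le (le_trans hfc₀ (hB c₀ (mem_closedBall_self h3R.le)))
  have hgc₀ : ‖g c₀‖ ≤ B / (2 * R) ^ n := by
    have hfr : ∀ w ∈ frontier (ball c₀ (3 * R)), ‖g w‖ ≤ B / (2 * R) ^ n := by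
      intro w hw
      rw [frontier_ball c₀ (ne_of_gt h3R)] at hw
      rw [le_div_iff₀ (by positivity)]
      calc ‖g w‖ * (2 * R) ^ n = (2 * R) ^ n * ‖g w‖ := by
            rw [mul_comm]
        _ ≤ B := hsphere w hw
    have := Complex.norm_le_of_forall_mem_frontier_norm_le isBounded_ball
      hg.diffContOnCl hfr (subset_closure (mem_ball_self h3R))
    exact this
  -- combine
  have hPc₀ : ‖P c₀‖ ≤ R ^ n := by
    have : ‖P c₀‖ = ∏ z ∈ F, ‖c₀ - z‖ ^ m z := by
      simp [hP, norm_prod, norm_pow]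
    rw [this, hn, ← Finset.prod_pow_eq_pow_sum]
    refine Finset.prod_le_prod (fun z _ => by positivity) (fun z hz => ?_)
    refine pow_le_pow_left₀ (norm_nonneg _) ?_ _
    have hzc : ‖z - c₀‖ ≤ R := by
      simpa [Complex.dist_eq] using mem_closedBall.mp (hFsub z hz)
    calc ‖c₀ - z‖ = ‖z - c₀‖ := by rw [← norm_neg]; ring_nf
      _ ≤ R := hzc
  have hcmB : cm ≤ R ^ n * (B / (2 * R) ^ n) := by
    calc cm ≤ ‖f c₀‖ := hfc₀
      _ = ‖P c₀‖ * ‖g c₀‖ := by rw [hgeq c₀, norm_mul]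
      _ ≤ R ^ n * (B / (2 * R) ^ n) := by
          exact mul_le_mul hPc₀ hgc₀ (norm_nonneg _) (by positivity)
  have h2Rn : (2 * R) ^ n = 2 ^ n * R ^ n := by rw [mul_pow]
  rw [h2Rn] at hcmB
  have hRn : (0:ℝ) < R ^ n := by positivity
  calc cm * 2 ^ n ≤ (R ^ n * (B / (2 ^ n * R ^ n))) * 2 ^ n := by
        exact mul_le_mul_of_nonneg_right hcmB (by positivity)
    _ = B := by field_simp

lemma my_strip_bound (f : ℂ → ℂ) (hf : Differentiable ℂ f)
    (C₀ T : ℝ) (hC₀ : 0 ≤ C₀) (hT : 0 ≤ T)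
    (hgrowth : ∀ z : ℂ, ‖f z‖ ≤ C₀ * Real.exp (T * ‖z‖))
    (w₀ C : ℝ) (hC : 0 ≤ C)
    (hline : ∀ r : ℝ, ‖f (r + w₀ * Complex.I)‖ ≤ C)
    (R : ℝ) (hR : 0 ≤ R) :
    ∃ B : ℝ, 0 ≤ B ∧ ∀ z : ℂ, |z.im - w₀| ≤ R → ‖f z‖ ≤ B := by
  set M : ℝ := max C (C₀ * Real.exp (T * |w₀|)) with hM
  have hM0 : 0 ≤ M := le_trans hC (le_max_left _ _)
  refine ⟨M * Real.exp (T * R), by positivity, ?_⟩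
  -- auxiliary functions
  set u : ℂ → ℂ := fun z => f (z + w₀ * Complex.I) * Complex.exp (T * Complex.I * z) with hu_def
  set v : ℂ → ℂ := fun z => f (z + w₀ * Complex.I) * Complex.exp (-(T:ℂ) * Complex.I * z)
    with hv_def
  have habs_u : ∀ z : ℂ, ‖u z‖
      = ‖f (z + w₀ * Complex.I)‖ * Real.exp (-(T * z.im)) := by
    intro z
    have : ((T:ℂ) * Complex.I * z).re = -(T * z.im) := by
      simp [Complex.mul_re, Complex.mul_im]
    rw [hu_def]; simp only [norm_mul, Complex.norm_exp, this]
  have habs_v : ∀ z : ℂ, ‖v z‖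
      = ‖f (z + w₀ * Complex.I)‖ * Real.exp (T * z.im) := by
    intro z
    have : ((-(T:ℂ)) * Complex.I * z).re = T * z.im := by
      simp [Complex.mul_re, Complex.mul_im]
    rw [hv_def]; simp only [norm_mul, Complex.norm_exp, this]
  have habsw : ‖(w₀:ℂ) * Complex.I‖ = |w₀| := by
    simp [Complex.norm_real]
  have hfw : ∀ z : ℂ, ‖f (z + w₀ * Complex.I)‖
      ≤ (C₀ * Real.exp (T * |w₀|)) * Real.exp (T * ‖z‖) := by
    intro z
    refine le_trans (hgrowth _) ?_
    rw [mul_assoc, ← Real.exp_add]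
    refine mul_le_mul_of_nonneg_left (Real.exp_le_exp.2 ?_) hC₀
    have := norm_add_le z ((w₀:ℂ) * Complex.I)
    rw [habsw] at this
    nlinarith [this]
  have hud : Differentiable ℂ u := by
    refine ((hf.comp (differentiable_id.add_const _)).mul ?_)
    exact (Complex.differentiable_exp.comp ((differentiable_const _).mul differentiable_id))
  have hvd : Differentiable ℂ v := by
    refine ((hf.comp (differentiable_id.add_const _)).mul ?_)
    exact (Complex.differentiable_exp.comp ((differentiable_const _).mul differentiable_id))
  -- bounds on the boundary rays
  have hre_u : ∀ x : ℝ, ‖u x‖ ≤ M := fun x => by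
    have := habs_u x
    simp only [Complex.ofReal_im, mul_zero, neg_zero, Real.exp_zero, mul_one] at this
    rw [show ‖u (x:ℂ)‖ = ‖u x‖ from rfl, this]
    exact le_trans (hline x) (le_max_left _ _)
  have hre_v : ∀ x : ℝ, ‖v x‖ ≤ M := fun x => by
    have := habs_v x
    simp only [Complex.ofReal_im, mul_zero, Real.exp_zero, mul_one] at this
    rw [show ‖v (x:ℂ)‖ = ‖v x‖ from rfl, this]
    exact le_trans (hline x) (le_max_left _ _)
  have him_u : ∀ x : ℝ, 0 ≤ x → ‖u ((x:ℂ) * Complex.I)‖ ≤ M := by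
    intro x hx
    have h1 := habs_u ((x:ℂ) * Complex.I)
    have h2 : ((x:ℂ) * Complex.I).im = x := by simp
    rw [show ‖u ((x:ℂ) * Complex.I)‖ = ‖u ((x:ℂ)*Complex.I)‖ from rfl, h1, h2]
    refine le_trans ?_ (le_max_right C (C₀ * Real.exp (T * |w₀|)))
    have h3 : ‖(x:ℂ) * Complex.I‖ = |x| := by simp [Complex.norm_real]
    have h4 := hfw ((x:ℂ) * Complex.I)
    rw [h3, _root_.abs_of_nonneg hx] at h4
    have e1 : Real.exp (T * x) * Real.exp (-(T * x)) = 1 := by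
      rw [← Real.exp_add]; simp
    calc ‖f ((x:ℂ) * Complex.I + w₀ * Complex.I)‖ * Real.exp (-(T * x))
        ≤ (C₀ * Real.exp (T * |w₀|) * Real.exp (T * x)) * Real.exp (-(T * x)) :=
          mul_le_mul_of_nonneg_right h4 (Real.exp_pos _).le
      _ = C₀ * Real.exp (T * |w₀|) := by rw [mul_assoc, e1, mul_one]
  have him_v : ∀ x : ℝ, x ≤ 0 → ‖v ((x:ℂ) * Complex.I)‖ ≤ M := by
    intro x hx
    have h1 := habs_v ((x:ℂ) * Complex.I)
    have h2 : ((x:ℂ) * Complex.I).im = x := by simp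
    rw [show ‖v ((x:ℂ) * Complex.I)‖ = ‖v ((x:ℂ)*Complex.I)‖ from rfl, h1, h2]
    refine le_trans ?_ (le_max_right C (C₀ * Real.exp (T * |w₀|)))
    have h3 : ‖(x:ℂ) * Complex.I‖ = |x| := by simp [Complex.norm_real]
    have h4 := hfw ((x:ℂ) * Complex.I)
    rw [h3, _root_.abs_of_nonpos hx] at h4
    have e1 : Real.exp (T * -x) * Real.exp (T * x) = 1 := by
      rw [← Real.exp_add]; ring_nf; exact Real.exp_zero
    calc ‖f ((x:ℂ) * Complex.I + w₀ * Complex.I)‖ * Real.exp (T * x)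
        ≤ (C₀ * Real.exp (T * |w₀|) * Real.exp (T * -x)) * Real.exp (T * x) :=
          mul_le_mul_of_nonneg_right h4 (Real.exp_pos _).le
      _ = C₀ * Real.exp (T * |w₀|) := by rw [mul_assoc, e1, mul_one]
  -- growth bounds
  have hgrow_u : ∀ z : ℂ, 0 ≤ z.im →
      ‖u z‖ ≤ (C₀ * Real.exp (T * |w₀|)) * Real.exp (T * ‖z‖) := by
    intro z hz
    rw [show ‖u z‖ = ‖u z‖ from rfl, habs_u z]
    have h1 : Real.exp (-(T * z.im)) ≤ 1 := by
      rw [Real.exp_le_one_iff]; nlinarith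
    calc ‖f (z + w₀ * Complex.I)‖ * Real.exp (-(T * z.im))
        ≤ ‖f (z + w₀ * Complex.I)‖ * 1 :=
          mul_le_mul_of_nonneg_left h1 (norm_nonneg _)
      _ = ‖f (z + w₀ * Complex.I)‖ := mul_one _
      _ ≤ (C₀ * Real.exp (T * |w₀|)) * Real.exp (T * ‖z‖) := hfw z
  have hgrow_v : ∀ z : ℂ, z.im ≤ 0 →
      ‖v z‖ ≤ (C₀ * Real.exp (T * |w₀|)) * Real.exp (T * ‖z‖) := by
    intro z hz
    rw [show ‖v z‖ = ‖v z‖ from rfl, habs_v z]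
    have h1 : Real.exp (T * z.im) ≤ 1 := by
      rw [Real.exp_le_one_iff]; nlinarith
    calc ‖f (z + w₀ * Complex.I)‖ * Real.exp (T * z.im)
        ≤ ‖f (z + w₀ * Complex.I)‖ * 1 :=
          mul_le_mul_of_nonneg_left h1 (norm_nonneg _)
      _ = ‖f (z + w₀ * Complex.I)‖ := mul_one _
      _ ≤ (C₀ * Real.exp (T * |w₀|)) * Real.exp (T * ‖z‖) := hfw z
  have hBigO : ∀ (Q : Set ℂ), (∀ z ∈ Q, 0 ≤ z.im) →
      (∃ c < (2:ℝ), ∃ B, u =O[Bornology.cobounded ℂ ⊓ 𝓟 Q]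
        fun z => Real.exp (B * ‖z‖ ^ c)) := by
    intro Q hQ
    refine ⟨1, one_lt_two, T, ?_⟩
    refine Asymptotics.IsBigO.of_bound (C₀ * Real.exp (T * |w₀|)) ?_
    refine Filter.Eventually.filter_mono inf_le_right ?_
    rw [Filter.eventually_principal]
    intro z hz
    have := hgrow_u z (hQ z hz)
    rw [Real.norm_eq_abs, Real.abs_exp, Real.rpow_one]
    exact this
  have hBigO' : ∀ (Q : Set ℂ), (∀ z ∈ Q, z.im ≤ 0) →
      (∃ c < (2:ℝ), ∃ B, v =O[Bornology.cobounded ℂ ⊓ 𝓟 Q]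
        fun z => Real.exp (B * ‖z‖ ^ c)) := by
    intro Q hQ
    refine ⟨1, one_lt_two, T, ?_⟩
    refine Asymptotics.IsBigO.of_bound (C₀ * Real.exp (T * |w₀|)) ?_
    refine Filter.Eventually.filter_mono inf_le_right ?_
    rw [Filter.eventually_principal]
    intro z hz
    have := hgrow_v z (hQ z hz)
    rw [Real.norm_eq_abs, Real.abs_exp, Real.rpow_one]
    exact this
  -- the half-plane bounds
  have hupper : ∀ z : ℂ, 0 ≤ z.im → ‖u z‖ ≤ M := by
    intro z hz
    rcases le_or_gt 0 z.re with hre | hre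
    · refine PhragmenLindelof.quadrant_I hud.diffContOnCl ?_
        (fun x _ => hre_u x) him_u hre hz
      exact hBigO _ (fun w hw => le_of_lt (Complex.mem_reProdIm.1 hw).2)
    · refine PhragmenLindelof.quadrant_II hud.diffContOnCl ?_
        (fun x _ => hre_u x) him_u hre.le hz
      exact hBigO _ (fun w hw => le_of_lt (Complex.mem_reProdIm.1 hw).2)
  have hlower : ∀ z : ℂ, z.im ≤ 0 → ‖v z‖ ≤ M := by
    intro z hz
    rcases le_or_gt 0 z.re with hre | hre
    · refine PhragmenLindelof.quadrant_IV hvd.diffContOnCl ?_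
        (fun x _ => hre_v x) him_v hre hz
      exact hBigO' _ (fun w hw => le_of_lt (Complex.mem_reProdIm.1 hw).2)
    · refine PhragmenLindelof.quadrant_III hvd.diffContOnCl ?_
        (fun x _ => hre_v x) him_v hre.le hz
      exact hBigO' _ (fun w hw => le_of_lt (Complex.mem_reProdIm.1 hw).2)
  -- conclusion
  intro z hz
  set ζ : ℂ := z - w₀ * Complex.I with hζ
  have hζim : ζ.im = z.im - w₀ := by simp [hζ]
  have hζz : ζ + w₀ * Complex.I = z := by ring
  rcases le_or_gt 0 ζ.im with him | him
  · have := hupper ζ him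
    rw [show ‖u ζ‖ = ‖u ζ‖ from rfl, habs_u ζ, hζz] at this
    have hexp : ‖f z‖ = (‖f z‖ * Real.exp (-(T * ζ.im)))
        * Real.exp (T * ζ.im) := by
      rw [mul_assoc, ← Real.exp_add]; simp
    rw [hexp]
    have hle : Real.exp (T * ζ.im) ≤ Real.exp (T * R) := by
      refine Real.exp_le_exp.2 (mul_le_mul_of_nonneg_left ?_ hT)
      rw [hζim]; exact le_trans (le_abs_self _) hz
    exact mul_le_mul this hle (Real.exp_pos _).le hM0
  · have := hlower ζ him.le
    rw [show ‖v ζ‖ = ‖v ζ‖ from rfl, habs_v ζ, hζz] at this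
    have hexp : ‖f z‖ = (‖f z‖ * Real.exp (T * ζ.im))
        * Real.exp (-(T * ζ.im)) := by
      rw [mul_assoc, ← Real.exp_add]; simp
    rw [hexp]
    have hle : Real.exp (-(T * ζ.im)) ≤ Real.exp (T * R) := by
      refine Real.exp_le_exp.2 ?_
      rw [hζim]
      have : |z.im - w₀| ≤ R := hz
      have habs := neg_le_of_abs_le this
      nlinarith
    exact mul_le_mul this hle (Real.exp_pos _).le hM0

lemma my_combinatorial (S : Set ℂ) (m : ℂ → ℕ) (N : ℕ)
    (hm : ∀ z ∈ S, 1 ≤ m z)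
    (hfin : ∀ j : ℤ, ∃ F : Finset ℂ,
      (∀ z : ℂ, z ∈ F ↔ z ∈ S ∧ z.re ∈ Set.Ico (j:ℝ) ((j:ℝ)+1)) ∧ ∑ z ∈ F, m z ≤ N) :
    ∃ Z : Fin (2*N) → Set ℂ,
      (∀ i, ∀ z ∈ Z i, ∀ w ∈ Z i, z ≠ w → 1 ≤ ‖z - w‖) ∧
      (⋃ i, Z i) = S ∧
      ∀ z ∈ S, Nat.card {i : Fin (2*N) // z ∈ Z i} = m z := by
  classical
  choose F hF hFsum using hfin
  set j : ℂ → ℤ := fun z => ⌊z.re⌋ with hj_def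
  have hmemF : ∀ z ∈ S, z ∈ F (j z) := fun z hz =>
    (hF (j z) z).2 ⟨hz, Int.floor_le _, Int.lt_floor_add_one _⟩
  set r : ℂ → ℂ → Prop := fun z w => z.re < w.re ∨ (z.re = w.re ∧ z.im < w.im) with hr_def
  have hr_irrefl : ∀ z, ¬ r z z := by
    intro z hz; rcases hz with h | ⟨-, h⟩ <;> exact lt_irrefl _ h
  have hr_trans : ∀ a b c, r a b → r b c → r a c := by
    rintro a b c (h1 | ⟨h1, h1'⟩) (h2 | ⟨h2, h2'⟩)
    · exact Or.inl (h1.trans h2)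
    · exact Or.inl (h2 ▸ h1)
    · exact Or.inl (h1 ▸ h2)
    · exact Or.inr ⟨h1.trans h2, h1'.trans h2'⟩
  have hr_trich : ∀ z w : ℂ, z ≠ w → r z w ∨ r w z := by
    intro z w hzw
    rcases lt_trichotomy z.re w.re with h | h | h
    · exact Or.inl (Or.inl h)
    · rcases lt_trichotomy z.im w.im with h' | h' | h'
      · exact Or.inl (Or.inr ⟨h, h'⟩)
      · exact absurd (Complex.ext h h') hzw
      · exact Or.inr (Or.inr ⟨h.symm, h'⟩)
    · exact Or.inr (Or.inl h)
  set s : ℂ → ℕ := fun z => ∑ w ∈ (F (j z)).filter (fun w => r w z), m w with hs_def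
  have hsub : ∀ z ∈ S, insert z ((F (j z)).filter (fun w => r w z)) ⊆ F (j z) := by
    intro z hz
    intro u hu
    rcases Finset.mem_insert.1 hu with heq | hu
    · exact heq ▸ hmemF z hz
    · exact Finset.mem_of_mem_filter _ hu
  have hnotmem : ∀ z : ℂ, z ∉ (F (j z)).filter (fun w => r w z) := by
    intro z hz
    exact hr_irrefl z (Finset.mem_filter.1 hz).2
  have hsm : ∀ z ∈ S, s z + m z ≤ N := by
    intro z hz
    have h1 : ∑ w ∈ insert z ((F (j z)).filter (fun w => r w z)), m w = m z + s z := by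
      rw [Finset.sum_insert (hnotmem z)]
    have h2 := Finset.sum_le_sum_of_subset (hsub z hz) (f := m)
    rw [h1] at h2
    have := le_trans h2 (hFsum (j z))
    omega
  have horder : ∀ z ∈ S, ∀ w ∈ S, j z = j w → r z w → s z + m z ≤ s w := by
    intro z hz w hw hjw hrzw
    have hins : insert z ((F (j z)).filter (fun u => r u z))
        ⊆ (F (j w)).filter (fun u => r u w) := by
      intro u hu
      rcases Finset.mem_insert.1 hu with heq | hu
      · subst heq
        exact Finset.mem_filter.2 ⟨hjw ▸ hmemF u hz, hrzw⟩
      · rcases Finset.mem_filter.1 hu with ⟨hu1, hu2⟩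
        exact Finset.mem_filter.2 ⟨hjw ▸ hu1, hr_trans u z w hu2 hrzw⟩
    have h1 : ∑ u ∈ insert z ((F (j z)).filter (fun u => r u z)), m u = m z + s z := by
      rw [Finset.sum_insert (hnotmem z)]
    have h2 := Finset.sum_le_sum_of_subset hins (f := m)
    rw [h1] at h2
    have hsw : s w = ∑ u ∈ (F (j w)).filter (fun u => r u w), m u := rfl
    rw [hsw]
    omega
  set p : ℂ → ℕ := fun z => if j z % 2 = 0 then 0 else 1 with hp_def
  have hp_le : ∀ z, p z ≤ 1 := by
    intro z; simp only [hp_def]; split <;> omega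
  have hp_eq : ∀ z w, p z = p w → j z % 2 = j w % 2 := by
    intro z w hpw
    simp only [hp_def] at hpw
    have h1 := Int.emod_two_eq_zero_or_one (j z)
    have h2 := Int.emod_two_eq_zero_or_one (j w)
    split_ifs at hpw <;> omega
  set Z : Fin (2*N) → Set ℂ := fun i =>
    {z | z ∈ S ∧ ∃ t, s z ≤ t ∧ t < s z + m z ∧ (i:ℕ) = p z * N + t} with hZ_def
  have hdec : ∀ (a b t t' : ℕ), a ≤ 1 → b ≤ 1 → t < N → t' < N →
      a * N + t = b * N + t' → a = b ∧ t = t' := by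
    intro a b t t' ha hb ht ht' he
    interval_cases a <;> interval_cases b <;> omega
  refine ⟨Z, ?_, ?_, ?_⟩
  · -- uniform gap
    intro i z hz w hw hzw
    obtain ⟨hzS, t₁, ht₁a, ht₁b, he₁⟩ := hz
    obtain ⟨hwS, t₂, ht₂a, ht₂b, he₂⟩ := hw
    have ht₁N : t₁ < N := lt_of_lt_of_le ht₁b (hsm z hzS)
    have ht₂N : t₂ < N := lt_of_lt_of_le ht₂b (hsm w hwS)
    obtain ⟨hpzw, htt⟩ := hdec (p z) (p w) t₁ t₂ (hp_le z) (hp_le w) ht₁N ht₂N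
      (he₁.symm.trans he₂)
    subst htt
    by_cases hjw : j z = j w
    · exfalso
      rcases hr_trich z w hzw with hr | hr
      · have := horder z hzS w hwS hjw hr
        omega
      · have := horder w hwS z hzS hjw.symm hr
        omega
    · -- different intervals, same parity
      have hmod := hp_eq z w hpzw
      have hdvd : (2:ℤ) ∣ j z - j w := Int.ModEq.dvd (Int.ModEq.symm hmod)
      have habs2 : 2 ≤ |j z - j w| := by
        refine Int.le_of_dvd (abs_pos.2 (sub_ne_zero.2 hjw)) ((dvd_abs _ _).2 hdvd)
      have hzre := (hF (j z) z).1 (hmemF z hzS)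
      have hwre := (hF (j w) w).1 (hmemF w hwS)
      obtain ⟨-, hz1, hz2⟩ := hzre
      obtain ⟨-, hw1, hw2⟩ := hwre
      have hcase : j z + 2 ≤ j w ∨ j w + 2 ≤ j z := by omega
      have hre1 : (1:ℝ) ≤ |z.re - w.re| := by
        rcases hcase with hca | hca
        · have hcr : ((j z):ℝ) + 2 ≤ ((j w):ℝ) := by exact_mod_cast hca
          refine le_abs.2 (Or.inr ?_)
          linarith
        · have hcr : ((j w):ℝ) + 2 ≤ ((j z):ℝ) := by exact_mod_cast hca
          refine le_abs.2 (Or.inl ?_)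
          linarith
      calc (1:ℝ) ≤ |z.re - w.re| := hre1
        _ = |(z - w).re| := by rw [Complex.sub_re]
        _ ≤ ‖z - w‖ := Complex.abs_re_le_norm _
  · -- union
    apply Set.Subset.antisymm
    · intro z hz
      rcases Set.mem_iUnion.1 hz with ⟨i, hi⟩
      exact hi.1
    · intro z hz
      have hszN : s z < N := by have := hsm z hz; have := hm z hz; omega
      have hbound : p z * N + s z < 2 * N := by
        rcases Nat.le_one_iff_eq_zero_or_eq_one.1 (hp_le z) with hpz | hpz <;>
          rw [hpz] <;> omega
      refine Set.mem_iUnion.2 ⟨⟨p z * N + s z, hbound⟩, hz, s z, le_refl _, ?_, rfl⟩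
      have := hm z hz; omega
  · -- cardinality
    intro z hz
    have hNcard : Nat.card {i : Fin (2*N) // z ∈ Z i}
        = (Finset.univ.filter (fun i : Fin (2*N) => z ∈ Z i)).card := by
      rw [Nat.card_eq_fintype_card, Fintype.card_subtype]
    rw [hNcard]
    have hIco : (Finset.Ico (s z) (s z + m z)).card = m z := by
      rw [Nat.card_Ico]; omega
    refine Eq.trans ?_ hIco
    refine Finset.card_bij' (fun i _ => (i:ℕ) - p z * N)
      (fun t ht => ⟨p z * N + t, ?_⟩) ?_ ?_ ?_ ?_
    · -- bound for reverse map
      have htN : t < N := by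
        have h1 := Finset.mem_Ico.1 ht
        have := hsm z hz
        omega
      rcases Nat.le_one_iff_eq_zero_or_eq_one.1 (hp_le z) with hpz | hpz <;>
        rw [hpz] <;> omega
    · -- forward maps into Ico
      intro i hi
      obtain ⟨-, t, hta, htb, he⟩ := (Finset.mem_filter.1 hi).2
      show ((i:ℕ) - p z * N) ∈ Finset.Ico (s z) (s z + m z)
      rw [he, Nat.add_sub_cancel_left]
      exact Finset.mem_Ico.2 ⟨hta, htb⟩
    · -- reverse maps into filter
      intro t ht
      rw [Finset.mem_filter]
      refine ⟨Finset.mem_univ _, hz, t, ?_, ?_, ?_⟩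
      · exact (Finset.mem_Ico.1 ht).1
      · exact (Finset.mem_Ico.1 ht).2
      · have htN : t < N := by
          have h1 := Finset.mem_Ico.1 ht
          have := hsm z hz
          omega
        rfl
    · -- left inverse
      intro i hi
      obtain ⟨-, t, hta, htb, he⟩ := (Finset.mem_filter.1 hi).2
      apply Fin.ext
      show p z * N + ((i:ℕ) - p z * N) = (i:ℕ)
      rw [he, Nat.add_sub_cancel_left]
    · -- right inverse
      intro t ht
      show (p z * N + t) - p z * N = t
      rw [Nat.add_sub_cancel_left]


/-- **Proposition 5.3, Levin's theorem.** The zeros of a sine-type function,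
counted with multiplicity, form a finite union of sets each having a uniform gap: if `f` is
entire, not identically zero, of exponential type, its zeros lie in a horizontal strip, and
`|f|` is bounded above and below away from zero on some horizontal line `Im z = ŵ`, then
there are finitely many sets `Z₁,…,Z_k ⊆ ℂ`, each with a uniform gap, whose union is the
zero set of `f`, such that each zero `z` belongs to exactly `ord_z(f)` of the sets. -/
theorem sine_type_zeros_finite_union_uniform_gap
    (f : ℂ → ℂ) (hf : Differentiable ℂ f) (hf0 : ∃ z, f z ≠ 0)
    (C₀ T : ℝ) (hC₀ : 0 ≤ C₀) (hT : 0 ≤ T)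
    (hgrowth : ∀ z : ℂ, ‖f z‖ ≤ C₀ * Real.exp (T * ‖z‖))
    (h : ℝ) (hh : 0 ≤ h)
    (hstrip : ∀ z : ℂ, f z = 0 → |z.im| ≤ h)
    (w₀ c C : ℝ) (hc : 0 < c) (hcC : c ≤ C)
    (hline : ∀ r : ℝ, c ≤ ‖f (r + w₀ * Complex.I)‖ ∧
      ‖f (r + w₀ * Complex.I)‖ ≤ C) :
    ∃ (k : ℕ) (Z : Fin k → Set ℂ),
      (∀ i, ∃ ε > 0, ∀ z ∈ Z i, ∀ w ∈ Z i, z ≠ w → ε ≤ ‖z - w‖) ∧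
      (⋃ i, Z i) = {z : ℂ | f z = 0} ∧
      ∀ z : ℂ, f z = 0 → ∃ n : ℕ,
        Nat.card {i : Fin k // z ∈ Z i} = n ∧
        ∃ g : ℂ → ℂ, AnalyticAt ℂ g z ∧ g z ≠ 0 ∧
          ∀ᶠ w in nhds z, f w = (w - z) ^ n * g w := by
  classical
  have hA : ∀ z : ℂ, AnalyticAt ℂ f z := fun z => hf.analyticAt z
  have hord_ne_top : ∀ z : ℂ, analyticOrderAt f z ≠ ⊤ := by
    intro z htop
    rw [analyticOrderAt_eq_top] at htop
    obtain ⟨z₀, hz₀⟩ := hf0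
    have hAON : AnalyticOnNhd ℂ f Set.univ := fun w _ => hA w
    exact hz₀ (hAON.eqOn_zero_of_preconnected_of_eventuallyEq_zero isPreconnected_univ
      (Set.mem_univ z) htop (Set.mem_univ z₀))
  set m : ℂ → ℕ := fun z => (analyticOrderAt f z).toNat with hm_def
  have hord : ∀ z : ℂ, analyticOrderAt f z = (m z : ℕ∞) := fun z =>
    (ENat.coe_toNat (hord_ne_top z)).symm
  have hlocal : ∀ z : ℂ, ∃ g, AnalyticAt ℂ g z ∧ g z ≠ 0 ∧
      ∀ᶠ w in nhds z, f w = (w - z) ^ m z * g w := by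
    intro z
    obtain ⟨g, hg1, hg2, hg3⟩ := (hA z).analyticOrderAt_eq_natCast.1 (hord z)
    exact ⟨g, hg1, hg2, hg3.mono (fun w hw => by rw [hw, smul_eq_mul])⟩
  set S : Set ℂ := {z | f z = 0} with hS_def
  have hm_pos : ∀ z ∈ S, 1 ≤ m z := by
    intro z hz
    by_contra hlt
    have hmz : m z = 0 := by omega
    obtain ⟨g, hg1, hg2, hg3⟩ := hlocal z
    have hself := hg3.self_of_nhds
    rw [hmz, pow_zero, one_mul] at hself
    exact hg2 (by rw [← hself]; exact hz)
  set R : ℝ := 1 + h + |w₀| with hR_def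
  have hR1 : 1 ≤ R := by
    have := abs_nonneg w₀; rw [hR_def]; linarith
  obtain ⟨B, hB0, hB⟩ := my_strip_bound f hf C₀ T hC₀ hT hgrowth w₀ C
    (le_trans hc.le hcC) (fun r => (hline r).2) (3*R) (by linarith)
  set N : ℕ := ⌈B / c⌉₊ with hN_def
  have hfin : ∀ jj : ℤ, ∃ Fj : Finset ℂ,
      (∀ z : ℂ, z ∈ Fj ↔ z ∈ S ∧ z.re ∈ Set.Ico (jj:ℝ) ((jj:ℝ)+1)) ∧
      ∑ z ∈ Fj, m z ≤ N := by
    intro jj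
    set c₀ : ℂ := ((jj:ℝ):ℂ) + (w₀:ℂ) * Complex.I with hc₀_def
    have hc₀re : c₀.re = (jj:ℝ) := by simp [hc₀_def]
    have hc₀im : c₀.im = w₀ := by simp [hc₀_def]
    have hsubK : {z : ℂ | z ∈ S ∧ z.re ∈ Set.Ico (jj:ℝ) ((jj:ℝ)+1)}
        ⊆ S ∩ Metric.closedBall c₀ R := by
      rintro z ⟨hzS, hz1, hz2⟩
      refine ⟨hzS, ?_⟩
      rw [Metric.mem_closedBall, Complex.dist_eq]
      have him : |z.im| ≤ h := hstrip z hzS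
      calc ‖z - c₀‖ ≤ |(z - c₀).re| + |(z - c₀).im| :=
            Complex.norm_le_abs_re_add_abs_im _
        _ ≤ 1 + (h + |w₀|) := by
            rw [Complex.sub_re, Complex.sub_im, hc₀re, hc₀im]
            have h1 : |z.re - (jj:ℝ)| ≤ 1 := by
              rw [abs_le]; constructor <;> linarith
            have h2 : |z.im - w₀| ≤ |z.im| + |w₀| := abs_sub _ _
            have h3 := abs_le.1 him
            have h4 : |z.im - w₀| ≤ h + |w₀| := by
              rw [abs_le] at h2 ⊢
              constructor <;> [linarith [neg_abs_le z.im, h2.1]; linarith [le_abs_self z.im, h2.2]]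
            linarith
        _ = R := by rw [hR_def]; ring
    have hfinK := my_zeros_finite f hf hf0 (Metric.closedBall c₀ R)
      (isCompact_closedBall _ _)
    have hfin' : {z : ℂ | z ∈ S ∧ z.re ∈ Set.Ico (jj:ℝ) ((jj:ℝ)+1)}.Finite := by
      refine Set.Finite.subset hfinK ?_
      intro z hz
      exact ⟨(hsubK hz).1, (hsubK hz).2⟩
    refine ⟨hfin'.toFinset, fun z => by
      rw [Set.Finite.mem_toFinset]; exact Iff.rfl, ?_⟩
    have hfc₀ : c ≤ ‖f c₀‖ := (hline (jj:ℝ)).1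
    have hBball : ∀ w ∈ Metric.closedBall c₀ (3*R), ‖f w‖ ≤ B := by
      intro w hw
      refine hB w ?_
      rw [Metric.mem_closedBall, Complex.dist_eq] at hw
      have := Complex.abs_im_le_norm (w - c₀)
      rw [Complex.sub_im, hc₀im] at this
      linarith
    have hFsub : ∀ z ∈ hfin'.toFinset, z ∈ Metric.closedBall c₀ R := by
      intro z hz
      rw [Set.Finite.mem_toFinset] at hz
      exact (hsubK hz).2
    have key := my_count_bound f hf c₀ R B c hR1 hc hfc₀ hBball hfin'.toFinset hFsub m
      (fun z _ => hlocal z)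
    set n := ∑ z ∈ hfin'.toFinset, m z with hn_def
    have h2n : (2:ℝ) ^ n ≤ B / c := by
      rw [le_div_iff₀ hc]
      calc (2:ℝ) ^ n * c = c * 2 ^ n := by ring
        _ ≤ B := key
    have hn2 : (n:ℝ) ≤ (2:ℝ) ^ n := by
      have := Nat.lt_two_pow_self (n := n)
      have : (n:ℝ) < ((2^n : ℕ) : ℝ) := by exact_mod_cast this
      push_cast at this
      linarith
    have : (n:ℝ) ≤ ((N:ℕ):ℝ) := le_trans (le_trans hn2 h2n) (Nat.le_ceil _)
    exact_mod_cast this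
  obtain ⟨Z, hgap, hunion, hcard⟩ := my_combinatorial S m N hm_pos hfin
  refine ⟨2*N, Z, fun i => ⟨1, one_pos, hgap i⟩, hunion, ?_⟩
  intro z hz
  exact ⟨m z, hcard z hz, hlocal z⟩
end
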